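/- arXiv:2107.02465 — 4 statements merged into one kernel-verified Lean document; each statement's English description precedes it below -/
import Mathlib

section
/- Let 𝒫 be a nonempty set of Borel probability measures on ℝ^ℕ with sublinear expectation Ê[ξ] := sup_{P∈𝒫} E_P[ξ], and let (X_i) be the coordinate random variables, assumed independent and identically distributed under Ê, with μ̄ := sup_{P∈𝒫} E_P[X_1], μ̲ := inf_{P∈𝒫} E_P[X_1], and Ê[|X_1|²] < ∞. Then sup over all 1-Lipschitz functions φ : ℝ → ℝ of |Ê[φ(S_n/n)] − max_{r∈[μ̲,μ̄]} φ(r)| is at most σ̄(X_1)/√n, where σ̄²(X_1) := inf_{μ∈[μ̲,μ̄]} Ê[|X_1 − μ|²] is the upper variance. -/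
open MeasureTheory

/-- Sublinear expectation associated with a set of probability measures on the
sequence space `ℕ → ℝ`: `Ê[ξ] = sup_{P ∈ Pset} E_P[ξ]`. -/
noncomputable def SE (Pset : Set (Measure (ℕ → ℝ))) (ξ : (ℕ → ℝ) → ℝ) : ℝ :=
  ⨆ P : Pset, ∫ ω, ξ ω ∂(P : Measure (ℕ → ℝ))

/-- Bounded Lipschitz real-valued functions. -/
def BLip {E : Type*} [PseudoMetricSpace E] (φ : E → ℝ) : Prop :=
  (∃ K : NNReal, LipschitzWith K φ) ∧ ∃ M : ℝ, ∀ x, |φ x| ≤ M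

/-- The coordinate sequence is independent under the sublinear expectation `SE Pset`. -/
def IndepCoords (Pset : Set (Measure (ℕ → ℝ))) : Prop :=
  ∀ n : ℕ, 1 ≤ n → ∀ φ : (Fin (n + 1) → ℝ) → ℝ, BLip φ →
    SE Pset (fun ω => φ (fun i => ω (i : ℕ))) =
      SE Pset (fun ω => SE Pset (fun ω' =>
        φ (Fin.snoc (fun i : Fin n => ω (i : ℕ)) (ω' n))))

/-- The coordinate sequence is identically distributed under `SE Pset`. -/
def IdentDistCoords (Pset : Set (Measure (ℕ → ℝ))) : Prop :=
  ∀ i : ℕ, ∀ ψ : ℝ → ℝ, BLip ψ →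
    SE Pset (fun ω => ψ (ω i)) = SE Pset (fun ω => ψ (ω 0))

namespace PengLLN
open Set Filter

set_option maxHeartbeats 1600000

/-! ### Basic facts about SE -/

lemma SE_le {Pset : Set (Measure (ℕ → ℝ))} (hne : Pset.Nonempty)
    {f : (ℕ → ℝ) → ℝ} {c : ℝ}
    (h : ∀ P ∈ Pset, ∫ ω, f ω ∂P ≤ c) : SE Pset f ≤ c := by
  haveI := hne.to_subtype
  exact ciSup_le fun P => h P P.2

lemma bddAbove_SE {Pset : Set (Measure (ℕ → ℝ))} {f : (ℕ → ℝ) → ℝ} {c : ℝ}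
    (h : ∀ P ∈ Pset, ∫ ω, f ω ∂P ≤ c) :
    BddAbove (Set.range fun P : Pset => ∫ ω, f ω ∂(P : Measure (ℕ → ℝ))) := by
  refine ⟨c, ?_⟩; rintro y ⟨P, rfl⟩; exact h P P.2

lemma le_SE {Pset : Set (Measure (ℕ → ℝ))} {f : (ℕ → ℝ) → ℝ} {c : ℝ}
    {P : Measure (ℕ → ℝ)} (hP : P ∈ Pset)
    (h : ∀ Q ∈ Pset, ∫ ω, f ω ∂Q ≤ c) : ∫ ω, f ω ∂P ≤ SE Pset f :=
  le_ciSup (bddAbove_SE h) (⟨P, hP⟩ : Pset)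

/-! ### distance to an interval -/

noncomputable def dI (a b x : ℝ) : ℝ := max (a - x) (max (x - b) 0)

lemma dI_nonneg {a b x : ℝ} : 0 ≤ dI a b x :=
  le_max_of_le_right (le_max_right _ _)

lemma dI_le_abs {a b x p : ℝ} (hp : p ∈ Set.Icc a b) : dI a b x ≤ |x - p| := by
  rcases hp with ⟨h1, h2⟩
  refine max_le ?_ (max_le ?_ (abs_nonneg _))
  · have : a - x ≤ p - x := by linarith
    exact this.trans (by rw [abs_sub_comm]; exact le_abs_self _)
  · have : x - b ≤ x - p := by linarith
    exact this.trans (le_abs_self _)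

lemma dI_eq_zero {a b x : ℝ} (h : x ∈ Set.Icc a b) : dI a b x = 0 := by
  rcases h with ⟨h1, h2⟩
  unfold dI
  rw [max_eq_right (by linarith : x - b ≤ (0:ℝ)),
    max_eq_right (by linarith : a - x ≤ (0:ℝ))]

lemma dI_zero_zero {x : ℝ} : dI 0 0 x = |x| := by
  unfold dI
  simp only [zero_sub, sub_zero]
  rcases le_total x 0 with h | h
  · rw [abs_of_nonpos h, max_eq_right h, max_eq_left (by linarith : -x ≥ (0:ℝ)).le]
  · rw [abs_of_nonneg h, max_eq_left h, max_eq_right (by linarith : -x ≤ x)]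

noncomputable def clampR (a b x : ℝ) : ℝ := max a (min b x)

lemma clampR_mem {a b x : ℝ} (hab : a ≤ b) : clampR a b x ∈ Set.Icc a b := by
  constructor
  · exact le_max_left _ _
  · exact max_le hab (min_le_left _ _)

lemma abs_sub_clampR {a b x : ℝ} (hab : a ≤ b) : |x - clampR a b x| = dI a b x := by
  unfold clampR dI
  rcases le_total x a with h | h
  · have hmin : min b x = x := min_eq_right (h.trans hab)
    rw [hmin, max_eq_left h, abs_of_nonpos (by linarith : x - a ≤ 0),
      max_eq_right (by linarith : x - b ≤ (0:ℝ)),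
      max_eq_left (by linarith : (0:ℝ) ≤ a - x)]
    ring
  · rcases le_total x b with h' | h'
    · have hmin : min b x = x := min_eq_right h'
      rw [hmin, max_eq_right h, sub_self, abs_zero,
        max_eq_right (by linarith : x - b ≤ (0:ℝ)),
        max_eq_right (by linarith : a - x ≤ (0:ℝ))]
    · have hmin : min b x = b := min_eq_left h'
      rw [hmin, max_eq_right hab, abs_of_nonneg (by linarith : 0 ≤ x - b),
        max_eq_left (by linarith : (0:ℝ) ≤ x - b),
        max_eq_right (by linarith : a - x ≤ x - b)]


/-! ### Integral helpers -/

lemma integrable_of_bounded {P : Measure (ℕ → ℝ)} [IsProbabilityMeasure P]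
    {f : (ℕ → ℝ) → ℝ} (hf : AEStronglyMeasurable f P) {C : ℝ}
    (h : ∀ ω, |f ω| ≤ C) : Integrable f P :=
  (integrable_const C).mono' hf (ae_of_all _ (by simpa [Real.norm_eq_abs] using h))

lemma integrable_coord0 {P : Measure (ℕ → ℝ)} [IsProbabilityMeasure P]
    (h2 : Integrable (fun ω => (ω 0) ^ 2) P) : Integrable (fun ω => ω 0) P := by
  refine Integrable.mono' (h2.add (integrable_const 1))
    (measurable_pi_apply 0).aestronglyMeasurable (ae_of_all _ fun ω => ?_)
  simp only [Pi.add_apply]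
  rw [Real.norm_eq_abs]
  nlinarith [sq_nonneg (|ω 0| - 1), sq_abs (ω 0), abs_nonneg (ω 0)]

lemma integrable_sq_shift {P : Measure (ℕ → ℝ)} [IsProbabilityMeasure P]
    (h2 : Integrable (fun ω => (ω 0) ^ 2) P) (c m : ℝ) :
    Integrable (fun ω => (c + (ω 0 - m)) ^ 2) P := by
  have h1 := integrable_coord0 h2
  have : (fun ω : ℕ → ℝ => (c + (ω 0 - m)) ^ 2)
      = fun ω => (ω 0) ^ 2 + ((2 * (c - m)) * (ω 0) + (c - m) ^ 2) := by
    funext ω; ring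
  rw [this]
  exact h2.add ((h1.const_mul _).add (integrable_const _))

lemma integral_sq_shift {P : Measure (ℕ → ℝ)} [IsProbabilityMeasure P]
    (h2 : Integrable (fun ω => (ω 0) ^ 2) P) (c : ℝ) :
    ∫ ω, (c + (ω 0 - ∫ ω', ω' 0 ∂P)) ^ 2 ∂P
      = c ^ 2 + ∫ ω, (ω 0 - ∫ ω', ω' 0 ∂P) ^ 2 ∂P := by
  have h1 := integrable_coord0 h2
  set m := ∫ ω', ω' 0 ∂P with hm
  have hsub : Integrable (fun ω => ω 0 - m) P := h1.sub (integrable_const m)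
  have hzero : ∫ ω, (ω 0 - m) ∂P = 0 := by
    rw [integral_sub h1 (integrable_const m), integral_const]
    simp [hm]
  have hq : Integrable (fun ω => (ω 0 - m) ^ 2) P := by
    simpa using integrable_sq_shift h2 0 m
  have expand : (fun ω : ℕ → ℝ => (c + (ω 0 - m)) ^ 2)
      = fun ω => ((ω 0 - m) ^ 2 + ((2 * c) * (ω 0 - m) + c ^ 2)) := by
    funext ω; ring
  have hlin : Integrable (fun ω : ℕ → ℝ => 2 * c * (ω 0 - m)) P := hsub.const_mul _
  have hsum : Integrable (fun ω : ℕ → ℝ => 2 * c * (ω 0 - m) + c ^ 2) P :=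
    hlin.add (integrable_const _)
  rw [expand, integral_add hq hsum, integral_add hlin (integrable_const _),
    MeasureTheory.integral_const_mul, hzero]
  simp
  ring

/-- variance decomposition: `E (X - μ)² = (m - μ)² + Var`. -/
lemma integral_sq_mu {P : Measure (ℕ → ℝ)} [IsProbabilityMeasure P]
    (h2 : Integrable (fun ω => (ω 0) ^ 2) P) (μ : ℝ) :
    ∫ ω, (ω 0 - μ) ^ 2 ∂P
      = ((∫ ω', ω' 0 ∂P) - μ) ^ 2 + ∫ ω, (ω 0 - ∫ ω', ω' 0 ∂P) ^ 2 ∂P := by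
  have := integral_sq_shift h2 ((∫ ω', ω' 0 ∂P) - μ)
  rw [← this]
  congr 1
  funext ω
  ring

/-- Jensen for the square root. -/
lemma integral_sqrt_le {P : Measure (ℕ → ℝ)} [IsProbabilityMeasure P]
    {g : (ℕ → ℝ) → ℝ} (hg : Integrable g P) (h0 : ∀ ω, 0 ≤ g ω) :
    ∫ ω, Real.sqrt (g ω) ∂P ≤ Real.sqrt (∫ ω, g ω ∂P) := by
  have hsint : Integrable (fun ω => Real.sqrt (g ω)) P := by
    refine Integrable.mono' (hg.add (integrable_const 1))
      (Real.continuous_sqrt.comp_aestronglyMeasurable hg.1) (ae_of_all _ fun ω => ?_)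
    simp only [Pi.add_apply]
    rw [Real.norm_eq_abs, abs_of_nonneg (Real.sqrt_nonneg _)]
    nlinarith [Real.sq_sqrt (h0 ω), Real.sqrt_nonneg (g ω), sq_nonneg (Real.sqrt (g ω) - 1)]
  have ha : 0 ≤ ∫ ω, g ω ∂P := integral_nonneg h0
  set a := ∫ ω, g ω ∂P with hadef
  have key : ∀ t : ℝ, 0 < t → ∫ ω, Real.sqrt (g ω) ∂P ≤ (a + t) / (2 * Real.sqrt t) := by
    intro t ht
    have hst : 0 < Real.sqrt t := Real.sqrt_pos.2 ht
    have hpt : ∀ ω, Real.sqrt (g ω) ≤ (g ω + t) / (2 * Real.sqrt t) := by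
      intro ω
      rw [le_div_iff₀ (by positivity)]
      nlinarith [sq_nonneg (Real.sqrt (g ω) - Real.sqrt t), Real.sq_sqrt (h0 ω),
        Real.sq_sqrt ht.le]
    calc ∫ ω, Real.sqrt (g ω) ∂P ≤ ∫ ω, (g ω + t) / (2 * Real.sqrt t) ∂P :=
          integral_mono hsint ((hg.add (integrable_const t)).div_const _) hpt
      _ = (a + t) / (2 * Real.sqrt t) := by
          rw [integral_div, integral_add hg (integrable_const t), integral_const]
          simp [hadef]
  rcases eq_or_lt_of_le ha with h | h
  · rw [← h, Real.sqrt_zero]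
    have : ∀ ε : ℝ, 0 < ε → ∫ ω, Real.sqrt (g ω) ∂P ≤ 0 + ε := by
      intro ε hε
      have := key (ε ^ 2) (by positivity)
      rw [← h] at this
      calc ∫ ω, Real.sqrt (g ω) ∂P ≤ (0 + ε ^ 2) / (2 * Real.sqrt (ε ^ 2)) := this
        _ ≤ 0 + ε := by
            rw [Real.sqrt_sq hε.le]
            rw [div_le_iff₀ (by positivity)]
            nlinarith
    exact le_of_forall_pos_le_add this
  · have := key a h
    calc ∫ ω, Real.sqrt (g ω) ∂P ≤ (a + a) / (2 * Real.sqrt a) := this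
      _ = a / Real.sqrt a := by ring_nf
      _ = Real.sqrt a := Real.div_sqrt



/-! ### The one-step operator -/

noncomputable def Tstep (Pset : Set (Measure (ℕ → ℝ))) (ψ : ℝ → ℝ) : ℝ → ℝ :=
  fun x => SE Pset (fun ω => ψ (x + ω 0))

lemma lip_abs {ψ : ℝ → ℝ} (hψ : LipschitzWith 1 ψ) (a b : ℝ) :
    |ψ a - ψ b| ≤ |a - b| := by
  have := hψ.dist_le_mul a b
  simpa [Real.dist_eq] using this

variable {Pset : Set (Measure (ℕ → ℝ))}

lemma integrable_bl {P : Measure (ℕ → ℝ)} [IsProbabilityMeasure P]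
    {ψ : ℝ → ℝ} (hc : Continuous ψ) {R : ℝ} (hb : ∀ x, |ψ x| ≤ R)
    {u : (ℕ → ℝ) → ℝ} (hu : Measurable u) :
    Integrable (fun ω => ψ (u ω)) P :=
  integrable_of_bounded ((hc.stronglyMeasurable.comp_measurable hu).aestronglyMeasurable)
    (fun ω => hb (u ω))

lemma integral_bl_le {P : Measure (ℕ → ℝ)} [IsProbabilityMeasure P]
    {ψ : ℝ → ℝ} {R : ℝ} (hb : ∀ x, |ψ x| ≤ R)
    {u : (ℕ → ℝ) → ℝ} :
    ∫ ω, ψ (u ω) ∂P ≤ R := by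
  have h : ∀ᵐ ω ∂P, ‖ψ (u ω)‖ ≤ R := ae_of_all _ fun ω => by
    rw [Real.norm_eq_abs]; exact hb _
  calc ∫ ω, ψ (u ω) ∂P ≤ |∫ ω, ψ (u ω) ∂P| := le_abs_self _
    _ ≤ R := by
        have := norm_integral_le_of_norm_le_const (C := R) h
        simpa [Real.norm_eq_abs] using this

lemma Tstep_bound (hne : Pset.Nonempty) (hprob : ∀ P ∈ Pset, IsProbabilityMeasure P)
    {ψ : ℝ → ℝ} (hc : Continuous ψ) {R : ℝ} (hb : ∀ x, |ψ x| ≤ R) (x : ℝ) :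
    |Tstep Pset ψ x| ≤ R := by
  have hub : ∀ Q ∈ Pset, ∫ ω, ψ (x + ω 0) ∂Q ≤ R := fun Q hQ => by
    haveI := hprob Q hQ
    exact integral_bl_le hb
  rw [abs_le]
  constructor
  · obtain ⟨P0, hP0⟩ := hne
    haveI := hprob P0 hP0
    refine le_trans ?_ (le_SE hP0 hub)
    have hint : Integrable (fun ω => ψ (x + ω 0)) P0 :=
      integrable_bl hc hb ((measurable_const.add (measurable_pi_apply 0)))
    calc (-R : ℝ) = ∫ _ω, (-R : ℝ) ∂P0 := by simp
      _ ≤ ∫ ω, ψ (x + ω 0) ∂P0 :=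
          integral_mono (integrable_const _) hint fun ω => (abs_le.1 (hb _)).1
  · exact SE_le hne hub

lemma Tstep_lip (hne : Pset.Nonempty) (hprob : ∀ P ∈ Pset, IsProbabilityMeasure P)
    {ψ : ℝ → ℝ} (hψ : LipschitzWith 1 ψ) {R : ℝ} (hb : ∀ x, |ψ x| ≤ R) :
    LipschitzWith 1 (Tstep Pset ψ) := by
  have key : ∀ x y : ℝ, Tstep Pset ψ x ≤ Tstep Pset ψ y + |x - y| := by
    intro x y
    refine SE_le hne fun P hP => ?_
    haveI := hprob P hP
    have hmx : Measurable fun ω : ℕ → ℝ => x + ω 0 :=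
      measurable_const.add (measurable_pi_apply 0)
    have hmy : Measurable fun ω : ℕ → ℝ => y + ω 0 :=
      measurable_const.add (measurable_pi_apply 0)
    have hintx : Integrable (fun ω => ψ (x + ω 0)) P :=
      integrable_bl hψ.continuous hb hmx
    have hinty : Integrable (fun ω => ψ (y + ω 0)) P :=
      integrable_bl hψ.continuous hb hmy
    calc ∫ ω, ψ (x + ω 0) ∂P ≤ ∫ ω, (ψ (y + ω 0) + |x - y|) ∂P := by
          refine integral_mono hintx (hinty.add (integrable_const _)) fun ω => ?_
          have h1 := lip_abs hψ (x + ω 0) (y + ω 0)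
          have h2 : |(x + ω 0) - (y + ω 0)| = |x - y| := by ring_nf
          rw [h2] at h1
          have := (abs_le.1 h1).1
          linarith [(abs_le.1 h1).2]
      _ = (∫ ω, ψ (y + ω 0) ∂P) + |x - y| := by
          rw [integral_add hinty (integrable_const _), integral_const]
          simp
      _ ≤ Tstep Pset ψ y + |x - y| := by
          have hub : ∀ Q ∈ Pset, ∫ ω, ψ (y + ω 0) ∂Q ≤ R := fun Q hQ => by
            haveI := hprob Q hQ
            exact integral_bl_le hb
          exact add_le_add_left (le_SE hP hub) _
  refine LipschitzWith.of_dist_le_mul fun x y => ?_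
  rw [Real.dist_eq, Real.dist_eq, NNReal.coe_one, one_mul]
  rw [abs_sub_le_iff]
  constructor
  · linarith [key x y, le_abs_self (x - y)]
  · have := key y x
    rw [abs_sub_comm] at this
    linarith [this]


/-! ### iteration via independence -/

lemma shift_lip {ψ : ℝ → ℝ} (hψ : LipschitzWith 1 ψ) (c : ℝ) :
    LipschitzWith 1 (fun t => ψ (c + t)) := by
  refine LipschitzWith.of_dist_le_mul fun a b => ?_
  rw [Real.dist_eq, Real.dist_eq, NNReal.coe_one, one_mul]
  have := lip_abs hψ (c + a) (c + b)
  have h2 : |(c + a) - (c + b)| = |a - b| := by ring_nf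
  rwa [h2] at this

lemma SE_step (hne : Pset.Nonempty) (hprob : ∀ P ∈ Pset, IsProbabilityMeasure P)
    (hindep : IndepCoords Pset) (hid : IdentDistCoords Pset) (k : ℕ) (hk : 1 ≤ k)
    {ψ : ℝ → ℝ} (hψ : LipschitzWith 1 ψ) {R : ℝ} (hb : ∀ x, |ψ x| ≤ R) :
    SE Pset (fun ω => ψ (∑ i ∈ Finset.range (k + 1), ω i))
      = SE Pset (fun ω => Tstep Pset ψ (∑ i ∈ Finset.range k, ω i)) := by
  set Φ : (Fin (k + 1) → ℝ) → ℝ := fun v => ψ (∑ i, v i) with hΦ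
  have hΦlip : LipschitzWith ((k : NNReal) + 1) Φ := by
    refine LipschitzWith.of_dist_le_mul fun v w => ?_
    rw [Real.dist_eq]
    calc |ψ (∑ i, v i) - ψ (∑ i, w i)| ≤ |∑ i, v i - ∑ i, w i| := lip_abs hψ _ _
      _ = |∑ i : Fin (k+1), (v i - w i)| := by rw [Finset.sum_sub_distrib]
      _ ≤ ∑ i : Fin (k+1), |v i - w i| := Finset.abs_sum_le_sum_abs _ _
      _ ≤ ∑ _i : Fin (k+1), dist v w := Finset.sum_le_sum fun i _ => by
            rw [← Real.dist_eq]; exact dist_le_pi_dist v w i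
      _ = ((k : NNReal) + 1 : NNReal) * dist v w := by
            rw [Finset.sum_const, Finset.card_univ]
            simp [nsmul_eq_mul]
  have hbl : BLip Φ := ⟨⟨_, hΦlip⟩, R, fun v => hb _⟩
  have h1 := hindep k hk Φ hbl
  have hL : (fun ω : ℕ → ℝ => Φ (fun i => ω (i : ℕ)))
      = fun ω => ψ (∑ i ∈ Finset.range (k+1), ω i) := by
    funext ω
    simp only [hΦ]
    rw [Fin.sum_univ_eq_sum_range (fun j => ω j) (k+1)]
  have hR : (fun ω : ℕ → ℝ =>
        SE Pset (fun ω' => Φ (Fin.snoc (fun i : Fin k => ω (i : ℕ)) (ω' k))))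
      = fun ω => Tstep Pset ψ (∑ i ∈ Finset.range k, ω i) := by
    funext ω
    have inner_eq : (fun ω' : ℕ → ℝ => Φ (Fin.snoc (fun i : Fin k => ω (i : ℕ)) (ω' k)))
        = fun ω' => (fun t => ψ ((∑ i ∈ Finset.range k, ω i) + t)) (ω' k) := by
      funext ω'
      simp only [hΦ]
      congr 1
      rw [Fin.sum_univ_castSucc]
      simp only [Fin.snoc_castSucc, Fin.snoc_last]
      rw [Fin.sum_univ_eq_sum_range (fun j => ω j) k]
    rw [inner_eq]
    exact hid k (fun t => ψ ((∑ i ∈ Finset.range k, ω i) + t))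
      ⟨⟨1, shift_lip hψ _⟩, R, fun t => hb _⟩
  rw [hL, hR] at h1
  exact h1

lemma SE_iterate (hne : Pset.Nonempty) (hprob : ∀ P ∈ Pset, IsProbabilityMeasure P)
    (hindep : IndepCoords Pset) (hid : IdentDistCoords Pset) :
    ∀ k : ℕ, 1 ≤ k → ∀ ψ : ℝ → ℝ, LipschitzWith 1 ψ → ∀ R : ℝ, (∀ x, |ψ x| ≤ R) →
      SE Pset (fun ω => ψ (∑ i ∈ Finset.range k, ω i)) = (Tstep Pset)^[k] ψ 0 := by
  intro k
  induction k with
  | zero => omega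
  | succ k ih =>
    intro _ ψ hψ R hb
    by_cases hk : k = 0
    · subst hk
      have h0 : (fun ω : ℕ → ℝ => ψ (∑ i ∈ Finset.range 1, ω i))
          = fun ω => ψ (0 + ω 0) := by
        funext ω
        rw [Finset.sum_range_one, zero_add]
      rw [h0, Function.iterate_one]
      rfl
    · have hk1 : 1 ≤ k := Nat.one_le_iff_ne_zero.2 hk
      rw [SE_step hne hprob hindep hid k hk1 hψ hb]
      rw [ih hk1 (Tstep Pset ψ) (Tstep_lip hne hprob hψ hb) R
        (Tstep_bound hne hprob hψ.continuous hb)]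
      rw [← Function.iterate_succ_apply]


/-! ### more integrability helpers -/

lemma integrable_sq_lin {P : Measure (ℕ → ℝ)} [IsProbabilityMeasure P]
    (h2 : Integrable (fun ω => (ω 0) ^ 2) P) (c d : ℝ) :
    Integrable (fun ω => (c + d * ω 0) ^ 2) P := by
  have h1 := integrable_coord0 h2
  have : (fun ω : ℕ → ℝ => (c + d * ω 0) ^ 2)
      = fun ω => (d ^ 2) * (ω 0) ^ 2 + ((2 * c * d) * (ω 0) + c ^ 2) := by
    funext ω; ring
  rw [this]
  exact (h2.const_mul _).add ((h1.const_mul _).add (integrable_const _))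

lemma measurable_dI {a b : ℝ} {g : (ℕ → ℝ) → ℝ} (hg : Measurable g) :
    Measurable (fun ω => dI a b (g ω)) :=
  (measurable_const.sub hg).max ((hg.sub measurable_const).max measurable_const)

lemma integrable_dI_sq {P : Measure (ℕ → ℝ)} [IsProbabilityMeasure P]
    {a b : ℝ} (hab : a ≤ b) {g : (ℕ → ℝ) → ℝ} (hg : Measurable g)
    (hgi : Integrable (fun ω => (g ω - a) ^ 2) P) :
    Integrable (fun ω => (dI a b (g ω)) ^ 2) P := by
  refine Integrable.mono' hgi ((measurable_dI hg).pow_const 2).aestronglyMeasurable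
    (ae_of_all _ fun ω => ?_)
  rw [Real.norm_eq_abs, abs_of_nonneg (sq_nonneg _)]
  have h1 : dI a b (g ω) ≤ |g ω - a| := dI_le_abs ⟨le_refl a, hab⟩
  calc (dI a b (g ω)) ^ 2 ≤ |g ω - a| ^ 2 := by
        have := dI_nonneg (a := a) (b := b) (x := g ω)
        nlinarith
    _ = (g ω - a) ^ 2 := sq_abs _

/-! ### 1-Lipschitz clamping -/

lemma abs_min_sub_min (c s t : ℝ) : |min c s - min c t| ≤ |s - t| := by
  rcases le_total s t with h | h
  · rcases min_cases c s with ⟨h1, h2⟩ | ⟨h1, h2⟩ <;>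
      rcases min_cases c t with ⟨h3, h4⟩ | ⟨h3, h4⟩ <;>
      rw [h1, h3] <;> rw [abs_of_nonpos (by linarith), abs_of_nonpos (by linarith)] <;>
      linarith
  · rcases min_cases c s with ⟨h1, h2⟩ | ⟨h1, h2⟩ <;>
      rcases min_cases c t with ⟨h3, h4⟩ | ⟨h3, h4⟩ <;>
      rw [h1, h3] <;> rw [abs_of_nonneg (by linarith), abs_of_nonneg (by linarith)] <;>
      linarith

lemma abs_max_sub_max (c s t : ℝ) : |max c s - max c t| ≤ |s - t| := by
  rcases le_total s t with h | h
  · rcases max_cases c s with ⟨h1, h2⟩ | ⟨h1, h2⟩ <;>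
      rcases max_cases c t with ⟨h3, h4⟩ | ⟨h3, h4⟩ <;>
      rw [h1, h3] <;> rw [abs_of_nonpos (by linarith), abs_of_nonpos (by linarith)] <;>
      linarith
  · rcases max_cases c s with ⟨h1, h2⟩ | ⟨h1, h2⟩ <;>
      rcases max_cases c t with ⟨h3, h4⟩ | ⟨h3, h4⟩ <;>
      rw [h1, h3] <;> rw [abs_of_nonneg (by linarith), abs_of_nonneg (by linarith)] <;>
      linarith

lemma clampR_lip (a b s t : ℝ) : |clampR a b s - clampR a b t| ≤ |s - t| :=
  (abs_max_sub_max a (min b s) (min b t)).trans (abs_min_sub_min b s t)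

lemma clampR_eq_self {a b x : ℝ} (h : x ∈ Set.Icc a b) : clampR a b x = x := by
  rcases h with ⟨h1, h2⟩
  unfold clampR
  rw [min_eq_right h2, max_eq_right h1]


/-! ### second moments of all coordinates -/

lemma coord_sq_bound (hne : Pset.Nonempty) (hprob : ∀ P ∈ Pset, IsProbabilityMeasure P)
    (hid : IdentDistCoords Pset) {C : ℝ} (hC0 : 0 ≤ C)
    (hC : ∀ P ∈ Pset, ∫ ω, (ω 0) ^ 2 ∂P ≤ C)
    (hint : ∀ P ∈ Pset, Integrable (fun ω => (ω 0) ^ 2) P)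
    {P : Measure (ℕ → ℝ)} (hP : P ∈ Pset) (i : ℕ) :
    Integrable (fun ω => (ω i) ^ 2) P ∧ ∫ ω, (ω i) ^ 2 ∂P ≤ C := by
  haveI := hprob P hP
  set ψ : ℕ → ℝ → ℝ := fun k t => (min |t| (Real.sqrt k)) ^ 2 with hψ
  have hψ_nonneg : ∀ (k : ℕ) (t : ℝ), 0 ≤ ψ k t := fun k t => sq_nonneg _
  have hmin0 : ∀ (k : ℕ) (t : ℝ), 0 ≤ min |t| (Real.sqrt k) :=
    fun k t => le_min (abs_nonneg t) (Real.sqrt_nonneg _)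
  have hψ_le_sq : ∀ (k : ℕ) (t : ℝ), ψ k t ≤ t ^ 2 := by
    intro k t
    have h1 : min |t| (Real.sqrt k) ≤ |t| := min_le_left _ _
    have h0 := hmin0 k t
    calc ψ k t ≤ |t| ^ 2 := by simp only [hψ]; nlinarith [abs_nonneg t]
      _ = t ^ 2 := sq_abs t
  have hψ_bd : ∀ (k : ℕ) (t : ℝ), |ψ k t| ≤ (k : ℝ) := by
    intro k t
    rw [abs_of_nonneg (hψ_nonneg k t)]
    have h1 : min |t| (Real.sqrt k) ≤ Real.sqrt k := min_le_right _ _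
    have h0 := hmin0 k t
    calc ψ k t ≤ (Real.sqrt k) ^ 2 := by
          simp only [hψ]; nlinarith [Real.sqrt_nonneg (k : ℝ)]
      _ = (k : ℝ) := Real.sq_sqrt (Nat.cast_nonneg k)
  have hψ_lip : ∀ k : ℕ, LipschitzWith (Real.toNNReal (2 * Real.sqrt k)) (ψ k) := by
    intro k
    refine LipschitzWith.of_dist_le_mul fun s t => ?_
    rw [Real.dist_eq, Real.dist_eq, Real.coe_toNNReal _ (by positivity)]
    have hms0 := hmin0 k s
    have hmt0 := hmin0 k t
    have hmsk : min |s| (Real.sqrt k) ≤ Real.sqrt k := min_le_right _ _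
    have hmtk : min |t| (Real.sqrt k) ≤ Real.sqrt k := min_le_right _ _
    have hd : |min |s| (Real.sqrt k) - min |t| (Real.sqrt k)| ≤ |s - t| := by
      rw [min_comm |s| _, min_comm |t| _]
      exact (abs_min_sub_min _ _ _).trans (abs_abs_sub_abs_le_abs_sub s t)
    have heq : ψ k s - ψ k t
        = (min |s| (Real.sqrt k) + min |t| (Real.sqrt k))
          * (min |s| (Real.sqrt k) - min |t| (Real.sqrt k)) := by
      simp only [hψ]; ring
    calc |ψ k s - ψ k t|
        = |min |s| (Real.sqrt k) + min |t| (Real.sqrt k)|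
          * |min |s| (Real.sqrt k) - min |t| (Real.sqrt k)| := by rw [heq, abs_mul]
      _ ≤ (2 * Real.sqrt k) * |s - t| := by
          apply mul_le_mul _ hd (abs_nonneg _) (by positivity)
          rw [abs_of_nonneg (by linarith)]
          linarith
  have key : ∀ k : ℕ, ∫ ω, ψ k (ω i) ∂P ≤ C := by
    intro k
    have hbl : BLip (ψ k) := ⟨⟨_, hψ_lip k⟩, k, hψ_bd k⟩
    have h1 : ∫ ω, ψ k (ω i) ∂P ≤ SE Pset (fun ω => ψ k (ω i)) :=
      le_SE hP fun Q hQ => by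
        haveI := hprob Q hQ
        exact integral_bl_le (hψ_bd k)
    have h2 := hid i (ψ k) hbl
    have h3 : SE Pset (fun ω => ψ k (ω 0)) ≤ C := SE_le hne fun Q hQ => by
      haveI := hprob Q hQ
      calc ∫ ω, ψ k (ω 0) ∂Q ≤ ∫ ω, (ω 0) ^ 2 ∂Q :=
            integral_mono (integrable_bl (hψ_lip k).continuous (hψ_bd k)
              (measurable_pi_apply 0)) (hint Q hQ) (fun ω => hψ_le_sq k _)
        _ ≤ C := hC Q hQ
    rw [h2] at h1
    linarith
  have hmeas : ∀ k : ℕ, Measurable fun ω : ℕ → ℝ => ENNReal.ofReal (ψ k (ω i)) := by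
    intro k
    simp only [hψ]
    exact (((measurable_pi_apply i).abs.min measurable_const).pow_const 2).ennreal_ofReal
  have hmono : Monotone fun (k : ℕ) (ω : ℕ → ℝ) => ENNReal.ofReal (ψ k (ω i)) := by
    intro k l hkl
    intro ω
    apply ENNReal.ofReal_le_ofReal
    have h1 : min |ω i| (Real.sqrt k) ≤ min |ω i| (Real.sqrt l) :=
      min_le_min le_rfl (Real.sqrt_le_sqrt (Nat.cast_le.2 hkl))
    have h0 := hmin0 k (ω i)
    simp only [hψ]
    nlinarith
  have hsup : ∀ ω : ℕ → ℝ,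
      (⨆ k : ℕ, ENNReal.ofReal (ψ k (ω i))) = ENNReal.ofReal ((ω i) ^ 2) := by
    intro ω
    apply le_antisymm
    · exact iSup_le fun k => ENNReal.ofReal_le_ofReal (hψ_le_sq k _)
    · refine le_iSup_of_le (⌈(ω i) ^ 2⌉₊) (le_of_eq ?_)
      have h1 : |ω i| ≤ Real.sqrt (⌈(ω i) ^ 2⌉₊ : ℕ) := by
        rw [← Real.sqrt_sq_eq_abs]
        exact Real.sqrt_le_sqrt (Nat.le_ceil _)
      simp only [hψ]
      rw [min_eq_left h1, sq_abs]
  have hlin : ∫⁻ ω, ENNReal.ofReal ((ω i) ^ 2) ∂P ≤ ENNReal.ofReal C := by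
    have hls := lintegral_iSup (μ := P) hmeas hmono
    have heq : ∫⁻ ω, ENNReal.ofReal ((ω i) ^ 2) ∂P
        = ⨆ k, ∫⁻ ω, ENNReal.ofReal (ψ k (ω i)) ∂P := by
      rw [← hls]
      apply lintegral_congr
      intro ω
      rw [hsup ω]
    rw [heq]
    refine iSup_le fun k => ?_
    have hint_k : Integrable (fun ω => ψ k (ω i)) P :=
      integrable_bl (hψ_lip k).continuous (hψ_bd k) (measurable_pi_apply i)
    rw [← ofReal_integral_eq_lintegral_ofReal hint_k (ae_of_all _ fun ω => hψ_nonneg k _)]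
    exact ENNReal.ofReal_le_ofReal (key k)
  have hintg : Integrable (fun ω => (ω i) ^ 2) P := by
    constructor
    · exact ((measurable_pi_apply i).pow_const 2).aestronglyMeasurable
    · rw [hasFiniteIntegral_iff_ofReal (ae_of_all _ fun ω => sq_nonneg _)]
      exact lt_of_le_of_lt hlin ENNReal.ofReal_lt_top
  refine ⟨hintg, ?_⟩
  rw [integral_eq_lintegral_of_nonneg_ae (ae_of_all _ fun ω => sq_nonneg _) hintg.1]
  calc (∫⁻ ω, ENNReal.ofReal ((ω i) ^ 2) ∂P).toReal ≤ (ENNReal.ofReal C).toReal :=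
        ENNReal.toReal_mono ENNReal.ofReal_ne_top hlin
    _ = C := ENNReal.toReal_ofReal hC0


/-! ### the one-step estimate for the lower bound -/

lemma lower_step (hne : Pset.Nonempty) (hprob : ∀ P ∈ Pset, IsProbabilityMeasure P)
    (hint2 : ∀ P ∈ Pset, Integrable (fun ω => (ω 0) ^ 2) P)
    {μl μb s2 : ℝ}
    (hm : ∀ P ∈ Pset, (∫ ω, ω 0 ∂P) ∈ Set.Icc μl μb)
    (hmb : ∀ ε : ℝ, 0 < ε → ∃ P ∈ Pset, μb - ε < ∫ ω, ω 0 ∂P)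
    (hml : ∀ ε : ℝ, 0 < ε → ∃ P ∈ Pset, ∫ ω, ω 0 ∂P < μl + ε)
    (hvar : ∀ P ∈ Pset, ∫ ω, (ω 0 - ∫ ω', ω' 0 ∂P) ^ 2 ∂P ≤ s2)
    (hvmu : ∀ ε : ℝ, 0 < ε → ∃ μ ∈ Set.Icc μl μb,
      ∀ P ∈ Pset, ∫ ω, (ω 0 - μ) ^ 2 ∂P ≤ s2 + ε)
    {a b : ℝ} (hab : a ≤ b) (z δ : ℝ) (hδ : 0 < δ) (hδ1 : δ ≤ 1) :
    ∃ P ∈ Pset, ∫ ω, (dI a b (z - ω 0)) ^ 2 ∂P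
      ≤ (1 + δ) * (dI (a + μl) (b + μb) z) ^ 2 + s2 + δ := by
  obtain ⟨Pw, hPw⟩ := hne
  have hμμ : μl ≤ μb := by
    have := hm Pw hPw
    exact le_trans this.1 this.2
  have hAB : a + μl ≤ b + μb := by linarith
  -- the basic estimate for a fixed measure and fixed point p ∈ [a,b]
  have est : ∀ P ∈ Pset, ∀ p : ℝ, a ≤ p → p ≤ b →
      ∫ ω, (dI a b (z - ω 0)) ^ 2 ∂P
        ≤ ((∫ ω, ω 0 ∂P) + p - z) ^ 2 + ∫ ω, (ω 0 - ∫ ω', ω' 0 ∂P) ^ 2 ∂P := by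
    intro P hP p hpa hpb
    haveI := hprob P hP
    have h2 := hint2 P hP
    have hpoint : ∀ ω : ℕ → ℝ, (dI a b (z - ω 0)) ^ 2
        ≤ (((∫ ω', ω' 0 ∂P) + p - z) + (ω 0 - ∫ ω', ω' 0 ∂P)) ^ 2 := by
      intro ω
      have h1 : dI a b (z - ω 0) ≤ |z - ω 0 - p| := dI_le_abs ⟨hpa, hpb⟩
      have h2' : |z - ω 0 - p|
          = |(((∫ ω', ω' 0 ∂P) + p - z) + (ω 0 - ∫ ω', ω' 0 ∂P))| := by
        rw [← abs_neg]
        congr 1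
        ring
      have h3 : dI a b (z - ω 0)
          ≤ |(((∫ ω', ω' 0 ∂P) + p - z) + (ω 0 - ∫ ω', ω' 0 ∂P))| := h2' ▸ h1
      nlinarith [dI_nonneg (a := a) (b := b) (x := z - ω 0),
        abs_nonneg ((((∫ ω', ω' 0 ∂P) + p - z) + (ω 0 - ∫ ω', ω' 0 ∂P))),
        sq_abs ((((∫ ω', ω' 0 ∂P) + p - z) + (ω 0 - ∫ ω', ω' 0 ∂P)))]
    have hint_dI : Integrable (fun ω => (dI a b (z - ω 0)) ^ 2) P := by
      have hlin := integrable_sq_lin h2 (z - a) (-1)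
      have h4 : (fun ω : ℕ → ℝ => ((z - a) + (-1) * ω 0) ^ 2)
          = fun ω => (z - ω 0 - a) ^ 2 := by funext ω; ring
      rw [h4] at hlin
      exact integrable_dI_sq hab (measurable_const.sub (measurable_pi_apply 0)) hlin
    calc ∫ ω, (dI a b (z - ω 0)) ^ 2 ∂P
        ≤ ∫ ω, (((∫ ω', ω' 0 ∂P) + p - z) + (ω 0 - ∫ ω', ω' 0 ∂P)) ^ 2 ∂P :=
          integral_mono hint_dI (integrable_sq_shift h2 _ _) hpoint
      _ = ((∫ ω', ω' 0 ∂P) + p - z) ^ 2 + ∫ ω, (ω 0 - ∫ ω', ω' 0 ∂P) ^ 2 ∂P :=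
          integral_sq_shift h2 _
  rcases lt_or_ge z (a + μl) with hz | hz
  · -- z below the interval
    have hD : dI (a + μl) (b + μb) z = (a + μl) - z := by
      unfold dI
      rw [max_eq_right (by linarith : z - (b + μb) ≤ (0:ℝ)),
        max_eq_left (by linarith : (0:ℝ) ≤ a + μl - z)]
    obtain ⟨P, hP, hPm⟩ := hml (δ/2) (by linarith)
    have hmP := hm P hP
    refine ⟨P, hP, ?_⟩
    have h1 := est P hP a le_rfl hab
    have h2 := hvar P hP
    rw [hD]
    set e : ℝ := (a + μl) - z with he
    have hepos : 0 < e := by simp only [he]; linarith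
    set γ : ℝ := (∫ ω, ω 0 ∂P) - μl with hγ
    have hγ0 : 0 ≤ γ := by simp only [hγ]; linarith [hmP.1]
    have hγδ : γ < δ/2 := by simp only [hγ]; linarith
    have hc : (∫ ω, ω 0 ∂P) + a - z = e + γ := by simp only [he, hγ]; ring
    rw [hc] at h1
    have harith : (e + γ) ^ 2 ≤ (1 + δ) * e ^ 2 + δ/2 := by
      have q1 : 2*e*γ ≤ 2*e*(δ/2) := mul_le_mul_of_nonneg_left hγδ.le (by linarith)
      have q2 : e ≤ e^2 + 1/4 := by nlinarith [sq_nonneg (e - 1/2)]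
      have q3 : δ*e ≤ δ*(e^2 + 1/4) := mul_le_mul_of_nonneg_left q2 hδ.le
      have q4 : δ*δ ≤ 1*δ := mul_le_mul_of_nonneg_right hδ1 hδ.le
      have k2 : γ*γ ≤ (δ/2)*(δ/2) := mul_self_le_mul_self hγ0 hγδ.le
      nlinarith [q1, q3, q4, k2]
    calc ∫ ω, (dI a b (z - ω 0)) ^ 2 ∂P
        ≤ (e + γ) ^ 2 + ∫ ω, (ω 0 - ∫ ω', ω' 0 ∂P) ^ 2 ∂P := h1
      _ ≤ (1 + δ) * e ^ 2 + δ/2 + s2 := by linarith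
      _ ≤ (1 + δ) * e ^ 2 + s2 + δ := by linarith
  · rcases le_or_gt z (b + μb) with hz2 | hz2
    · -- z inside the interval
      have hD0 : dI (a + μl) (b + μb) z = 0 := dI_eq_zero ⟨hz, hz2⟩
      rw [hD0]
      obtain ⟨μm, hμmI, hμmP⟩ := hvmu (δ/2) (by linarith)
      have hintsq : ∀ P ∈ Pset, Integrable (fun ω => (ω 0 - μm) ^ 2) P := by
        intro P hP
        haveI := hprob P hP
        have hlin := integrable_sq_lin (hint2 P hP) (-μm) 1
        have h4 : (fun ω : ℕ → ℝ => ((-μm) + 1 * ω 0) ^ 2)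
            = fun ω => (ω 0 - μm) ^ 2 := by funext ω; ring
        rwa [h4] at hlin
      rcases le_or_gt (z - μm) b with hb' | hb'
      · rcases le_or_gt a (z - μm) with ha' | ha'
        · -- the projection point z - μm lies in [a,b]
          refine ⟨Pw, hPw, ?_⟩
          haveI := hprob Pw hPw
          have hpoint : ∀ ω : ℕ → ℝ, (dI a b (z - ω 0)) ^ 2 ≤ (ω 0 - μm) ^ 2 := by
            intro ω
            have h1 : dI a b (z - ω 0) ≤ |z - ω 0 - (z - μm)| := dI_le_abs ⟨ha', hb'⟩
            have h2' : |z - ω 0 - (z - μm)| = |ω 0 - μm| := by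
              rw [← abs_neg]; congr 1; ring
            rw [h2'] at h1
            nlinarith [dI_nonneg (a := a) (b := b) (x := z - ω 0),
              abs_nonneg (ω 0 - μm), sq_abs (ω 0 - μm)]
          have hint_dI : Integrable (fun ω => (dI a b (z - ω 0)) ^ 2) Pw := by
            have hlin := integrable_sq_lin (hint2 Pw hPw) (z - a) (-1)
            have h4 : (fun ω : ℕ → ℝ => ((z - a) + (-1) * ω 0) ^ 2)
                = fun ω => (z - ω 0 - a) ^ 2 := by funext ω; ring
            rw [h4] at hlin
            exact integrable_dI_sq hab (measurable_const.sub (measurable_pi_apply 0)) hlin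
          calc ∫ ω, (dI a b (z - ω 0)) ^ 2 ∂Pw
              ≤ ∫ ω, (ω 0 - μm) ^ 2 ∂Pw :=
                integral_mono hint_dI (hintsq Pw hPw) hpoint
            _ ≤ s2 + δ/2 := hμmP Pw hPw
            _ ≤ (1 + δ) * 0 ^ 2 + s2 + δ := by nlinarith
        · -- z - μm < a
          obtain ⟨P, hP, hPm⟩ := hml (z - a - μl + δ/2) (by linarith)
          have hmP := hm P hP
          haveI := hprob P hP
          refine ⟨P, hP, ?_⟩
          have h1 := est P hP a le_rfl hab
          have h2 := hvar P hP
          have hvmu' := integral_sq_mu (hint2 P hP) (P := P) μm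
          rcases le_or_gt (∫ ω, ω 0 ∂P) (z - a) with hm' | hm'
          · have key : ((∫ ω, ω 0 ∂P) + a - z) ^ 2 ≤ ((∫ ω, ω 0 ∂P) - μm) ^ 2 := by
              nlinarith [hm', ha', hmP.1]
            have h3 := hμmP P hP
            rw [hvmu'] at h3
            calc ∫ ω, (dI a b (z - ω 0)) ^ 2 ∂P
                ≤ ((∫ ω, ω 0 ∂P) + a - z) ^ 2
                  + ∫ ω, (ω 0 - ∫ ω', ω' 0 ∂P) ^ 2 ∂P := h1
              _ ≤ ((∫ ω, ω 0 ∂P) - μm) ^ 2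
                  + ∫ ω, (ω 0 - ∫ ω', ω' 0 ∂P) ^ 2 ∂P := by linarith
              _ ≤ s2 + δ/2 := by linarith
              _ ≤ (1 + δ) * 0 ^ 2 + s2 + δ := by nlinarith
          · have key : ((∫ ω, ω 0 ∂P) + a - z) ^ 2 ≤ (δ/2) * (δ/2) := by
              nlinarith [hm', hPm]
            calc ∫ ω, (dI a b (z - ω 0)) ^ 2 ∂P
                ≤ ((∫ ω, ω 0 ∂P) + a - z) ^ 2
                  + ∫ ω, (ω 0 - ∫ ω', ω' 0 ∂P) ^ 2 ∂P := h1
              _ ≤ (δ/2) * (δ/2) + s2 := by linarith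
              _ ≤ (1 + δ) * 0 ^ 2 + s2 + δ := by nlinarith
      · -- z - μm > b
        obtain ⟨P, hP, hPm⟩ := hmb (μb - (z - b) + δ/2) (by linarith)
        have hmP := hm P hP
        haveI := hprob P hP
        refine ⟨P, hP, ?_⟩
        have h1 := est P hP b hab le_rfl
        have h2 := hvar P hP
        have hvmu' := integral_sq_mu (hint2 P hP) (P := P) μm
        rcases le_or_gt (z - b) (∫ ω, ω 0 ∂P) with hm' | hm'
        · have key : ((∫ ω, ω 0 ∂P) + b - z) ^ 2 ≤ ((∫ ω, ω 0 ∂P) - μm) ^ 2 := by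
            nlinarith [hm', hb', hmP.2]
          have h3 := hμmP P hP
          rw [hvmu'] at h3
          calc ∫ ω, (dI a b (z - ω 0)) ^ 2 ∂P
              ≤ ((∫ ω, ω 0 ∂P) + b - z) ^ 2
                + ∫ ω, (ω 0 - ∫ ω', ω' 0 ∂P) ^ 2 ∂P := h1
            _ ≤ ((∫ ω, ω 0 ∂P) - μm) ^ 2
                + ∫ ω, (ω 0 - ∫ ω', ω' 0 ∂P) ^ 2 ∂P := by linarith
            _ ≤ s2 + δ/2 := by linarith
            _ ≤ (1 + δ) * 0 ^ 2 + s2 + δ := by nlinarith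
        · have key : ((∫ ω, ω 0 ∂P) + b - z) ^ 2 ≤ (δ/2) * (δ/2) := by
            nlinarith [hm', hPm]
          calc ∫ ω, (dI a b (z - ω 0)) ^ 2 ∂P
              ≤ ((∫ ω, ω 0 ∂P) + b - z) ^ 2
                + ∫ ω, (ω 0 - ∫ ω', ω' 0 ∂P) ^ 2 ∂P := h1
            _ ≤ (δ/2) * (δ/2) + s2 := by linarith
            _ ≤ (1 + δ) * 0 ^ 2 + s2 + δ := by nlinarith
    · -- z above the interval
      have hD : dI (a + μl) (b + μb) z = z - (b + μb) := by
        unfold dI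
        rw [max_eq_left (by linarith : (0:ℝ) ≤ z - (b + μb)),
          max_eq_right (by linarith : a + μl - z ≤ z - (b + μb))]
      obtain ⟨P, hP, hPm⟩ := hmb (δ/2) (by linarith)
      have hmP := hm P hP
      refine ⟨P, hP, ?_⟩
      have h1 := est P hP b hab le_rfl
      have h2 := hvar P hP
      rw [hD]
      set e : ℝ := z - (b + μb) with he
      have hepos : 0 < e := by simp only [he]; linarith
      set γ : ℝ := μb - (∫ ω, ω 0 ∂P) with hγ
      have hγ0 : 0 ≤ γ := by simp only [hγ]; linarith [hmP.2]
      have hγδ : γ < δ/2 := by simp only [hγ]; linarith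
      have hc : (∫ ω, ω 0 ∂P) + b - z = -(e + γ) := by simp only [he, hγ]; ring
      have hc2 : ((∫ ω, ω 0 ∂P) + b - z) ^ 2 = (e + γ) ^ 2 := by rw [hc, neg_sq]
      rw [hc2] at h1
      have harith : (e + γ) ^ 2 ≤ (1 + δ) * e ^ 2 + δ/2 := by
        have q1 : 2*e*γ ≤ 2*e*(δ/2) := mul_le_mul_of_nonneg_left hγδ.le (by linarith)
        have q2 : e ≤ e^2 + 1/4 := by nlinarith [sq_nonneg (e - 1/2)]
        have q3 : δ*e ≤ δ*(e^2 + 1/4) := mul_le_mul_of_nonneg_left q2 hδ.le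
        have q4 : δ*δ ≤ 1*δ := mul_le_mul_of_nonneg_right hδ1 hδ.le
        have k2 : γ*γ ≤ (δ/2)*(δ/2) := mul_self_le_mul_self hγ0 hγδ.le
        nlinarith [q1, q3, q4, k2]
      calc ∫ ω, (dI a b (z - ω 0)) ^ 2 ∂P
          ≤ (e + γ) ^ 2 + ∫ ω, (ω 0 - ∫ ω', ω' 0 ∂P) ^ 2 ∂P := h1
        _ ≤ (1 + δ) * e ^ 2 + δ/2 + s2 := by linarith
        _ ≤ (1 + δ) * e ^ 2 + s2 + δ := by linarith

end PengLLN

open PengLLN Set Filter Topology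

set_option maxHeartbeats 4000000

/-- Convergence rate in Peng's law of large numbers with the upper standard
deviation as the constant (Corollary 3.1). -/
theorem peng_lln_rate_upper_variance
    (Pset : Set (Measure (ℕ → ℝ))) (hne : Pset.Nonempty)
    (hprob : ∀ P ∈ Pset, IsProbabilityMeasure P)
    (hindep : IndepCoords Pset) (hid : IdentDistCoords Pset)
    (hint : ∀ P ∈ Pset, Integrable (fun ω : ℕ → ℝ => |ω 0| ^ 2) P)
    (hmom : BddAbove ((fun P : Measure (ℕ → ℝ) => ∫ ω, |ω 0| ^ 2 ∂P) '' Pset))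
    (μbar μlow : ℝ)
    (hμbar : (⨆ P : Pset, ∫ ω, ω 0 ∂(P : Measure (ℕ → ℝ))) = μbar)
    (hμlow : (⨅ P : Pset, ∫ ω, ω 0 ∂(P : Measure (ℕ → ℝ))) = μlow)
    (n : ℕ) (hn : 1 ≤ n)
    (φ : ℝ → ℝ) (hφ : LipschitzWith 1 φ) :
    |SE Pset (fun ω => φ ((∑ i ∈ Finset.range n, ω i) / n)) -
        sSup (φ '' Set.Icc μlow μbar)| ≤
      Real.sqrt (sInf ((fun μ : ℝ => SE Pset (fun ω => |ω 0 - μ| ^ 2)) ''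
          Set.Icc μlow μbar)) / Real.sqrt n := by
  classical
  haveI hPsetne : Nonempty ↥Pset := hne.to_subtype
  obtain ⟨P0, hP0⟩ := id hne
  haveI := hprob P0 hP0
  -- uniform second-moment bound for coordinate 0
  obtain ⟨C0, hC0⟩ := hmom
  set C : ℝ := max C0 0 with hCdef
  have hCnn : 0 ≤ C := le_max_right _ _
  have habs_sq : (fun ω : ℕ → ℝ => |ω 0| ^ 2) = fun ω : ℕ → ℝ => (ω 0) ^ 2 := by
    funext ω; rw [sq_abs]
  have hCb : ∀ P ∈ Pset, ∫ ω, (ω 0) ^ 2 ∂P ≤ C := by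
    intro P hP
    have h1 : ∫ ω, |ω 0| ^ 2 ∂P ≤ C0 := hC0 (Set.mem_image_of_mem _ hP)
    rw [habs_sq] at h1
    exact h1.trans (le_max_left _ _)
  have hint2 : ∀ P ∈ Pset, Integrable (fun ω => (ω 0) ^ 2) P := by
    intro P hP
    have h1 := hint P hP
    rwa [habs_sq] at h1
  -- moments of all coordinates
  have hcoord : ∀ P ∈ Pset, ∀ i : ℕ,
      Integrable (fun ω => (ω i) ^ 2) P ∧ ∫ ω, (ω i) ^ 2 ∂P ≤ C :=
    fun P hP i => coord_sq_bound hne hprob hid hCnn hCb hint2 hP i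
  -- first moment bounds
  have habs1 : ∀ P ∈ Pset, |∫ ω, ω 0 ∂P| ≤ 1 + C := by
    intro P hP
    haveI := hprob P hP
    have h1 : ∀ᵐ ω ∂P, ‖ω 0‖ ≤ ((fun ω : ℕ → ℝ => 1 + (ω 0)^2) ω) := by
      refine ae_of_all _ fun ω => ?_
      show ‖ω 0‖ ≤ 1 + (ω 0)^2
      rw [Real.norm_eq_abs]
      nlinarith [sq_nonneg (|ω 0| - 1), sq_abs (ω 0), abs_nonneg (ω 0)]
    calc |∫ ω, ω 0 ∂P| ≤ ∫ ω, (1 + (ω 0)^2) ∂P := by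
          have h2 := integrable_coord0 (hint2 P hP)
          have h3 : |∫ ω, ω 0 ∂P| = ‖∫ ω, ω 0 ∂P‖ := (Real.norm_eq_abs _).symm
          rw [h3]
          exact norm_integral_le_of_norm_le
            ((integrable_const 1).add (hint2 P hP)) h1
      _ ≤ 1 + C := by
          rw [integral_add (integrable_const 1) (hint2 P hP)]
          simp only [integral_const, measure_univ, probReal_univ, smul_eq_mul,
            one_mul, one_smul]
          linarith [hCb P hP]
  have hmean_ub : ∀ P ∈ Pset, ∫ ω, ω 0 ∂P ≤ μbar := by
    intro P hP
    rw [← hμbar]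
    refine le_ciSup (f := fun P : Pset => ∫ ω, ω 0 ∂(P : Measure (ℕ → ℝ)))
      ⟨1 + C, ?_⟩ (⟨P, hP⟩ : Pset)
    rintro y ⟨Q, rfl⟩
    exact (abs_le.1 (habs1 Q Q.2)).2
  have hmean_lb : ∀ P ∈ Pset, μlow ≤ ∫ ω, ω 0 ∂P := by
    intro P hP
    rw [← hμlow]
    refine ciInf_le (f := fun P : Pset => ∫ ω, ω 0 ∂(P : Measure (ℕ → ℝ)))
      ⟨-(1 + C), ?_⟩ (⟨P, hP⟩ : Pset)
    rintro y ⟨Q, rfl⟩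
    exact (abs_le.1 (habs1 Q Q.2)).1
  have hmean : ∀ P ∈ Pset, (∫ ω, ω 0 ∂P) ∈ Set.Icc μlow μbar :=
    fun P hP => ⟨hmean_lb P hP, hmean_ub P hP⟩
  have hμμ : μlow ≤ μbar := (hmean_lb P0 hP0).trans (hmean_ub P0 hP0)
  have hmb : ∀ ε : ℝ, 0 < ε → ∃ P ∈ Pset, μbar - ε < ∫ ω, ω 0 ∂P := by
    intro ε hε
    have h1 : μbar - ε < ⨆ P : Pset, ∫ ω, ω 0 ∂(P : Measure (ℕ → ℝ)) := by
      rw [hμbar]; linarith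
    obtain ⟨⟨P, hP⟩, h2⟩ := exists_lt_of_lt_ciSup h1
    exact ⟨P, hP, h2⟩
  have hml : ∀ ε : ℝ, 0 < ε → ∃ P ∈ Pset, ∫ ω, ω 0 ∂P < μlow + ε := by
    intro ε hε
    have h1 : (⨅ P : Pset, ∫ ω, ω 0 ∂(P : Measure (ℕ → ℝ))) < μlow + ε := by
      rw [hμlow]; linarith
    obtain ⟨⟨P, hP⟩, h2⟩ := exists_lt_of_ciInf_lt h1
    exact ⟨P, hP, h2⟩
  -- variance quantities
  set s2 : ℝ := sInf ((fun μ : ℝ => SE Pset (fun ω => |ω 0 - μ| ^ 2)) ''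
      Set.Icc μlow μbar) with hs2def
  have hv_eq : ∀ μ : ℝ, SE Pset (fun ω => |ω 0 - μ| ^ 2)
      = SE Pset (fun ω => (ω 0 - μ) ^ 2) := by
    intro μ
    congr 1
    funext ω
    rw [sq_abs]
  have hsqint : ∀ P ∈ Pset, ∀ μ : ℝ, Integrable (fun ω => (ω 0 - μ) ^ 2) P := by
    intro P hP μ
    haveI := hprob P hP
    have hlin := integrable_sq_lin (hint2 P hP) (-μ) 1
    have h4 : (fun ω : ℕ → ℝ => ((-μ) + 1 * ω 0) ^ 2) = fun ω => (ω 0 - μ) ^ 2 := by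
      funext ω; ring
    rwa [h4] at hlin
  have hv_ub : ∀ μ : ℝ, ∀ P ∈ Pset, ∫ ω, (ω 0 - μ) ^ 2 ∂P ≤ 2*C + 2*μ^2 := by
    intro μ P hP
    haveI := hprob P hP
    calc ∫ ω, (ω 0 - μ) ^ 2 ∂P ≤ ∫ ω, (2 * (ω 0)^2 + 2*μ^2) ∂P := by
          refine integral_mono (hsqint P hP μ)
            (((hint2 P hP).const_mul 2).add (integrable_const _)) fun ω => ?_
          nlinarith [sq_nonneg (ω 0 + μ)]
      _ = 2 * (∫ ω, (ω 0)^2 ∂P) + 2*μ^2 := by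
          rw [integral_add ((hint2 P hP).const_mul 2) (integrable_const _),
            integral_const_mul, integral_const]
          simp
      _ ≤ 2*C + 2*μ^2 := by linarith [hCb P hP]
  have hs2mem : SE Pset (fun ω => |ω 0 - μlow| ^ 2)
      ∈ (fun μ : ℝ => SE Pset (fun ω => |ω 0 - μ| ^ 2)) '' Set.Icc μlow μbar :=
    ⟨μlow, Set.left_mem_Icc.2 hμμ, rfl⟩
  have hVar_le : ∀ P ∈ Pset, ∫ ω, (ω 0 - ∫ ω', ω' 0 ∂P) ^ 2 ∂P ≤ s2 := by
    intro P hP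
    haveI := hprob P hP
    refine le_csInf ⟨_, hs2mem⟩ ?_
    rintro y ⟨μ, hμ, rfl⟩
    dsimp only
    rw [hv_eq μ]
    have h1 := integral_sq_mu (hint2 P hP) (P := P) μ
    have h2 : ∫ ω, (ω 0 - μ) ^ 2 ∂P ≤ SE Pset (fun ω => (ω 0 - μ) ^ 2) :=
      le_SE hP (fun Q hQ => hv_ub μ Q hQ)
    nlinarith [sq_nonneg ((∫ ω', ω' 0 ∂P) - μ)]
  have hs2nn : 0 ≤ s2 := by
    refine le_csInf ⟨_, hs2mem⟩ ?_
    rintro y ⟨μ, hμ, rfl⟩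
    dsimp only
    rw [hv_eq μ]
    refine le_trans (integral_nonneg (μ := P0)
      (f := fun ω : ℕ → ℝ => (ω 0 - μ) ^ 2) fun ω => sq_nonneg _) ?_
    exact le_SE hP0 (fun Q hQ => hv_ub μ Q hQ)
  have hvmu : ∀ ε : ℝ, 0 < ε → ∃ μ ∈ Set.Icc μlow μbar,
      ∀ P ∈ Pset, ∫ ω, (ω 0 - μ) ^ 2 ∂P ≤ s2 + ε := by
    intro ε hε
    have h1 : s2 < s2 + ε/2 := by linarith
    obtain ⟨y, ⟨μm, hμm, rfl⟩, hy⟩ := exists_lt_of_csInf_lt ⟨_, hs2mem⟩ h1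
    refine ⟨μm, hμm, fun P hP => ?_⟩
    have h2 : ∫ ω, (ω 0 - μm) ^ 2 ∂P ≤ SE Pset (fun ω => (ω 0 - μm) ^ 2) :=
      le_SE hP (fun Q hQ => hv_ub μm Q hQ)
    rw [← hv_eq μm] at h2
    dsimp only at hy
    linarith
  -- the sup of φ over the interval
  set M : ℝ := sSup (φ '' Set.Icc μlow μbar) with hMdef
  have hMbdd : BddAbove (φ '' Set.Icc μlow μbar) :=
    isCompact_Icc.bddAbove_image hφ.continuous.continuousOn
  have hMne : (φ '' Set.Icc μlow μbar).Nonempty :=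
    ⟨φ μlow, Set.mem_image_of_mem _ (Set.left_mem_Icc.2 hμμ)⟩
  have hφle : ∀ r ∈ Set.Icc μlow μbar, φ r ≤ M :=
    fun r hr => le_csSup hMbdd (Set.mem_image_of_mem _ hr)
  set Rφ : ℝ := |φ μlow| + (μbar - μlow) with hRφdef
  have hφbd : ∀ r ∈ Set.Icc μlow μbar, |φ r| ≤ Rφ := by
    intro r hr
    have h1 := lip_abs hφ r μlow
    have h2 : |r - μlow| ≤ μbar - μlow := by
      rw [abs_of_nonneg (by linarith [hr.1])]
      linarith [hr.2]
    calc |φ r| = |φ μlow + (φ r - φ μlow)| := by ring_nf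
      _ ≤ |φ μlow| + |φ r - φ μlow| := abs_add_le _ _
      _ ≤ Rφ := by rw [hRφdef]; linarith
  have hMabs : |M| ≤ Rφ := by
    rw [abs_le]
    constructor
    · have h1 : -Rφ ≤ φ μlow := (abs_le.1 (hφbd μlow (Set.left_mem_Icc.2 hμμ))).1
      exact h1.trans (hφle μlow (Set.left_mem_Icc.2 hμμ))
    · refine csSup_le hMne ?_
      rintro y ⟨r, hr, rfl⟩
      exact (abs_le.1 (hφbd r hr)).2
  -- dimension constant
  set N : ℝ := (n : ℝ) with hNdef
  have hN0 : 0 < N := by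
    rw [hNdef]
    exact_mod_cast Nat.pos_of_ne_zero (by omega)
  have hN1 : 1 ≤ N := by
    rw [hNdef]
    exact_mod_cast hn
  -- main truncated bound
  have main : ∀ R : ℝ, max (max 1 (2*|φ 0|)) Rφ ≤ R →
      |SE Pset (fun ω => φ ((∑ i ∈ Finset.range n, ω i) / N)) - M|
        ≤ Real.sqrt s2 / Real.sqrt N + 2*C/R := by
    intro R hR
    have hR1 : (1:ℝ) ≤ R := le_trans (le_trans (le_max_left _ _) (le_max_left _ _)) hR
    have hRφ0 : 2*|φ 0| ≤ R := le_trans (le_trans (le_max_right _ _) (le_max_left _ _)) hR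
    have hRRφ : Rφ ≤ R := le_trans (le_max_right _ _) hR
    have hR0 : (0:ℝ) < R := lt_of_lt_of_le one_pos hR1
    have hRR : -R ≤ R := by linarith
    set φR : ℝ → ℝ := fun y => clampR (-R) R (φ y) with hφRdef
    have hφR_lip : LipschitzWith 1 φR := by
      refine LipschitzWith.of_dist_le_mul fun x y => ?_
      rw [Real.dist_eq, NNReal.coe_one, one_mul, ← Real.dist_eq]
      exact (clampR_lip _ _ _ _).trans (lip_abs hφ x y)
    have hφR_bd : ∀ y, |φR y| ≤ R := by
      intro y
      have h1 := clampR_mem (a := -R) (b := R) (x := φ y) hRR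
      rw [abs_le]; exact ⟨h1.1, h1.2⟩
    have hφR_eqI : ∀ r ∈ Set.Icc μlow μbar, φR r = φ r := by
      intro r hr
      refine clampR_eq_self ⟨?_, ?_⟩
      · linarith [(abs_le.1 (hφbd r hr)).1]
      · linarith [(abs_le.1 (hφbd r hr)).2]
    have hφR_leM : ∀ p ∈ Set.Icc μlow μbar, φR p ≤ M := fun p hp =>
      (hφR_eqI p hp) ▸ hφle p hp
    set ψR : ℝ → ℝ := fun x => φR (x / N) with hψRdef
    have hψR_lip : LipschitzWith 1 ψR := by
      refine LipschitzWith.of_dist_le_mul fun x y => ?_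
      rw [Real.dist_eq, NNReal.coe_one, one_mul, ← Real.dist_eq]
      have h1 := lip_abs hφR_lip (x/N) (y/N)
      have h2 : |x/N - y/N| = |x - y|/N := by
        rw [div_sub_div_same, abs_div, abs_of_pos hN0]
      have h3 : |x - y|/N ≤ |x - y| := by
        rw [div_le_iff₀ hN0]
        nlinarith [abs_nonneg (x - y)]
      rw [Real.dist_eq]
      calc |ψR x - ψR y| ≤ |x/N - y/N| := h1
        _ ≤ |x - y| := by rw [h2]; exact h3
    have hψR_bd : ∀ x, |ψR x| ≤ R := fun x => hφR_bd _
    set χ : ℕ → ℝ → ℝ := fun k => (Tstep Pset)^[k] ψR with hχdef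
    have hχp : ∀ k : ℕ, LipschitzWith 1 (χ k) ∧ ∀ x, |χ k x| ≤ R := by
      intro k
      induction k with
      | zero => exact ⟨hψR_lip, hψR_bd⟩
      | succ k ih =>
        have h1 : χ (k+1) = Tstep Pset (χ k) := by
          simp only [hχdef, Function.iterate_succ_apply']
        rw [h1]
        exact ⟨Tstep_lip hne hprob ih.1 ih.2,
          fun x => Tstep_bound hne hprob ih.1.continuous ih.2 x⟩
    have hχstep : ∀ (k : ℕ) (x : ℝ), χ (k+1) x = SE Pset (fun ω => χ k (x + ω 0)) := by
      intro k x
      have h1 : χ (k+1) = Tstep Pset (χ k) := by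
        simp only [hχdef, Function.iterate_succ_apply']
      rw [h1]
      rfl
    have hSE_eq : SE Pset (fun ω => ψR (∑ i ∈ Finset.range n, ω i)) = χ n 0 := by
      simp only [hχdef]
      exact SE_iterate hne hprob hindep hid n hn ψR hψR_lip R hψR_bd
    -- upper bound by backward induction
    have upper : ∀ k : ℕ, k ≤ n → ∀ x : ℝ,
        χ k x ≤ M + Real.sqrt ((dI ((N - k) * μlow) ((N - k) * μbar) x)^2 + k * s2) / N := by
      intro k
      induction k with
      | zero =>
        intro _ x
        have hab : N * μlow ≤ N * μbar := mul_le_mul_of_nonneg_left hμμ hN0.le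
        have hq := clampR_mem (a := N*μlow) (b := N*μbar) (x := x) hab
        have hqd := abs_sub_clampR (a := N*μlow) (b := N*μbar) (x := x) hab
        have hmem : clampR (N*μlow) (N*μbar) x / N ∈ Set.Icc μlow μbar := by
          constructor
          · rw [le_div_iff₀ hN0]; nlinarith [hq.1]
          · rw [div_le_iff₀ hN0]; nlinarith [hq.2]
        have hlip := lip_abs hφR_lip (x/N) (clampR (N*μlow) (N*μbar) x / N)
        have h2 : |x/N - clampR (N*μlow) (N*μbar) x / N| = dI (N*μlow) (N*μbar) x / N := by
          rw [div_sub_div_same, abs_div, abs_of_pos hN0, hqd]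
        rw [h2] at hlip
        have h4 : φR (x/N) ≤ M + dI (N*μlow) (N*μbar) x / N := by
          have h5 := hφR_leM _ hmem
          have h6 := (abs_le.1 hlip).2
          linarith
        simp only [Nat.cast_zero, sub_zero, zero_mul, add_zero]
        rw [Real.sqrt_sq dI_nonneg]
        exact h4
      | succ k ih =>
        intro hk1 x
        push_cast
        have hkn : k ≤ n := le_trans (Nat.le_succ k) hk1
        have hkN : (k:ℝ) + 1 ≤ N := by rw [hNdef]; exact_mod_cast hk1
        have hks2 : 0 ≤ (k:ℝ) * s2 := mul_nonneg (Nat.cast_nonneg k) hs2nn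
        rw [hχstep k x]
        refine SE_le hne fun P hP => ?_
        haveI := hprob P hP
        have h2P := hint2 P hP
        have hab1 : (N - ((k:ℝ)+1)) * μlow ≤ (N - ((k:ℝ)+1)) * μbar :=
          mul_le_mul_of_nonneg_left hμμ (by linarith)
        have hab0 : (N - (k:ℝ)) * μlow ≤ (N - (k:ℝ)) * μbar :=
          mul_le_mul_of_nonneg_left hμμ (by linarith)
        have hq := clampR_mem (a := (N - ((k:ℝ)+1)) * μlow)
          (b := (N - ((k:ℝ)+1)) * μbar) (x := x) hab1
        have hqd := abs_sub_clampR (a := (N - ((k:ℝ)+1)) * μlow)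
          (b := (N - ((k:ℝ)+1)) * μbar) (x := x) hab1
        have hmP := hmean P hP
        have hid1 : (N - (k:ℝ)) * μlow = (N - ((k:ℝ)+1)) * μlow + μlow := by ring
        have hid2 : (N - (k:ℝ)) * μbar = (N - ((k:ℝ)+1)) * μbar + μbar := by ring
        have hpoint : ∀ ω : ℕ → ℝ,
            (dI ((N - (k:ℝ)) * μlow) ((N - (k:ℝ)) * μbar) (x + ω 0))^2
              ≤ ((x - clampR ((N - ((k:ℝ)+1)) * μlow) ((N - ((k:ℝ)+1)) * μbar) x)
                  + (ω 0 - ∫ ω', ω' 0 ∂P))^2 := by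
          intro ω
          have hench : clampR ((N - ((k:ℝ)+1)) * μlow) ((N - ((k:ℝ)+1)) * μbar) x
              + (∫ ω', ω' 0 ∂P)
              ∈ Set.Icc ((N - (k:ℝ)) * μlow) ((N - (k:ℝ)) * μbar) := by
            constructor
            · rw [hid1]; exact add_le_add hq.1 hmP.1
            · rw [hid2]; exact add_le_add hq.2 hmP.2
          have h5 := dI_le_abs (x := x + ω 0) hench
          have h6 : |x + ω 0 - (clampR ((N - ((k:ℝ)+1)) * μlow) ((N - ((k:ℝ)+1)) * μbar) x
              + ∫ ω', ω' 0 ∂P)|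
              = |(x - clampR ((N - ((k:ℝ)+1)) * μlow) ((N - ((k:ℝ)+1)) * μbar) x)
                  + (ω 0 - ∫ ω', ω' 0 ∂P)| := by congr 1; ring
          rw [h6] at h5
          nlinarith [dI_nonneg (a := (N - (k:ℝ)) * μlow) (b := (N - (k:ℝ)) * μbar)
              (x := x + ω 0),
            abs_nonneg ((x - clampR ((N - ((k:ℝ)+1)) * μlow) ((N - ((k:ℝ)+1)) * μbar) x)
              + (ω 0 - ∫ ω', ω' 0 ∂P)),
            sq_abs ((x - clampR ((N - ((k:ℝ)+1)) * μlow) ((N - ((k:ℝ)+1)) * μbar) x)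
              + (ω 0 - ∫ ω', ω' 0 ∂P))]
        have hintχ : Integrable (fun ω => χ k (x + ω 0)) P :=
          integrable_bl (hχp k).1.continuous (hχp k).2
            (measurable_const.add (measurable_pi_apply 0))
        have hdIint : Integrable
            (fun ω => (dI ((N - (k:ℝ)) * μlow) ((N - (k:ℝ)) * μbar) (x + ω 0))^2) P := by
          have hlin := integrable_sq_lin h2P (x - (N - (k:ℝ)) * μlow) 1
          have h4 : (fun ω : ℕ → ℝ => ((x - (N - (k:ℝ)) * μlow) + 1 * ω 0)^2)
              = fun ω => ((x + ω 0) - (N - (k:ℝ)) * μlow)^2 := by funext ω; ring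
          rw [h4] at hlin
          exact integrable_dI_sq hab0 (measurable_const.add (measurable_pi_apply 0)) hlin
        have hgnn : ∀ ω : ℕ → ℝ,
            0 ≤ (dI ((N - (k:ℝ)) * μlow) ((N - (k:ℝ)) * μbar) (x + ω 0))^2 + k * s2 :=
          fun ω => add_nonneg (sq_nonneg _) hks2
        have hgint : Integrable
            (fun ω => (dI ((N - (k:ℝ)) * μlow) ((N - (k:ℝ)) * μbar) (x + ω 0))^2 + k * s2)
            P := hdIint.add (integrable_const _)
        have hsqint' : Integrable (fun ω =>
            Real.sqrt ((dI ((N - (k:ℝ)) * μlow) ((N - (k:ℝ)) * μbar) (x + ω 0))^2 + k * s2))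
            P := by
          refine Integrable.mono' (hgint.add (integrable_const 1)) ?_
            (ae_of_all _ fun ω => ?_)
          · exact (Real.continuous_sqrt.stronglyMeasurable.comp_measurable
              (((measurable_dI (measurable_const.add (measurable_pi_apply 0))).pow_const
                2).add_const _)).aestronglyMeasurable
          · simp only [Pi.add_apply]
            rw [Real.norm_eq_abs, abs_of_nonneg (Real.sqrt_nonneg _)]
            nlinarith [Real.sq_sqrt (hgnn ω), Real.sqrt_nonneg
              ((dI ((N - (k:ℝ)) * μlow) ((N - (k:ℝ)) * μbar) (x + ω 0))^2 + k * s2),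
              sq_nonneg (Real.sqrt
                ((dI ((N - (k:ℝ)) * μlow) ((N - (k:ℝ)) * μbar) (x + ω 0))^2 + k * s2) - 1)]
        calc ∫ ω, χ k (x + ω 0) ∂P
            ≤ ∫ ω, (M + Real.sqrt ((dI ((N - (k:ℝ)) * μlow) ((N - (k:ℝ)) * μbar)
                (x + ω 0))^2 + k * s2) / N) ∂P := by
              refine integral_mono hintχ ((integrable_const M).add (hsqint'.div_const N))
                fun ω => ?_
              exact ih hkn (x + ω 0)
          _ = M + (∫ ω, Real.sqrt ((dI ((N - (k:ℝ)) * μlow) ((N - (k:ℝ)) * μbar)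
                (x + ω 0))^2 + k * s2) ∂P) / N := by
              rw [integral_add (integrable_const M) (hsqint'.div_const N), integral_const,
                integral_div]
              simp
          _ ≤ M + Real.sqrt (∫ ω, ((dI ((N - (k:ℝ)) * μlow) ((N - (k:ℝ)) * μbar)
                (x + ω 0))^2 + k * s2) ∂P) / N := by
              have hj := integral_sqrt_le hgint hgnn
              exact add_le_add_right ((div_le_div_iff_of_pos_right hN0).2 hj) M
          _ ≤ M + Real.sqrt ((dI ((N - ((k:ℝ)+1)) * μlow) ((N - ((k:ℝ)+1)) * μbar) x)^2
                + ((k:ℝ)+1) * s2) / N := by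
              have e1 : ∫ ω, ((dI ((N - (k:ℝ)) * μlow) ((N - (k:ℝ)) * μbar)
                  (x + ω 0))^2 + k * s2) ∂P
                  = (∫ ω, (dI ((N - (k:ℝ)) * μlow) ((N - (k:ℝ)) * μbar)
                      (x + ω 0))^2 ∂P) + k * s2 := by
                rw [integral_add hdIint (integrable_const _), integral_const]
                simp
              have e2 : ∫ ω, (dI ((N - (k:ℝ)) * μlow) ((N - (k:ℝ)) * μbar) (x + ω 0))^2 ∂P
                  ≤ (x - clampR ((N - ((k:ℝ)+1)) * μlow) ((N - ((k:ℝ)+1)) * μbar) x)^2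
                    + ∫ ω, (ω 0 - ∫ ω', ω' 0 ∂P)^2 ∂P := by
                calc ∫ ω, (dI ((N - (k:ℝ)) * μlow) ((N - (k:ℝ)) * μbar) (x + ω 0))^2 ∂P
                    ≤ ∫ ω, ((x - clampR ((N - ((k:ℝ)+1)) * μlow) ((N - ((k:ℝ)+1)) * μbar) x)
                        + (ω 0 - ∫ ω', ω' 0 ∂P))^2 ∂P :=
                      integral_mono hdIint (integrable_sq_shift h2P _ _) hpoint
                  _ = _ := integral_sq_shift h2P _
              have e3 : (x - clampR ((N - ((k:ℝ)+1)) * μlow) ((N - ((k:ℝ)+1)) * μbar) x)^2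
                  = (dI ((N - ((k:ℝ)+1)) * μlow) ((N - ((k:ℝ)+1)) * μbar) x)^2 := by
                rw [← hqd, sq_abs]
              have e4 := hVar_le P hP
              have e5 : ∫ ω, ((dI ((N - (k:ℝ)) * μlow) ((N - (k:ℝ)) * μbar)
                  (x + ω 0))^2 + k * s2) ∂P
                  ≤ (dI ((N - ((k:ℝ)+1)) * μlow) ((N - ((k:ℝ)+1)) * μbar) x)^2
                    + ((k:ℝ)+1) * s2 := by
                rw [e1]
                rw [e3] at e2
                nlinarith
              exact add_le_add_right ((div_le_div_iff_of_pos_right hN0).2 (Real.sqrt_le_sqrt e5)) M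
    -- general sqrt/N identity
    have hsr : ∀ u : ℝ, 0 ≤ u → Real.sqrt (N * u) / N = Real.sqrt u / Real.sqrt N := by
      intro u hu
      calc Real.sqrt (N * u) / N
          = (Real.sqrt N * Real.sqrt u) / (Real.sqrt N * Real.sqrt N) := by
            rw [Real.sqrt_mul hN0.le, Real.mul_self_sqrt hN0.le]
        _ = Real.sqrt u / Real.sqrt N :=
            mul_div_mul_left _ _ (ne_of_gt (Real.sqrt_pos.2 hN0))
    -- upper estimate at x = 0
    have hupper_final : χ n 0 ≤ M + Real.sqrt s2 / Real.sqrt N := by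
      have h1 := upper n le_rfl 0
      have h2 : N - (n:ℝ) = 0 := by rw [hNdef]; ring
      rw [h2, zero_mul, zero_mul] at h1
      rw [dI_zero_zero, abs_zero] at h1
      have h4 : (0:ℝ)^2 + (n:ℝ) * s2 = N * s2 := by rw [hNdef]; ring
      rw [h4, hsr s2 hs2nn] at h1
      exact h1
    -- lower estimate, by backward induction
    have lower : ∀ δ : ℝ, 0 < δ → δ ≤ 1 → ∀ k : ℕ, ∀ x z : ℝ,
        φR ((x + z)/N) - Real.sqrt ((1+δ)^k * (dI ((k:ℝ)*μlow) ((k:ℝ)*μbar) z)^2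
          + (k:ℝ) * ((1+δ)^k * (s2+δ))) / N ≤ χ k x := by
      intro δ hδ hδ1 k
      induction k with
      | zero =>
        intro x z
        simp only [Nat.cast_zero, zero_mul, pow_zero, one_mul, add_zero]
        rw [dI_zero_zero, Real.sqrt_sq (abs_nonneg z)]
        have h1 := lip_abs hφR_lip ((x+z)/N) (x/N)
        have h2 : |(x+z)/N - x/N| = |z|/N := by
          rw [div_sub_div_same, abs_div, abs_of_pos hN0]
          congr 2
          ring
        rw [h2] at h1
        have h3 := (abs_le.1 h1).2
        show φR ((x+z)/N) - |z|/N ≤ φR (x/N)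
        linarith
      | succ k ih =>
        intro x z
        push_cast
        have hkk : (k:ℝ)*μlow ≤ (k:ℝ)*μbar :=
          mul_le_mul_of_nonneg_left hμμ (Nat.cast_nonneg k)
        obtain ⟨P, hP, hPsel⟩ :=
          lower_step hne hprob hint2 hmean hmb hml hVar_le hvmu hkk z δ hδ hδ1
        haveI := hprob P hP
        have h2P := hint2 P hP
        have hc1 : (k:ℝ)*μlow + μlow = ((k:ℝ)+1)*μlow := by ring
        have hc2 : (k:ℝ)*μbar + μbar = ((k:ℝ)+1)*μbar := by ring
        rw [hc1, hc2] at hPsel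
        have hBk : (0:ℝ) ≤ (1+δ)^k := by positivity
        have hs2δ : (0:ℝ) ≤ s2 + δ := by linarith
        have hgnn : ∀ ω : ℕ → ℝ,
            0 ≤ (1+δ)^k * (dI ((k:ℝ)*μlow) ((k:ℝ)*μbar) (z - ω 0))^2
              + (k:ℝ) * ((1+δ)^k * (s2+δ)) := fun ω => by positivity
        have hdIint : Integrable
            (fun ω => (dI ((k:ℝ)*μlow) ((k:ℝ)*μbar) (z - ω 0))^2) P := by
          have hlin := integrable_sq_lin h2P (z - (k:ℝ)*μlow) (-1)
          have h4 : (fun ω : ℕ → ℝ => ((z - (k:ℝ)*μlow) + (-1) * ω 0)^2)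
              = fun ω => ((z - ω 0) - (k:ℝ)*μlow)^2 := by funext ω; ring
          rw [h4] at hlin
          exact integrable_dI_sq hkk (measurable_const.sub (measurable_pi_apply 0)) hlin
        have hgint : Integrable
            (fun ω => (1+δ)^k * (dI ((k:ℝ)*μlow) ((k:ℝ)*μbar) (z - ω 0))^2
              + (k:ℝ) * ((1+δ)^k * (s2+δ))) P := (hdIint.const_mul _).add (integrable_const _)
        have hsqint' : Integrable (fun ω =>
            Real.sqrt ((1+δ)^k * (dI ((k:ℝ)*μlow) ((k:ℝ)*μbar) (z - ω 0))^2
              + (k:ℝ) * ((1+δ)^k * (s2+δ)))) P := by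
          refine Integrable.mono' (hgint.add (integrable_const 1)) ?_
            (ae_of_all _ fun ω => ?_)
          · exact (Real.continuous_sqrt.stronglyMeasurable.comp_measurable
              ((((measurable_dI (measurable_const.sub (measurable_pi_apply 0))).pow_const
                2).const_mul _).add_const _)).aestronglyMeasurable
          · simp only [Pi.add_apply]
            rw [Real.norm_eq_abs, abs_of_nonneg (Real.sqrt_nonneg _)]
            nlinarith [Real.sq_sqrt (hgnn ω), Real.sqrt_nonneg
              ((1+δ)^k * (dI ((k:ℝ)*μlow) ((k:ℝ)*μbar) (z - ω 0))^2
                + (k:ℝ) * ((1+δ)^k * (s2+δ))),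
              sq_nonneg (Real.sqrt ((1+δ)^k * (dI ((k:ℝ)*μlow) ((k:ℝ)*μbar) (z - ω 0))^2
                + (k:ℝ) * ((1+δ)^k * (s2+δ))) - 1)]
        have hintχ : Integrable (fun ω => χ k (x + ω 0)) P :=
          integrable_bl (hχp k).1.continuous (hχp k).2
            (measurable_const.add (measurable_pi_apply 0))
        rw [hχstep k x]
        have hub : ∀ Q ∈ Pset, ∫ ω, χ k (x + ω 0) ∂Q ≤ R := fun Q hQ => by
          haveI := hprob Q hQ
          exact integral_bl_le (hχp k).2
        refine le_trans ?_ (le_SE hP hub)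
        have hpoint : ∀ ω : ℕ → ℝ,
            φR ((x + z)/N) - Real.sqrt ((1+δ)^k * (dI ((k:ℝ)*μlow) ((k:ℝ)*μbar) (z - ω 0))^2
              + (k:ℝ) * ((1+δ)^k * (s2+δ))) / N ≤ χ k (x + ω 0) := by
          intro ω
          have h1 := ih (x + ω 0) (z - ω 0)
          have h2 : (x + ω 0) + (z - ω 0) = x + z := by ring
          rw [h2] at h1
          exact h1
        calc φR ((x + z)/N) - Real.sqrt ((1+δ)^(k+1)
              * (dI (((k:ℝ)+1)*μlow) (((k:ℝ)+1)*μbar) z)^2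
              + ((k:ℝ)+1) * ((1+δ)^(k+1) * (s2+δ))) / N
            ≤ φR ((x + z)/N) - Real.sqrt (∫ ω, ((1+δ)^k
                * (dI ((k:ℝ)*μlow) ((k:ℝ)*μbar) (z - ω 0))^2
                + (k:ℝ) * ((1+δ)^k * (s2+δ))) ∂P) / N := by
              have e1 : ∫ ω, ((1+δ)^k * (dI ((k:ℝ)*μlow) ((k:ℝ)*μbar) (z - ω 0))^2
                  + (k:ℝ) * ((1+δ)^k * (s2+δ))) ∂P
                  = (1+δ)^k * (∫ ω, (dI ((k:ℝ)*μlow) ((k:ℝ)*μbar) (z - ω 0))^2 ∂P)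
                    + (k:ℝ) * ((1+δ)^k * (s2+δ)) := by
                rw [integral_add (hdIint.const_mul _) (integrable_const _),
                  integral_const_mul, integral_const]
                simp
              have e2 : (1+δ)^k ≤ (1+δ)^(k+1) :=
                pow_le_pow_right₀ (by linarith) (Nat.le_succ k)
              have e4 := mul_le_mul_of_nonneg_left hPsel hBk
              have e5 : (1+δ)^k * ((1 + δ) * (dI (((k:ℝ)+1)*μlow) (((k:ℝ)+1)*μbar) z)^2
                    + s2 + δ)
                  = (1+δ)^(k+1) * (dI (((k:ℝ)+1)*μlow) (((k:ℝ)+1)*μbar) z)^2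
                    + (1+δ)^k * (s2+δ) := by ring
              have e6 : (k:ℝ) * ((1+δ)^k * (s2+δ)) ≤ (k:ℝ) * ((1+δ)^(k+1) * (s2+δ)) := by
                refine mul_le_mul_of_nonneg_left ?_ (Nat.cast_nonneg k)
                exact mul_le_mul_of_nonneg_right e2 hs2δ
              have e7 : (1+δ)^k * (s2+δ) ≤ (1+δ)^(k+1) * (s2+δ) :=
                mul_le_mul_of_nonneg_right e2 hs2δ
              have e3 : ∫ ω, ((1+δ)^k * (dI ((k:ℝ)*μlow) ((k:ℝ)*μbar) (z - ω 0))^2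
                  + (k:ℝ) * ((1+δ)^k * (s2+δ))) ∂P
                  ≤ (1+δ)^(k+1) * (dI (((k:ℝ)+1)*μlow) (((k:ℝ)+1)*μbar) z)^2
                    + ((k:ℝ)+1) * ((1+δ)^(k+1) * (s2+δ)) := by
                rw [e1]
                rw [e5] at e4
                nlinarith [e4, e6, e7]
              have e8 := (div_le_div_iff_of_pos_right hN0).2 (Real.sqrt_le_sqrt e3)
              linarith
          _ ≤ φR ((x + z)/N) - (∫ ω, Real.sqrt ((1+δ)^k
                * (dI ((k:ℝ)*μlow) ((k:ℝ)*μbar) (z - ω 0))^2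
                + (k:ℝ) * ((1+δ)^k * (s2+δ))) ∂P) / N := by
              have hj := integral_sqrt_le hgint hgnn
              have := (div_le_div_iff_of_pos_right hN0).2 hj
              linarith
          _ = ∫ ω, (φR ((x + z)/N) - Real.sqrt ((1+δ)^k
                * (dI ((k:ℝ)*μlow) ((k:ℝ)*μbar) (z - ω 0))^2
                + (k:ℝ) * ((1+δ)^k * (s2+δ))) / N) ∂P := by
              rw [integral_sub (integrable_const _) (hsqint'.div_const N), integral_const,
                integral_div]
              simp
          _ ≤ ∫ ω, χ k (x + ω 0) ∂P :=
              integral_mono ((integrable_const _).sub (hsqint'.div_const N)) hintχ hpoint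
    -- lower estimate at x = 0, for each small δ
    have hlower_final : ∀ δ : ℝ, 0 < δ → δ ≤ 1 →
        M ≤ χ n 0 + Real.sqrt ((1+δ)^n * (s2+δ)) / Real.sqrt N := by
      intro δ hδ hδ1
      refine csSup_le hMne ?_
      rintro y ⟨r, hr, rfl⟩
      have h1 := lower δ hδ hδ1 n 0 (N*r)
      have h2 : (0 + N*r)/N = r := by rw [zero_add]; exact mul_div_cancel_left₀ r hN0.ne'
      rw [h2] at h1
      have h3 : dI ((n:ℝ)*μlow) ((n:ℝ)*μbar) (N*r) = 0 := by
        rw [← hNdef]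
        exact dI_eq_zero ⟨mul_le_mul_of_nonneg_left hr.1 hN0.le,
          mul_le_mul_of_nonneg_left hr.2 hN0.le⟩
      rw [h3] at h1
      have h4 : (1+δ)^n * (0:ℝ)^2 + (n:ℝ) * ((1+δ)^n * (s2+δ))
          = N * ((1+δ)^n * (s2+δ)) := by rw [← hNdef]; ring
      rw [h4, hsr _ (by positivity)] at h1
      have h6 : φR r = φ r := hφR_eqI r hr
      linarith
    have hlow2 : M - χ n 0 ≤ Real.sqrt s2 / Real.sqrt N := by
      have hg : Filter.Tendsto (fun δ : ℝ => Real.sqrt ((1+δ)^n * (s2+δ)) / Real.sqrt N)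
          (nhdsWithin (0:ℝ) (Set.Ioi 0))
          (𝓝 (Real.sqrt ((1+(0:ℝ))^n * (s2+0)) / Real.sqrt N)) := by
        apply Filter.Tendsto.mono_left _ nhdsWithin_le_nhds
        exact (Continuous.tendsto (((((continuous_const.add continuous_id).pow n).mul
          (continuous_const.add continuous_id)).sqrt).div_const _) 0)
      have hsimp : (1+(0:ℝ))^n * (s2+0) = s2 := by norm_num
      rw [hsimp] at hg
      refine ge_of_tendsto hg ?_
      filter_upwards [Ioo_mem_nhdsGT_of_mem
        (Set.mem_Ico.2 ⟨le_refl (0:ℝ), zero_lt_one⟩)] with δ hδ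
      linarith [hlower_final δ hδ.1 hδ.2.le]
    -- truncation error, pointwise
    have hdiffpt : ∀ y : ℝ, |φ y - φR y| ≤ 2*y^2/R := by
      intro y
      have hy2 : (0:ℝ) ≤ 2*y^2/R := by positivity
      have h0 : |φ y - φ 0| ≤ |y - 0| := lip_abs hφ y 0
      rw [sub_zero] at h0
      have h0' : |φ y| ≤ |φ 0| + |y| := by
        calc |φ y| = |φ 0 + (φ y - φ 0)| := by ring_nf
          _ ≤ |φ 0| + |φ y - φ 0| := abs_add_le _ _
          _ ≤ |φ 0| + |y| := by linarith
      have key : ∀ t : ℝ, |t| ≤ |φ 0| + |y| → t - R ≤ 2*y^2/R := by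
        intro t ht
        have htt : t ≤ |φ 0| + |y| := (le_abs_self t).trans ht
        rcases le_or_gt |y| (R/2) with hc | hc
        · have : t - R ≤ 0 := by linarith
          linarith
        · have h3 : R * |y| ≤ 2*y^2 := by nlinarith [sq_abs y, abs_nonneg y]
          have h4 : |y| ≤ 2*y^2/R := by
            rw [le_div_iff₀ hR0]
            linarith [h3]
          linarith
      have h1 : |φ y - φR y| = dI (-R) R (φ y) := abs_sub_clampR hRR
      rw [h1]
      refine max_le ?_ (max_le ?_ hy2)
      · have := key (-(φ y)) (by rw [abs_neg]; exact h0')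
        linarith
      · exact key (φ y) h0'
    -- truncation error for integrals
    have htr : ∀ P ∈ Pset,
        |(∫ ω, φ ((∑ i ∈ Finset.range n, ω i)/N) ∂P)
          - ∫ ω, ψR (∑ i ∈ Finset.range n, ω i) ∂P| ≤ 2*C/R := by
      intro P hP
      haveI := hprob P hP
      have hSmeas : Measurable (fun ω : ℕ → ℝ => ∑ i ∈ Finset.range n, ω i) :=
        Finset.measurable_sum _ (fun i _ => measurable_pi_apply i)
      have hsum_int : Integrable (fun ω => ∑ i ∈ Finset.range n, (ω i)^2) P :=
        integrable_finset_sum _ (fun i _ => (hcoord P hP i).1)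
      have hptsq : ∀ ω : ℕ → ℝ, (∑ i ∈ Finset.range n, ω i)^2
          ≤ N * ∑ i ∈ Finset.range n, (ω i)^2 := by
        intro ω
        have h5 := sq_sum_le_card_mul_sum_sq (s := Finset.range n) (f := fun i => ω i)
        rw [Finset.card_range] at h5
        rw [hNdef]
        exact h5
      have hSsq_int : Integrable (fun ω => (∑ i ∈ Finset.range n, ω i)^2) P := by
        refine Integrable.mono' (hsum_int.const_mul N)
          ((hSmeas.pow_const 2).aestronglyMeasurable) (ae_of_all _ fun ω => ?_)
        rw [Real.norm_eq_abs, abs_of_nonneg (sq_nonneg _)]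
        exact hptsq ω
      have hSsq_val : ∫ ω, (∑ i ∈ Finset.range n, ω i)^2 ∂P ≤ N^2*C := by
        calc ∫ ω, (∑ i ∈ Finset.range n, ω i)^2 ∂P
            ≤ ∫ ω, N * ∑ i ∈ Finset.range n, (ω i)^2 ∂P :=
              integral_mono hSsq_int (hsum_int.const_mul N) hptsq
          _ = N * ∑ i ∈ Finset.range n, ∫ ω, (ω i)^2 ∂P := by
              rw [integral_const_mul, integral_finset_sum _ (fun i _ => (hcoord P hP i).1)]
          _ ≤ N * (N * C) := by
              refine mul_le_mul_of_nonneg_left ?_ hN0.le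
              calc ∑ i ∈ Finset.range n, ∫ ω, (ω i)^2 ∂P
                  ≤ ∑ _i ∈ Finset.range n, C :=
                    Finset.sum_le_sum (fun i _ => (hcoord P hP i).2)
                _ = N * C := by
                    rw [Finset.sum_const, Finset.card_range, nsmul_eq_mul, hNdef]
          _ = N^2*C := by ring
      have hφSint : Integrable (fun ω => φ ((∑ i ∈ Finset.range n, ω i)/N)) P := by
        refine Integrable.mono'
          ((integrable_const (|φ 0| + 1)).add (hSsq_int.div_const (N^2)))
          ((hφ.continuous.stronglyMeasurable.comp_measurable
            (hSmeas.div_const N)).aestronglyMeasurable) (ae_of_all _ fun ω => ?_)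
        simp only [Pi.add_apply]
        rw [Real.norm_eq_abs]
        have h6 : |φ ((∑ i ∈ Finset.range n, ω i)/N)|
            ≤ |φ 0| + |(∑ i ∈ Finset.range n, ω i)/N| := by
          have h7 := lip_abs hφ ((∑ i ∈ Finset.range n, ω i)/N) 0
          rw [sub_zero] at h7
          calc |φ ((∑ i ∈ Finset.range n, ω i)/N)|
              = |φ 0 + (φ ((∑ i ∈ Finset.range n, ω i)/N) - φ 0)| := by ring_nf
            _ ≤ |φ 0| + |φ ((∑ i ∈ Finset.range n, ω i)/N) - φ 0| := abs_add_le _ _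
            _ ≤ _ := by linarith
        have h8 : |(∑ i ∈ Finset.range n, ω i)/N|
            ≤ 1 + (∑ i ∈ Finset.range n, ω i)^2/N^2 := by
          have h9 : ((∑ i ∈ Finset.range n, ω i)/N)^2
              = (∑ i ∈ Finset.range n, ω i)^2/N^2 := by rw [div_pow]
          nlinarith [sq_nonneg (|(∑ i ∈ Finset.range n, ω i)/N| - 1),
            sq_abs ((∑ i ∈ Finset.range n, ω i)/N),
            abs_nonneg ((∑ i ∈ Finset.range n, ω i)/N)]
        linarith
      have hψSint : Integrable (fun ω => ψR (∑ i ∈ Finset.range n, ω i)) P :=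
        integrable_bl hψR_lip.continuous hψR_bd hSmeas
      have hptw : ∀ ω : ℕ → ℝ, |φ ((∑ i ∈ Finset.range n, ω i)/N)
          - ψR (∑ i ∈ Finset.range n, ω i)|
          ≤ (2/(N^2*R)) * (∑ i ∈ Finset.range n, ω i)^2 := by
        intro ω
        have h5 := hdiffpt ((∑ i ∈ Finset.range n, ω i)/N)
        have h6 : 2*((∑ i ∈ Finset.range n, ω i)/N)^2/R
            = (2/(N^2*R)) * (∑ i ∈ Finset.range n, ω i)^2 := by
          field_simp
          try ring
        rw [h6] at h5
        exact h5
      calc |(∫ ω, φ ((∑ i ∈ Finset.range n, ω i)/N) ∂P)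
            - ∫ ω, ψR (∑ i ∈ Finset.range n, ω i) ∂P|
          = |∫ ω, (φ ((∑ i ∈ Finset.range n, ω i)/N)
              - ψR (∑ i ∈ Finset.range n, ω i)) ∂P| := by
            rw [integral_sub hφSint hψSint]
        _ ≤ ∫ ω, |φ ((∑ i ∈ Finset.range n, ω i)/N)
              - ψR (∑ i ∈ Finset.range n, ω i)| ∂P := by
            have := norm_integral_le_integral_norm (μ := P)
              (f := fun ω => φ ((∑ i ∈ Finset.range n, ω i)/N)
                - ψR (∑ i ∈ Finset.range n, ω i))
            simpa [Real.norm_eq_abs] using this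
        _ ≤ ∫ ω, (2/(N^2*R)) * (∑ i ∈ Finset.range n, ω i)^2 ∂P :=
            integral_mono (hφSint.sub hψSint).abs (hSsq_int.const_mul _) hptw
        _ = (2/(N^2*R)) * ∫ ω, (∑ i ∈ Finset.range n, ω i)^2 ∂P := integral_const_mul _ _
        _ ≤ (2/(N^2*R)) * (N^2*C) :=
            mul_le_mul_of_nonneg_left hSsq_val (by positivity)
        _ = 2*C/R := by field_simp
    -- uniform integral bounds
    have hφub : ∀ Q ∈ Pset, ∫ ω, φ ((∑ i ∈ Finset.range n, ω i)/N) ∂Q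
        ≤ |φ 0| + 1 + C := by
      intro Q hQ
      haveI := hprob Q hQ
      have hSmeas : Measurable (fun ω : ℕ → ℝ => ∑ i ∈ Finset.range n, ω i) :=
        Finset.measurable_sum _ (fun i _ => measurable_pi_apply i)
      have hsum_int : Integrable (fun ω => ∑ i ∈ Finset.range n, (ω i)^2) Q :=
        integrable_finset_sum _ (fun i _ => (hcoord Q hQ i).1)
      have hptsq : ∀ ω : ℕ → ℝ, (∑ i ∈ Finset.range n, ω i)^2
          ≤ N * ∑ i ∈ Finset.range n, (ω i)^2 := by
        intro ω
        have h5 := sq_sum_le_card_mul_sum_sq (s := Finset.range n) (f := fun i => ω i)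
        rw [Finset.card_range] at h5
        rw [hNdef]
        exact h5
      have hSsq_int : Integrable (fun ω => (∑ i ∈ Finset.range n, ω i)^2) Q := by
        refine Integrable.mono' (hsum_int.const_mul N)
          ((hSmeas.pow_const 2).aestronglyMeasurable) (ae_of_all _ fun ω => ?_)
        rw [Real.norm_eq_abs, abs_of_nonneg (sq_nonneg _)]
        exact hptsq ω
      have hSsq_val : ∫ ω, (∑ i ∈ Finset.range n, ω i)^2 ∂Q ≤ N^2*C := by
        calc ∫ ω, (∑ i ∈ Finset.range n, ω i)^2 ∂Q
            ≤ ∫ ω, N * ∑ i ∈ Finset.range n, (ω i)^2 ∂Q :=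
              integral_mono hSsq_int (hsum_int.const_mul N) hptsq
          _ = N * ∑ i ∈ Finset.range n, ∫ ω, (ω i)^2 ∂Q := by
              rw [integral_const_mul, integral_finset_sum _ (fun i _ => (hcoord Q hQ i).1)]
          _ ≤ N * (N * C) := by
              refine mul_le_mul_of_nonneg_left ?_ hN0.le
              calc ∑ i ∈ Finset.range n, ∫ ω, (ω i)^2 ∂Q
                  ≤ ∑ _i ∈ Finset.range n, C :=
                    Finset.sum_le_sum (fun i _ => (hcoord Q hQ i).2)
                _ = N * C := by
                    rw [Finset.sum_const, Finset.card_range, nsmul_eq_mul, hNdef]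
          _ = N^2*C := by ring
      have hpt2 : ∀ ω : ℕ → ℝ, φ ((∑ i ∈ Finset.range n, ω i)/N)
          ≤ |φ 0| + 1 + (∑ i ∈ Finset.range n, ω i)^2/N^2 := by
        intro ω
        have h7 := lip_abs hφ ((∑ i ∈ Finset.range n, ω i)/N) 0
        rw [sub_zero] at h7
        have h9 : ((∑ i ∈ Finset.range n, ω i)/N)^2
            = (∑ i ∈ Finset.range n, ω i)^2/N^2 := by rw [div_pow]
        nlinarith [le_abs_self (φ ((∑ i ∈ Finset.range n, ω i)/N) - φ 0),
          le_abs_self (φ 0), neg_abs_le (φ 0),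
          sq_nonneg (|(∑ i ∈ Finset.range n, ω i)/N| - 1),
          sq_abs ((∑ i ∈ Finset.range n, ω i)/N),
          abs_nonneg ((∑ i ∈ Finset.range n, ω i)/N),
          le_abs_self ((∑ i ∈ Finset.range n, ω i)/N),
          neg_abs_le ((∑ i ∈ Finset.range n, ω i)/N)]
      have hφSint : Integrable (fun ω => φ ((∑ i ∈ Finset.range n, ω i)/N)) Q := by
        refine Integrable.mono'
          ((integrable_const (|φ 0| + 1)).add (hSsq_int.div_const (N^2)))
          ((hφ.continuous.stronglyMeasurable.comp_measurable
            (hSmeas.div_const N)).aestronglyMeasurable) (ae_of_all _ fun ω => ?_)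
        simp only [Pi.add_apply]
        rw [Real.norm_eq_abs]
        have h7 := lip_abs hφ ((∑ i ∈ Finset.range n, ω i)/N) 0
        rw [sub_zero] at h7
        have h9 : ((∑ i ∈ Finset.range n, ω i)/N)^2
            = (∑ i ∈ Finset.range n, ω i)^2/N^2 := by rw [div_pow]
        have h6 : |φ ((∑ i ∈ Finset.range n, ω i)/N)|
            ≤ |φ 0| + |(∑ i ∈ Finset.range n, ω i)/N| := by
          calc |φ ((∑ i ∈ Finset.range n, ω i)/N)|
              = |φ 0 + (φ ((∑ i ∈ Finset.range n, ω i)/N) - φ 0)| := by ring_nf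
            _ ≤ |φ 0| + |φ ((∑ i ∈ Finset.range n, ω i)/N) - φ 0| := abs_add_le _ _
            _ ≤ _ := by linarith
        nlinarith [sq_nonneg (|(∑ i ∈ Finset.range n, ω i)/N| - 1),
          sq_abs ((∑ i ∈ Finset.range n, ω i)/N),
          abs_nonneg ((∑ i ∈ Finset.range n, ω i)/N)]
      calc ∫ ω, φ ((∑ i ∈ Finset.range n, ω i)/N) ∂Q
          ≤ ∫ ω, (|φ 0| + 1 + (∑ i ∈ Finset.range n, ω i)^2/N^2) ∂Q :=
            integral_mono hφSint
              ((integrable_const _).add (hSsq_int.div_const _)) hpt2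
        _ = (|φ 0| + 1) + (∫ ω, (∑ i ∈ Finset.range n, ω i)^2 ∂Q)/N^2 := by
            rw [integral_add (integrable_const _) (hSsq_int.div_const _), integral_const,
              integral_div]
            simp
        _ ≤ |φ 0| + 1 + C := by
            have h10 : (∫ ω, (∑ i ∈ Finset.range n, ω i)^2 ∂Q)/N^2 ≤ C := by
              rw [div_le_iff₀ (by positivity)]
              nlinarith [hSsq_val]
            linarith
    have hψub : ∀ Q ∈ Pset, ∫ ω, ψR (∑ i ∈ Finset.range n, ω i) ∂Q ≤ R := by
      intro Q hQ
      haveI := hprob Q hQ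
      exact integral_bl_le hψR_bd
    -- SE comparison
    have hSEd1 : SE Pset (fun ω => φ ((∑ i ∈ Finset.range n, ω i)/N))
        ≤ SE Pset (fun ω => ψR (∑ i ∈ Finset.range n, ω i)) + 2*C/R := by
      refine SE_le hne fun P hP => ?_
      have h1 := htr P hP
      have h2 := le_SE (f := fun ω => ψR (∑ i ∈ Finset.range n, ω i)) hP hψub
      linarith [(abs_le.1 h1).2]
    have hSEd2 : SE Pset (fun ω => ψR (∑ i ∈ Finset.range n, ω i))
        ≤ SE Pset (fun ω => φ ((∑ i ∈ Finset.range n, ω i)/N)) + 2*C/R := by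
      refine SE_le hne fun P hP => ?_
      have h1 := htr P hP
      have h2 := le_SE (f := fun ω => φ ((∑ i ∈ Finset.range n, ω i)/N)) hP hφub
      linarith [(abs_le.1 h1).1]
    have hCR : (0:ℝ) ≤ 2*C/R := by positivity
    rw [abs_le]
    constructor
    · have := hlow2
      rw [← hSE_eq] at this
      linarith [hSEd2]
    · have := hupper_final
      rw [← hSE_eq] at this
      linarith [hSEd1]

  -- pass to the limit R → ∞
  have hlim : Filter.Tendsto (fun R : ℝ => Real.sqrt s2 / Real.sqrt N + 2*C/R)
      Filter.atTop (𝓝 (Real.sqrt s2 / Real.sqrt N + 0)) :=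
    tendsto_const_nhds.add (Filter.Tendsto.div_atTop tendsto_const_nhds Filter.tendsto_id)
  have hfin : |SE Pset (fun ω => φ ((∑ i ∈ Finset.range n, ω i) / N)) - M|
      ≤ Real.sqrt s2 / Real.sqrt N + 0 := by
    refine ge_of_tendsto hlim ?_
    filter_upwards [Filter.eventually_ge_atTop (max (max 1 (2*|φ 0|)) Rφ)] with R hR
    exact main R hR
  simpa using hfin
end

section
/- Let 𝒫 be a nonempty set of Borel probability measures on ℝ^ℕ with sublinear expectation Ê[ξ] := sup_{P∈𝒫} E_P[ξ], and let (X_i) be the coordinate random variables, assumed independent and identically distributed under Ê, with μ̄ := sup_{P∈𝒫} E_P[X_1], μ̲ := inf_{P∈𝒫} E_P[X_1], and Ê[|X_1|²] < ∞. Then for every n ≥ 1, Ê[d²_{[μ̲,μ̄]}(S_n/n)] ≤ σ̄²(X_1)/n, where d_{[μ̲,μ̄]}(x) := inf_{y∈[μ̲,μ̄]} |x − y| and σ̄²(X_1) := inf_{μ∈[μ̲,μ̄]} Ê[|X_1 − μ|²]. -/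
open MeasureTheory

/-! ### Auxiliary lemmas -/

noncomputable def clampI (a b x : ℝ) : ℝ := max a (min b x)

lemma clampI_mem {a b : ℝ} (hab : a ≤ b) (x : ℝ) : clampI a b x ∈ Set.Icc a b := by
  unfold clampI
  exact ⟨le_max_left _ _, max_le hab (min_le_left _ _)⟩

lemma sq_tdist_le {a b : ℝ} (hab : a ≤ b) {z : ℝ} (hz : z ∈ Set.Icc a b) (x : ℝ) :
    (x - clampI a b x) ^ 2 ≤ (x - z) ^ 2 := by
  obtain ⟨hz1, hz2⟩ := hz
  unfold clampI
  rcases le_total x a with h | h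
  · rw [min_eq_right (h.trans hab), max_eq_left h]; nlinarith
  · rcases le_total b x with h2 | h2
    · rw [min_eq_left h2, max_eq_right hab]; nlinarith
    · rw [min_eq_right h2, max_eq_right h]; nlinarith

lemma key_scalar {a b μ₀ m t : ℝ} (h1 : a ≤ μ₀) (h2 : μ₀ ≤ b) (h3 : a ≤ m) (h4 : m ≤ b) :
    (clampI a b (μ₀ + t) - t - m) ^ 2 ≤ (μ₀ - m) ^ 2 + t ^ 2 := by
  unfold clampI
  rcases le_total (μ₀ + t) a with h | h
  · rw [min_eq_right (h.trans (h1.trans h2)), max_eq_left h]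
    nlinarith
  · rcases le_total b (μ₀ + t) with h5 | h5
    · rw [min_eq_left h5, max_eq_right (h1.trans h2)]
      nlinarith [sq_nonneg (b - t - m - (μ₀ - m)), sq_nonneg (b - m)]
    · rw [min_eq_right h5, max_eq_right h]
      nlinarith

lemma abs_tdist_le {a b : ℝ} (hab : a ≤ b) {z : ℝ} (hz : z ∈ Set.Icc a b) (x : ℝ) :
    |x - clampI a b x| ≤ |x - z| := by
  obtain ⟨hz1, hz2⟩ := hz
  unfold clampI
  rcases le_total x a with h | h
  · rw [min_eq_right (h.trans hab), max_eq_left h]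
    rw [abs_of_nonpos (by linarith), abs_of_nonpos (by linarith)]; linarith
  · rcases le_total b x with h2 | h2
    · rw [min_eq_left h2, max_eq_right hab]
      rw [abs_of_nonneg (by linarith), abs_of_nonneg (by linarith)]; linarith
    · rw [min_eq_right h2, max_eq_right h]
      simp [abs_nonneg]

lemma infDist_Icc {a b : ℝ} (hab : a ≤ b) (x : ℝ) :
    Metric.infDist x (Set.Icc a b) = |x - clampI a b x| := by
  apply le_antisymm
  · have := Metric.infDist_le_dist_of_mem (clampI_mem hab x) (x := x)
    rwa [Real.dist_eq] at this
  · by_contra hlt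
    push_neg at hlt
    obtain ⟨y, hy, hdy⟩ := (Metric.infDist_lt_iff ⟨a, by simp [hab]⟩).1 hlt
    rw [Real.dist_eq] at hdy
    exact absurd (abs_tdist_le hab hy x) (by linarith)

lemma clampI_scale {a b : ℝ} {c : ℝ} (hc : 0 < c) (x : ℝ) :
    clampI (c * a) (c * b) (c * x) = c * clampI a b x := by
  unfold clampI
  rw [← mul_min_of_nonneg _ _ hc.le, ← mul_max_of_nonneg _ _ hc.le]

lemma clampI_lip (a b : ℝ) : LipschitzWith 1 (clampI a b) :=
  (LipschitzWith.id.const_min b).const_max a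

lemma tdist_lip (a b : ℝ) : LipschitzWith 2 (fun x : ℝ => x - clampI a b x) := by
  have h := LipschitzWith.sub LipschitzWith.id (clampI_lip a b)
  norm_num at h
  exact h

lemma abs_min_sub_min (a b c : ℝ) : |min a c - min b c| ≤ |a - b| := by
  have h1 := le_abs_self (a - b)
  have h2 := neg_abs_le (a - b)
  rcases le_total a c with h3 | h3 <;> rcases le_total b c with h4 | h4 <;>
    rw [abs_le] <;> constructor <;>
    simp only [min_eq_left, min_eq_right, h3, h4] <;> linarith

lemma minsq_eq {L : ℝ} (hL : 0 ≤ L) (r : ℝ) :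
    min (r ^ 2) L = (min |r| (Real.sqrt L)) ^ 2 := by
  rcases le_total |r| (Real.sqrt L) with h | h
  · rw [min_eq_left h, min_eq_left, sq_abs]
    calc r ^ 2 = |r| ^ 2 := (sq_abs r).symm
    _ ≤ (Real.sqrt L) ^ 2 := by nlinarith [abs_nonneg r]
    _ = L := Real.sq_sqrt hL
  · rw [min_eq_right h, min_eq_right, Real.sq_sqrt hL]
    calc L = (Real.sqrt L) ^ 2 := (Real.sq_sqrt hL).symm
    _ ≤ |r| ^ 2 := by nlinarith [Real.sqrt_nonneg L]
    _ = r ^ 2 := sq_abs r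

lemma minsq_lip {L : ℝ} (hL : 0 ≤ L) :
    LipschitzWith ((2 * Real.sqrt L).toNNReal) (fun r : ℝ => min (r ^ 2) L) := by
  rw [lipschitzWith_iff_dist_le_mul]
  intro x y
  rw [Real.dist_eq, Real.dist_eq, minsq_eq hL, minsq_eq hL]
  set mx := min |x| (Real.sqrt L) with hmx
  set my := min |y| (Real.sqrt L) with hmy
  have hx0 : 0 ≤ mx := le_min (abs_nonneg _) (Real.sqrt_nonneg _)
  have hy0 : 0 ≤ my := le_min (abs_nonneg _) (Real.sqrt_nonneg _)
  have hxL : mx ≤ Real.sqrt L := min_le_right _ _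
  have hyL : my ≤ Real.sqrt L := min_le_right _ _
  have h1 : |mx - my| ≤ |x - y| := by
    calc |mx - my| ≤ abs (|x| - |y|) := abs_min_sub_min _ _ _
    _ ≤ |x - y| := abs_abs_sub_abs_le_abs_sub x y
  have h2 : |mx + my| ≤ 2 * Real.sqrt L := by
    rw [abs_of_nonneg (by linarith)]; linarith
  have hcoe : ((2 * Real.sqrt L).toNNReal : ℝ) = 2 * Real.sqrt L :=
    Real.coe_toNNReal _ (by positivity)
  calc |mx ^ 2 - my ^ 2| = |mx + my| * |mx - my| := by
        rw [← abs_mul]; ring_nf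
  _ ≤ (2 * Real.sqrt L) * |x - y| := by
        apply mul_le_mul h2 h1 (abs_nonneg _) (by positivity)
  _ = ((2 * Real.sqrt L).toNNReal : ℝ) * |x - y| := by rw [hcoe]

lemma sum_lip (m : ℕ) : LipschitzWith m (fun x : Fin m → ℝ => ∑ i, x i) := by
  rw [lipschitzWith_iff_dist_le_mul]
  intro x y
  rw [Real.dist_eq, ← Finset.sum_sub_distrib]
  calc |∑ i, (x i - y i)| ≤ ∑ i, |x i - y i| := Finset.abs_sum_le_sum_abs _ _
  _ ≤ ∑ _i : Fin m, dist x y := by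
      apply Finset.sum_le_sum
      intro i _
      rw [← Real.dist_eq]
      exact dist_le_pi_dist x y i
  _ = m * dist x y := by simp [mul_comm]

lemma minsq_nonneg {L r : ℝ} (hL : 0 ≤ L) : 0 ≤ min (r ^ 2) L :=
  le_min (sq_nonneg r) hL

lemma minsq_abs_le {L r : ℝ} (hL : 0 ≤ L) : |min (r ^ 2) L| ≤ L := by
  rw [abs_of_nonneg (minsq_nonneg hL)]
  exact min_le_right _ _

/-! ### Integration helpers -/

lemma integrable_of_bounded {α : Type*} [MeasurableSpace α] {f : α → ℝ} (hm : Measurable f)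
    {C : ℝ} (hC : ∀ ω, |f ω| ≤ C) (P : Measure α) [IsProbabilityMeasure P] :
    Integrable f P := by
  apply Integrable.mono' (integrable_const C) hm.aestronglyMeasurable
  filter_upwards with ω
  simpa [Real.norm_eq_abs] using hC ω

lemma integrable_coord {P : Measure (ℕ → ℝ)} [IsProbabilityMeasure P]
    (hx2 : Integrable (fun ω : ℕ → ℝ => |ω 0| ^ 2) P) :
    Integrable (fun ω : ℕ → ℝ => ω 0) P := by
  apply Integrable.mono' ((hx2.add (integrable_const 1)).div_const 2)
    (measurable_pi_apply 0).aestronglyMeasurable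
  filter_upwards with ω
  simp only [Pi.add_apply, Real.norm_eq_abs]
  nlinarith [sq_nonneg (|ω 0| - 1), abs_nonneg (ω 0)]

lemma integrable_sq_coord {P : Measure (ℕ → ℝ)} [IsProbabilityMeasure P]
    (hx2 : Integrable (fun ω : ℕ → ℝ => |ω 0| ^ 2) P) :
    Integrable (fun ω : ℕ → ℝ => (ω 0) ^ 2) P := by
  simpa [sq_abs] using hx2

lemma integral_shift_sq {P : Measure (ℕ → ℝ)} [IsProbabilityMeasure P]
    (hx2 : Integrable (fun ω : ℕ → ℝ => |ω 0| ^ 2) P) (θ : ℝ) :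
    ∫ ω, (ω 0 - θ) ^ 2 ∂P
      = ∫ ω, (ω 0) ^ 2 ∂P - 2 * θ * ∫ ω, ω 0 ∂P + θ ^ 2 := by
  have h2 := integrable_sq_coord hx2
  have h1 := integrable_coord hx2
  have h : (fun ω : ℕ → ℝ => (ω 0 - θ) ^ 2)
      = fun ω : ℕ → ℝ => (ω 0) ^ 2 - 2 * θ * ω 0 + θ ^ 2 := by
    funext ω; ring
  have hsub : Integrable (fun ω : ℕ → ℝ => (ω 0) ^ 2 - 2 * θ * ω 0) P :=
    h2.sub (h1.const_mul (2 * θ))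
  rw [h, integral_add hsub (integrable_const _),
    integral_sub h2 (h1.const_mul _), integral_const, integral_const_mul]
  simp

lemma integrable_shift_sq {P : Measure (ℕ → ℝ)} [IsProbabilityMeasure P]
    (hx2 : Integrable (fun ω : ℕ → ℝ => |ω 0| ^ 2) P) (θ : ℝ) :
    Integrable (fun ω : ℕ → ℝ => (ω 0 - θ) ^ 2) P := by
  have h : (fun ω : ℕ → ℝ => (ω 0 - θ) ^ 2)
      = fun ω : ℕ → ℝ => ((ω 0) ^ 2 - 2 * θ * ω 0) + θ ^ 2 := by
    funext ω; ring
  rw [h]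
  exact ((integrable_sq_coord hx2).sub ((integrable_coord hx2).const_mul (2 * θ))).add
    (integrable_const _)

/-- Monotone-convergence style bound: if all truncations of a nonnegative function have
integral at most `c`, then so does the function itself. -/
lemma integral_le_of_forall_min_le {α : Type*} [MeasurableSpace α] {P : Measure α}
    [IsProbabilityMeasure P] {g : α → ℝ} (hg : Measurable g) (hg0 : ∀ x, 0 ≤ g x)
    {c : ℝ} (hc : 0 ≤ c) (h : ∀ j : ℕ, ∫ x, min (g x) j ∂P ≤ c) :
    ∫ x, g x ∂P ≤ c := by
  rw [integral_eq_lintegral_of_nonneg_ae (ae_of_all _ hg0) hg.aestronglyMeasurable]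
  have hptwise : ∀ x, (⨆ j : ℕ, ENNReal.ofReal (min (g x) j)) = ENNReal.ofReal (g x) := by
    intro x
    apply le_antisymm
    · exact iSup_le fun j => ENNReal.ofReal_le_ofReal (min_le_left _ _)
    · refine le_iSup_of_le ⌈g x⌉₊ ?_
      rw [min_eq_left (Nat.le_ceil (g x))]
  have hmeas : ∀ j : ℕ, Measurable fun x => ENNReal.ofReal (min (g x) j) :=
    fun j => ENNReal.measurable_ofReal.comp (hg.min measurable_const)
  have hmono : Monotone fun (j : ℕ) (x : α) => ENNReal.ofReal (min (g x) j) := by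
    intro i j hij
    intro x
    exact ENNReal.ofReal_le_ofReal (min_le_min le_rfl (by exact_mod_cast Nat.cast_le.2 hij))
  have key : ∫⁻ x, ENNReal.ofReal (g x) ∂P ≤ ENNReal.ofReal c := by
    have : ∫⁻ x, ENNReal.ofReal (g x) ∂P = ⨆ j : ℕ, ∫⁻ x, ENNReal.ofReal (min (g x) j) ∂P := by
      rw [← lintegral_iSup hmeas hmono]
      congr 1
      funext x
      exact (hptwise x).symm
    rw [this]
    apply iSup_le
    intro j
    have hint : Integrable (fun x => min (g x) j) P := by
      apply integrable_of_bounded (hg.min measurable_const)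
        (C := max (j : ℝ) 0) _ P
      intro ω
      rw [abs_of_nonneg (le_min (hg0 ω) (by positivity))]
      exact le_max_of_le_left (min_le_right _ _)
    rw [← ofReal_integral_eq_lintegral_ofReal hint
      (ae_of_all _ fun x => le_min (hg0 x) (by positivity))]
    exact ENNReal.ofReal_le_ofReal (h j)
  calc (∫⁻ x, ENNReal.ofReal (g x) ∂P).toReal
      ≤ (ENNReal.ofReal c).toReal := ENNReal.toReal_mono ENNReal.ofReal_ne_top key
  _ = c := ENNReal.toReal_ofReal hc

/-! ### SE helpers -/

lemma SE_le_of_forall_int {Pset : Set (Measure (ℕ → ℝ))} (hne : Pset.Nonempty)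
    {f : (ℕ → ℝ) → ℝ} {c : ℝ} (h : ∀ P ∈ Pset, ∫ ω, f ω ∂P ≤ c) : SE Pset f ≤ c := by
  have : Nonempty Pset := hne.to_subtype
  exact ciSup_le fun P => h P P.2

lemma int_le_SE {Pset : Set (Measure (ℕ → ℝ))} {f : (ℕ → ℝ) → ℝ} {c : ℝ}
    {P : Measure (ℕ → ℝ)} (hP : P ∈ Pset) (h : ∀ Q ∈ Pset, ∫ ω, f ω ∂Q ≤ c) :
    ∫ ω, f ω ∂P ≤ SE Pset f := by
  exact le_ciSup (f := fun Q : Pset => ∫ ω, f ω ∂(Q : Measure (ℕ → ℝ)))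
    ⟨c, by rintro x ⟨Q, rfl⟩; exact h Q Q.2⟩ ⟨P, hP⟩


lemma clampI_cont (a b : ℝ) : Continuous (clampI a b) := by
  unfold clampI; fun_prop

lemma integrable_min_sq {P : Measure (ℕ → ℝ)} [IsProbabilityMeasure P] {r : (ℕ → ℝ) → ℝ}
    (hr : Measurable r) {L : ℝ} (hL : 0 ≤ L) :
    Integrable (fun ω => min ((r ω) ^ 2) L) P :=
  integrable_of_bounded ((hr.pow_const 2).min measurable_const)
    (fun _ => minsq_abs_le hL) P

lemma integral_min_sq_le {P : Measure (ℕ → ℝ)} [IsProbabilityMeasure P] {r : (ℕ → ℝ) → ℝ}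
    (hr : Measurable r) {L : ℝ} (hL : 0 ≤ L) :
    ∫ ω, min ((r ω) ^ 2) L ∂P ≤ L := by
  calc ∫ ω, min ((r ω) ^ 2) L ∂P ≤ ∫ _ω, L ∂P :=
        integral_mono (integrable_min_sq hr hL) (integrable_const L)
          (fun ω => min_le_right _ _)
  _ = L := by simp

lemma measurable_sum_range (k : ℕ) :
    Measurable (fun ω : ℕ → ℝ => ∑ i ∈ Finset.range k, ω i) :=
  Finset.measurable_sum _ (fun i _ => measurable_pi_apply i)

lemma measurable_tdist_sum (A B : ℝ) (k : ℕ) :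
    Measurable (fun ω : ℕ → ℝ =>
      ∑ i ∈ Finset.range k, ω i - clampI A B (∑ i ∈ Finset.range k, ω i)) :=
  (measurable_sum_range k).sub ((clampI_cont A B).measurable.comp (measurable_sum_range k))

/-- Law of large numbers with rate of convergence for the squared distance
to the interval `[μ̲, μ̄]` (improvement of Fang et al.). -/
theorem peng_lln_dist_sq_rate
    (Pset : Set (Measure (ℕ → ℝ))) (hne : Pset.Nonempty)
    (hprob : ∀ P ∈ Pset, IsProbabilityMeasure P)
    (hindep : IndepCoords Pset) (hid : IdentDistCoords Pset)
    (hint : ∀ P ∈ Pset, Integrable (fun ω : ℕ → ℝ => |ω 0| ^ 2) P)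
    (hmom : BddAbove ((fun P : Measure (ℕ → ℝ) => ∫ ω, |ω 0| ^ 2 ∂P) '' Pset))
    (μbar μlow : ℝ)
    (hμbar : (⨆ P : Pset, ∫ ω, ω 0 ∂(P : Measure (ℕ → ℝ))) = μbar)
    (hμlow : (⨅ P : Pset, ∫ ω, ω 0 ∂(P : Measure (ℕ → ℝ))) = μlow)
    (n : ℕ) (hn : 1 ≤ n) :
    SE Pset (fun ω =>
        (Metric.infDist ((∑ i ∈ Finset.range n, ω i) / n) (Set.Icc μlow μbar)) ^ 2) ≤
      sInf ((fun μ : ℝ => SE Pset (fun ω => |ω 0 - μ| ^ 2)) '' Set.Icc μlow μbar) / n := by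
  classical
  obtain ⟨P₀, hP₀⟩ := hne
  obtain ⟨M, hM⟩ := hmom
  have hM' : ∀ P ∈ Pset, ∫ ω, |ω 0| ^ 2 ∂P ≤ M := fun P hP => hM ⟨P, hP, rfl⟩
  have habs_mean : ∀ P ∈ Pset, |∫ ω, ω 0 ∂P| ≤ (M + 1) / 2 := by
    intro P hP
    haveI := hprob P hP
    have h1 : |∫ ω, ω 0 ∂P| ≤ ∫ ω, |ω 0| ∂P := by
      simpa [Real.norm_eq_abs] using
        norm_integral_le_integral_norm (μ := P) (fun ω : ℕ → ℝ => ω 0)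
    have h2 : ∫ ω, |ω 0| ∂P ≤ ∫ ω, (|ω 0| ^ 2 + 1) / 2 ∂P := by
      apply integral_mono (integrable_coord (hint P hP)).abs
        (((hint P hP).add (integrable_const 1)).div_const 2)
      intro ω
      simp only [Pi.add_apply]
      nlinarith [sq_nonneg (|ω 0| - 1)]
    have h3 : ∫ ω, (|ω 0| ^ 2 + 1) / 2 ∂P = ((∫ ω, |ω 0| ^ 2 ∂P) + 1) / 2 := by
      rw [integral_div, integral_add (hint P hP) (integrable_const 1), integral_const]
      simp
    have := hM' P hP
    calc |∫ ω, ω 0 ∂P| ≤ ((∫ ω, |ω 0| ^ 2 ∂P) + 1) / 2 := by linarith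
    _ ≤ (M + 1) / 2 := by linarith
  have hmem_mean : ∀ P ∈ Pset, (∫ ω, ω 0 ∂P) ∈ Set.Icc μlow μbar := by
    intro P hP
    constructor
    · rw [← hμlow]
      apply ciInf_le (f := fun Q : Pset => ∫ ω, ω 0 ∂(Q : Measure (ℕ → ℝ)))
        _ (⟨P, hP⟩ : Pset)
      refine ⟨-((M + 1) / 2), ?_⟩
      rintro x ⟨Q, rfl⟩
      have := habs_mean Q Q.2
      have := neg_abs_le (∫ ω, ω 0 ∂(Q : Measure (ℕ → ℝ)))
      dsimp only
      linarith
    · rw [← hμbar]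
      apply le_ciSup (f := fun Q : Pset => ∫ ω, ω 0 ∂(Q : Measure (ℕ → ℝ)))
        _ (⟨P, hP⟩ : Pset)
      refine ⟨(M + 1) / 2, ?_⟩
      rintro x ⟨Q, rfl⟩
      have := habs_mean Q Q.2
      have := le_abs_self (∫ ω, ω 0 ∂(Q : Measure (ℕ → ℝ)))
      dsimp only
      linarith
  have hab : μlow ≤ μbar := le_trans (hmem_mean P₀ hP₀).1 (hmem_mean P₀ hP₀).2
  have hn0 : (0 : ℝ) < n := by
    have : (0 : ℕ) < n := hn
    exact_mod_cast this
  have mainbound : ∀ μ₀ ∈ Set.Icc μlow μbar,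
      SE Pset (fun ω =>
        (Metric.infDist ((∑ i ∈ Finset.range n, ω i) / n) (Set.Icc μlow μbar)) ^ 2)
        ≤ (SE Pset (fun ω => |ω 0 - μ₀| ^ 2)) / n := by
    intro μ₀ hμ₀
    set V := SE Pset (fun ω => |ω 0 - μ₀| ^ 2) with hVdef
    have hVint : ∀ P ∈ Pset, ∫ ω, |ω 0 - μ₀| ^ 2 ∂P = ∫ ω, (ω 0 - μ₀) ^ 2 ∂P := by
      intro P hP
      simp only [sq_abs]
    have hVbd : ∀ Q ∈ Pset, ∫ ω, |ω 0 - μ₀| ^ 2 ∂Q ≤ M + 2 * |μ₀| * ((M + 1) / 2) + μ₀ ^ 2 := by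
      intro Q hQ
      haveI := hprob Q hQ
      rw [hVint Q hQ, integral_shift_sq (hint Q hQ)]
      have h1 : ∫ ω, (ω 0) ^ 2 ∂Q ≤ M := by
        have := hM' Q hQ
        simpa [sq_abs] using this
      have h2 := habs_mean Q hQ
      have h3 : -(2 * μ₀ * ∫ ω, ω 0 ∂Q) ≤ 2 * |μ₀| * ((M + 1) / 2) := by
        have habs : |2 * μ₀ * ∫ ω, ω 0 ∂Q| ≤ 2 * |μ₀| * ((M + 1) / 2) := by
          rw [abs_mul, abs_mul, abs_two]
          have := abs_nonneg μ₀
          nlinarith [abs_nonneg (∫ ω, ω 0 ∂Q)]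
        linarith [neg_abs_le (2 * μ₀ * ∫ ω, ω 0 ∂Q)]
      linarith
    have hVle : ∀ P ∈ Pset, ∫ ω, (ω 0 - μ₀) ^ 2 ∂P ≤ V := by
      intro P hP
      rw [← hVint P hP]
      exact int_le_SE hP hVbd
    have hV0 : 0 ≤ V := by
      haveI := hprob P₀ hP₀
      refine le_trans ?_ (int_le_SE hP₀ hVbd)
      exact integral_nonneg fun ω => by positivity
    -- Key one-dimensional estimate
    have keyB : ∀ t : ℝ, ∀ P ∈ Pset,
        ∫ ω, (t + ω 0 - clampI μlow μbar (μ₀ + t)) ^ 2 ∂P ≤ t ^ 2 + V := by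
      intro t P hP
      haveI := hprob P hP
      have hfun : (fun ω : ℕ → ℝ => (t + ω 0 - clampI μlow μbar (μ₀ + t)) ^ 2)
          = fun ω => (ω 0 - (clampI μlow μbar (μ₀ + t) - t)) ^ 2 := by
        funext ω; ring
      rw [hfun, integral_shift_sq (hint P hP)]
      have hks := key_scalar (m := ∫ ω, ω 0 ∂P) (t := t) hμ₀.1 hμ₀.2
        (hmem_mean P hP).1 (hmem_mean P hP).2
      have hv := hVle P hP
      rw [integral_shift_sq (hint P hP)] at hv
      nlinarith [hks, hv]
    -- Induction on the number of coordinates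
    have main : ∀ k : ℕ, 1 ≤ k → ∀ L : ℝ, 0 ≤ L →
        SE Pset (fun ω => min ((∑ i ∈ Finset.range k, ω i
          - clampI ((k : ℝ) * μlow) ((k : ℝ) * μbar)
            (∑ i ∈ Finset.range k, ω i)) ^ 2) L) ≤ k * V := by
      intro k
      induction k with
      | zero => intro h; exact absurd h (by omega)
      | succ k ih =>
        intro _ L hL
        by_cases hk : 1 ≤ k
        · -- inductive step
          set Ak := (k : ℝ) * μlow with hAk
          set Bk := (k : ℝ) * μbar with hBk
          set A1 := ((k + 1 : ℕ) : ℝ) * μlow with hA1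
          set B1 := ((k + 1 : ℕ) : ℝ) * μbar with hB1
          have hkr : (0 : ℝ) ≤ (k : ℝ) := Nat.cast_nonneg k
          have hA1B1 : A1 ≤ B1 := by
            rw [hA1, hB1]
            exact mul_le_mul_of_nonneg_left hab (Nat.cast_nonneg _)
          have hAkBk : Ak ≤ Bk := by
            rw [hAk, hBk]
            exact mul_le_mul_of_nonneg_left hab hkr
          have hA1eq : A1 = Ak + μlow := by rw [hA1, hAk]; push_cast; ring
          have hB1eq : B1 = Bk + μbar := by rw [hB1, hBk]; push_cast; ring
          have hφ : BLip (fun x : Fin (k + 1) → ℝ =>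
              min ((∑ i, x i - clampI A1 B1 (∑ i, x i)) ^ 2) L) :=
            ⟨⟨_, (minsq_lip hL).comp ((tdist_lip A1 B1).comp (sum_lip (k + 1)))⟩,
              L, fun x => minsq_abs_le hL⟩
          have hinner : ∀ ω : ℕ → ℝ, SE Pset (fun ω' =>
              min (((∑ i ∈ Finset.range k, ω i) + ω' k
                - clampI A1 B1 ((∑ i ∈ Finset.range k, ω i) + ω' k)) ^ 2) L)
              ≤ min ((∑ i ∈ Finset.range k, ω i
                - clampI Ak Bk (∑ i ∈ Finset.range k, ω i)) ^ 2) L + V := by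
            intro ω
            set s := ∑ i ∈ Finset.range k, ω i with hs
            set t := s - clampI Ak Bk s with htdef
            set μt := clampI μlow μbar (μ₀ + t) with hμtdef
            have hμtmem : μt ∈ Set.Icc μlow μbar := clampI_mem hab _
            have hclmem : clampI Ak Bk s ∈ Set.Icc Ak Bk := clampI_mem hAkBk s
            have hzmem : clampI Ak Bk s + μt ∈ Set.Icc A1 B1 := by
              constructor
              · rw [hA1eq]; exact add_le_add hclmem.1 hμtmem.1
              · rw [hB1eq]; exact add_le_add hclmem.2 hμtmem.2
            have hpt : ∀ y : ℝ, min ((s + y - clampI A1 B1 (s + y)) ^ 2) L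
                ≤ min ((t + y - μt) ^ 2) L := by
              intro y
              apply min_le_min _ le_rfl
              calc (s + y - clampI A1 B1 (s + y)) ^ 2
                  ≤ (s + y - (clampI Ak Bk s + μt)) ^ 2 := sq_tdist_le hA1B1 hzmem (s + y)
              _ = (t + y - μt) ^ 2 := by rw [htdef]; ring
            have hmeas1 : Measurable (fun ω' : ℕ → ℝ => s + ω' k - clampI A1 B1 (s + ω' k)) := by
              have h0 : Measurable (fun ω' : ℕ → ℝ => s + ω' k) := by
                fun_prop
              exact h0.sub ((clampI_cont A1 B1).measurable.comp h0)
            have hmeas2 : Measurable (fun ω' : ℕ → ℝ => t + ω' k - μt) := by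
              fun_prop
            have h1 : SE Pset (fun ω' => min ((s + ω' k - clampI A1 B1 (s + ω' k)) ^ 2) L)
                ≤ SE Pset (fun ω' => min ((t + ω' k - μt) ^ 2) L) := by
              apply SE_le_of_forall_int ⟨P₀, hP₀⟩
              intro P hP
              haveI := hprob P hP
              refine le_trans (integral_mono (integrable_min_sq hmeas1 hL)
                (integrable_min_sq hmeas2 hL) (fun ω' => hpt (ω' k)))
                (int_le_SE (c := L) hP ?_)
              intro Q hQ
              haveI := hprob Q hQ
              exact integral_min_sq_le hmeas2 hL
            have hψ : BLip (fun y : ℝ => min ((t + y - μt) ^ 2) L) := by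
              have hlin : LipschitzWith 1 (fun y : ℝ => t + y - μt) := by
                rw [lipschitzWith_iff_dist_le_mul]
                intro x y
                rw [Real.dist_eq, Real.dist_eq]
                have he : t + x - μt - (t + y - μt) = x - y := by ring
                rw [he, NNReal.coe_one, one_mul]
              exact ⟨⟨_, (minsq_lip hL).comp hlin⟩, L, fun y => minsq_abs_le hL⟩
            have h2 := hid k (fun y : ℝ => min ((t + y - μt) ^ 2) L) hψ
            have h3 : SE Pset (fun ω' => min ((t + ω' 0 - μt) ^ 2) L) ≤ min (t ^ 2 + V) L := by
              apply SE_le_of_forall_int ⟨P₀, hP₀⟩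
              intro P hP
              haveI := hprob P hP
              apply le_min
              · have hmeas0 : Measurable (fun ω' : ℕ → ℝ => t + ω' 0 - μt) := by
                  fun_prop
                have hint2 : Integrable (fun ω' : ℕ → ℝ => (t + ω' 0 - μt) ^ 2) P := by
                  have he : (fun ω' : ℕ → ℝ => (t + ω' 0 - μt) ^ 2)
                      = fun ω' => (ω' 0 - (μt - t)) ^ 2 := by funext ω'; ring
                  rw [he]
                  exact integrable_shift_sq (hint P hP) _
                refine le_trans (integral_mono (integrable_min_sq hmeas0 hL) hint2
                  (fun ω' => min_le_left _ _)) ?_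
                rw [hμtdef]
                exact keyB t P hP
              · exact integral_min_sq_le (P := P) (r := fun ω' : ℕ → ℝ => t + ω' 0 - μt)
                  (by fun_prop) hL
            have h4 : min (t ^ 2 + V) L ≤ min (t ^ 2) L + V := by
              rcases le_total (t ^ 2) L with h | h <;>
                rcases le_total (t ^ 2 + V) L with h' | h' <;>
                simp only [min_eq_left, min_eq_right, h, h'] <;> linarith
            calc SE Pset (fun ω' => min ((s + ω' k - clampI A1 B1 (s + ω' k)) ^ 2) L)
                ≤ SE Pset (fun ω' => min ((t + ω' k - μt) ^ 2) L) := h1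
            _ = SE Pset (fun ω' => min ((t + ω' 0 - μt) ^ 2) L) := h2
            _ ≤ min (t ^ 2 + V) L := h3
            _ ≤ min (t ^ 2) L + V := h4
          calc SE Pset (fun ω => min ((∑ i ∈ Finset.range (k + 1), ω i
                - clampI A1 B1 (∑ i ∈ Finset.range (k + 1), ω i)) ^ 2) L)
              = SE Pset (fun ω => (fun x : Fin (k + 1) → ℝ =>
                  min ((∑ i, x i - clampI A1 B1 (∑ i, x i)) ^ 2) L) (fun i => ω (i : ℕ))) := by
                congr 1
                funext ω
                simp only [Fin.sum_univ_eq_sum_range]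
          _ = SE Pset (fun ω => SE Pset (fun ω' => (fun x : Fin (k + 1) → ℝ =>
                  min ((∑ i, x i - clampI A1 B1 (∑ i, x i)) ^ 2) L)
                  (Fin.snoc (fun i : Fin k => ω (i : ℕ)) (ω' k)))) := hindep k hk _ hφ
          _ = SE Pset (fun ω => SE Pset (fun ω' =>
                  min (((∑ i ∈ Finset.range k, ω i) + ω' k
                    - clampI A1 B1 ((∑ i ∈ Finset.range k, ω i) + ω' k)) ^ 2) L)) := by
                congr 1
                funext ω
                congr 1
                funext ω'
                simp only [Fin.sum_univ_castSucc, Fin.snoc_castSucc, Fin.snoc_last,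
                  Fin.sum_univ_eq_sum_range]
          _ ≤ ((k + 1 : ℕ) : ℝ) * V := by
                apply SE_le_of_forall_int ⟨P₀, hP₀⟩
                intro P hP
                haveI := hprob P hP
                have hmeasK := measurable_tdist_sum Ak Bk k
                have hfinal : ∫ ω, SE Pset (fun ω' =>
                    min (((∑ i ∈ Finset.range k, ω i) + ω' k
                      - clampI A1 B1 ((∑ i ∈ Finset.range k, ω i) + ω' k)) ^ 2) L) ∂P
                    ≤ ∫ ω, (min ((∑ i ∈ Finset.range k, ω i
                      - clampI Ak Bk (∑ i ∈ Finset.range k, ω i)) ^ 2) L + V) ∂P := by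
                  by_cases hI : Integrable (fun ω : ℕ → ℝ => SE Pset (fun ω' =>
                      min (((∑ i ∈ Finset.range k, ω i) + ω' k
                        - clampI A1 B1 ((∑ i ∈ Finset.range k, ω i) + ω' k)) ^ 2) L)) P
                  · exact integral_mono hI
                      ((integrable_min_sq hmeasK hL).add (integrable_const V))
                      (fun ω => hinner ω)
                  · rw [integral_undef hI]
                    apply integral_nonneg
                    intro ω
                    exact add_nonneg (minsq_nonneg hL) hV0
                refine le_trans hfinal ?_
                rw [integral_add (integrable_min_sq hmeasK hL) (integrable_const V),
                  integral_const]
                simp only [probReal_univ, smul_eq_mul, one_mul]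
                have hik : ∫ ω, min ((∑ i ∈ Finset.range k, ω i
                    - clampI Ak Bk (∑ i ∈ Finset.range k, ω i)) ^ 2) L ∂P ≤ k * V := by
                  refine le_trans (int_le_SE (c := L) hP ?_) (ih hk L hL)
                  intro Q hQ
                  haveI := hprob Q hQ
                  exact integral_min_sq_le (measurable_tdist_sum Ak Bk k) hL
                push_cast
                linarith
        · -- base case : k = 0
          have hk0 : k = 0 := by omega
          subst hk0
          simp only [zero_add, Nat.cast_one, one_mul, Finset.sum_range_one]
          apply SE_le_of_forall_int ⟨P₀, hP₀⟩
          intro P hP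
          haveI := hprob P hP
          have hmeas : Measurable (fun ω : ℕ → ℝ => ω 0 - clampI μlow μbar (ω 0)) :=
            (measurable_pi_apply 0).sub
              ((clampI_cont μlow μbar).measurable.comp (measurable_pi_apply 0))
          have hptw : ∀ ω : ℕ → ℝ, min ((ω 0 - clampI μlow μbar (ω 0)) ^ 2) L
              ≤ (ω 0 - μ₀) ^ 2 :=
            fun ω => le_trans (min_le_left _ _) (sq_tdist_le hab hμ₀ (ω 0))
          calc ∫ ω, min ((ω 0 - clampI μlow μbar (ω 0)) ^ 2) L ∂P
              ≤ ∫ ω, (ω 0 - μ₀) ^ 2 ∂P := integral_mono (integrable_min_sq hmeas hL)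
                (integrable_shift_sq (hint P hP) μ₀) hptw
          _ ≤ V := hVle P hP

    -- Conclusion for the fixed μ₀
    apply SE_le_of_forall_int ⟨P₀, hP₀⟩
    intro P hP
    haveI := hprob P hP
    have hrw : (fun ω : ℕ → ℝ =>
        (Metric.infDist ((∑ i ∈ Finset.range n, ω i) / n) (Set.Icc μlow μbar)) ^ 2)
        = fun ω => ((∑ i ∈ Finset.range n, ω i
            - clampI ((n : ℝ) * μlow) ((n : ℝ) * μbar)
              (∑ i ∈ Finset.range n, ω i)) ^ 2) / (n : ℝ) ^ 2 := by
      funext ω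
      set s := ∑ i ∈ Finset.range n, ω i
      rw [infDist_Icc hab, sq_abs]
      have hscale := clampI_scale (a := μlow) (b := μbar) hn0 (s / n)
      rw [mul_div_cancel₀ _ (ne_of_gt hn0)] at hscale
      rw [hscale]
      field_simp
    rw [hrw, integral_div]
    have hbound : ∫ ω, (∑ i ∈ Finset.range n, ω i
        - clampI ((n : ℝ) * μlow) ((n : ℝ) * μbar) (∑ i ∈ Finset.range n, ω i)) ^ 2 ∂P
        ≤ n * V := by
      apply integral_le_of_forall_min_le
        ((measurable_tdist_sum _ _ n).pow_const 2)
        (fun ω => sq_nonneg _) (by positivity)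
      intro j
      have hj0 : (0 : ℝ) ≤ (j : ℝ) := Nat.cast_nonneg j
      refine le_trans (int_le_SE (c := (j : ℝ)) hP ?_) (main n hn (j : ℝ) hj0)
      intro Q hQ
      haveI := hprob Q hQ
      exact integral_min_sq_le (measurable_tdist_sum _ _ n) hj0
    calc (∫ ω, (∑ i ∈ Finset.range n, ω i
        - clampI ((n : ℝ) * μlow) ((n : ℝ) * μbar)
          (∑ i ∈ Finset.range n, ω i)) ^ 2 ∂P) / (n : ℝ) ^ 2
        ≤ (n * V) / (n : ℝ) ^ 2 := by gcongr
    _ = V / n := by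
        field_simp

  rw [le_div_iff₀ hn0]
  apply le_csInf
  · exact ⟨_, Set.mem_image_of_mem _ (⟨le_refl μlow, hab⟩ : μlow ∈ Set.Icc μlow μbar)⟩
  · rintro v ⟨μ₀, hμ₀, rfl⟩
    rw [← le_div_iff₀ hn0]
    exact mainbound μ₀ hμ₀
end

section
/- (Chatterji's inequality.) Let (Ω, F, P) be a probability space with a filtration F_0 ⊆ F_1 ⊆ ⋯ ⊆ F_n, and let d_1,…,d_n be a martingale-difference sequence: each d_j is F_j-measurable, integrable, and E[d_j | F_{j−1}] = 0 almost surely. Let p ∈ [1,2] and assume E[|d_j|^p] < ∞ for all j ≤ n. Then E[|d_1 + ⋯ + d_n|^p] ≤ 2^{2−p} · Σ_{j=1}^n E[|d_j|^p]. -/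
open Real MeasureTheory NNReal

noncomputable def sgnp (p x : ℝ) : ℝ := x * |x| ^ (p - 2)

lemma sgnp_nonneg_eq {p x : ℝ} (hp : p ≠ 1) (hx : 0 ≤ x) : sgnp p x = x ^ (p - 1) := by
  rcases eq_or_lt_of_le hx with h | h
  · simp [sgnp, ← h, Real.zero_rpow (show p - 1 ≠ 0 by intro h; apply hp; linarith)]
  · rw [sgnp, abs_of_pos h, show p - 2 = (p-1) + (-1) by ring, Real.rpow_add h,
      Real.rpow_neg_one]
    field_simp

lemma sgnp_neg (p x : ℝ) : sgnp p (-x) = - sgnp p x := by simp [sgnp]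

lemma abs_sgnp_le {p x : ℝ} (hp : 1 ≤ p) : |sgnp p x| ≤ |x| ^ (p - 1) := by
  rcases eq_or_ne x 0 with rfl | hx
  · simp only [sgnp, zero_mul, abs_zero]
    positivity
  · rw [sgnp, abs_mul, abs_of_nonneg (Real.rpow_nonneg (abs_nonneg x) _),
      show p - 1 = 1 + (p - 2) by ring, Real.rpow_add (abs_pos.2 hx), Real.rpow_one]

lemma rpow_subadd {a b q : ℝ} (ha : 0 ≤ a) (hb : 0 ≤ b) (h0 : 0 ≤ q) (h1 : q ≤ 1) :
    (a + b) ^ q ≤ a ^ q + b ^ q := by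
  have h := NNReal.coe_le_coe.2 (NNReal.rpow_add_le_add_rpow ⟨a, ha⟩ ⟨b, hb⟩ h0 h1)
  push_cast at h
  exact h

lemma nn_conc {q : ℝ} (h0 : 0 < q) (h1 : q ≤ 1) (a b : ℝ≥0) :
    a ^ q + b ^ q ≤ 2 ^ (1 - q) * (a + b) ^ q := by
  have hq : 1 ≤ 1 / q := by rw [le_div_iff₀ h0]; linarith
  have h := NNReal.rpow_add_le_mul_rpow_add_rpow (a ^ q) (b ^ q) hq
  have ha : (a ^ q) ^ (1/q) = a := by
    rw [← NNReal.rpow_mul, mul_one_div_cancel h0.ne', NNReal.rpow_one]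
  have hb : (b ^ q) ^ (1/q) = b := by
    rw [← NNReal.rpow_mul, mul_one_div_cancel h0.ne', NNReal.rpow_one]
  rw [ha, hb] at h
  have h2 := NNReal.rpow_le_rpow h h0.le
  rwa [← NNReal.rpow_mul, one_div_mul_cancel h0.ne', NNReal.rpow_one,
    NNReal.mul_rpow, ← NNReal.rpow_mul,
    show (1/q - 1) * q = 1 - q by field_simp] at h2

lemma rpow_conc {a b q : ℝ} (ha : 0 ≤ a) (hb : 0 ≤ b) (h0 : 0 < q) (h1 : q ≤ 1) :
    a ^ q + b ^ q ≤ 2 ^ (1 - q) * (a + b) ^ q := by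
  have h := NNReal.coe_le_coe.2 (nn_conc h0 h1 ⟨a, ha⟩ ⟨b, hb⟩)
  push_cast at h
  exact h

lemma one_le_two_rpow {r : ℝ} (hr : 0 ≤ r) : (1:ℝ) ≤ 2 ^ r := by
  calc (1:ℝ) = 2 ^ (0:ℝ) := by simp
  _ ≤ 2 ^ r := Real.rpow_le_rpow_of_exponent_le one_le_two hr

lemma sgnp_holder_aux {p x y : ℝ} (hp1 : 1 < p) (hp2 : p ≤ 2) (hy : 0 ≤ y) (hxy : y ≤ x) :
    |sgnp p x - sgnp p y| ≤ 2 ^ (2 - p) * |x - y| ^ (p - 1) := by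
  have hx : 0 ≤ x := le_trans hy hxy
  have hq0 : (0:ℝ) ≤ p - 1 := by linarith
  rw [sgnp_nonneg_eq hp1.ne' hx, sgnp_nonneg_eq hp1.ne' hy,
    abs_of_nonneg (by exact sub_nonneg.2 (Real.rpow_le_rpow hy hxy hq0)),
    abs_of_nonneg (by linarith)]
  have h1 : x ^ (p-1) ≤ (x - y) ^ (p-1) + y ^ (p-1) := by
    have := rpow_subadd (by linarith : (0:ℝ) ≤ x - y) hy hq0 (by linarith)
    simpa using this
  have h2 : (x - y) ^ (p-1) ≤ 2 ^ (2-p) * (x - y) ^ (p-1) :=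
    le_mul_of_one_le_left (Real.rpow_nonneg (by linarith) _) (one_le_two_rpow (by linarith))
  linarith

lemma sgnp_holder {p : ℝ} (hp1 : 1 < p) (hp2 : p ≤ 2) (x y : ℝ) :
    |sgnp p x - sgnp p y| ≤ 2 ^ (2 - p) * |x - y| ^ (p - 1) := by
  wlog hxy : y ≤ x generalizing x y
  · rw [abs_sub_comm, abs_sub_comm x y]; exact this y x (le_of_not_ge hxy)
  rcases le_or_gt 0 y with hy | hy
  · exact sgnp_holder_aux hp1 hp2 hy hxy
  rcases le_or_gt x 0 with hx | hx
  · have h := sgnp_holder_aux hp1 hp2 (by linarith : (0:ℝ) ≤ -x) (by linarith : -x ≤ -y)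
    rw [sgnp_neg, sgnp_neg] at h
    have e : sgnp p x - sgnp p y = -sgnp p y - -sgnp p x := by ring
    have e' : x - y = -y - -x := by ring
    rw [e, e']
    exact h
  · -- y < 0 < x
    have e1 : sgnp p x = x ^ (p-1) := sgnp_nonneg_eq hp1.ne' hx.le
    have e2 : sgnp p y = -((-y) ^ (p-1)) := by
      rw [← neg_neg (sgnp p y), ← sgnp_neg, sgnp_nonneg_eq hp1.ne' (by linarith : (0:ℝ) ≤ -y)]
    rw [e1, e2, sub_neg_eq_add, abs_of_nonneg (add_nonneg (Real.rpow_nonneg hx.le _)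
      (Real.rpow_nonneg (by linarith) _)),
      abs_of_nonneg (by linarith : (0:ℝ) ≤ x - y)]
    have := rpow_conc hx.le (by linarith : (0:ℝ) ≤ -y) (by linarith : (0:ℝ) < p - 1)
      (by linarith)
    calc x ^ (p-1) + (-y) ^ (p-1) ≤ 2 ^ (1-(p-1)) * (x + -y) ^ (p-1) := this
    _ = 2 ^ (2-p) * (x - y) ^ (p-1) := by
      rw [show (1:ℝ) - (p-1) = 2 - p by ring, show x + -y = x - y by ring]

lemma tendsto_abs_rpow_zero {r : ℝ} (hr : 0 < r) :
    Filter.Tendsto (fun t : ℝ => |t| ^ r) (nhds 0) (nhds 0) := by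
  have h : ContinuousAt (fun t : ℝ => |t| ^ r) 0 :=
    (Real.continuousAt_rpow_const _ _ (Or.inr hr.le)).comp continuous_abs.continuousAt
  have := h.tendsto
  simpa [Real.zero_rpow hr.ne'] using this

lemma sgnp_hasDerivAt {p : ℝ} (hp : 1 < p) (x : ℝ) :
    HasDerivAt (fun t => |t| ^ p) (p * sgnp p x) x := by
  have h := hasDerivAt_abs_rpow x hp
  convert h using 1
  rw [sgnp]; ring

lemma continuous_sgnp {p : ℝ} (hp : 1 < p) : Continuous (sgnp p) := by
  rw [continuous_iff_continuousAt]
  intro x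
  rcases eq_or_ne x 0 with rfl | hx
  · have h0 : sgnp p 0 = 0 := by simp [sgnp]
    rw [ContinuousAt, h0]
    have hb : ∀ t : ℝ, ‖sgnp p t‖ ≤ |t| ^ (p - 1) := by
      intro t
      rcases eq_or_ne t 0 with rfl | ht
      · simp only [sgnp, zero_mul, norm_zero]
        positivity
      · rw [Real.norm_eq_abs, sgnp, abs_mul, abs_of_nonneg (Real.rpow_nonneg (abs_nonneg t) _),
          show p - 1 = 1 + (p - 2) by ring, Real.rpow_add (abs_pos.2 ht), Real.rpow_one]
    exact squeeze_zero_norm hb (tendsto_abs_rpow_zero (by linarith))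
  · exact (continuousAt_id.mul ((Real.continuousAt_rpow_const _ _
      (Or.inl (abs_ne_zero.2 hx))).comp continuous_abs.continuousAt))

lemma key_aux {p a b : ℝ} (hp1 : 1 < p) (hp2 : p ≤ 2) (hb : 0 ≤ b) :
    |a + b| ^ p ≤ |a| ^ p + p * sgnp p a * b + 2 ^ (2 - p) * b ^ p := by
  have hcont : Continuous fun x => p * sgnp p x := continuous_const.mul (continuous_sgnp hp1)
  have hcont2 : Continuous fun x : ℝ => p * (2 ^ (2-p) * |x - a| ^ (p-1)) := by
    apply continuous_const.mul
    apply continuous_const.mul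
    rw [continuous_iff_continuousAt]
    intro x
    exact (Real.continuousAt_rpow_const _ _ (Or.inr (by linarith))).comp
      ((continuous_abs.comp (continuous_sub_right a)).continuousAt)
  have hint : IntervalIntegrable (fun x => p * sgnp p x) volume a (a + b) :=
    hcont.intervalIntegrable _ _
  have hftc : ∫ x in a..(a+b), p * sgnp p x = |a+b| ^ p - |a| ^ p :=
    intervalIntegral.integral_eq_sub_of_hasDerivAt
      (fun x _ => sgnp_hasDerivAt hp1 x) hint
  have hsub : |a+b| ^ p - |a| ^ p - p * sgnp p a * b
      = ∫ x in a..(a+b), (p * sgnp p x - p * sgnp p a) := by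
    rw [intervalIntegral.integral_sub hint (intervalIntegrable_const), hftc,
      intervalIntegral.integral_const]
    simp only [add_sub_cancel_left, smul_eq_mul]
    ring
  have hmono : (∫ x in a..(a+b), (p * sgnp p x - p * sgnp p a))
      ≤ ∫ x in a..(a+b), p * (2 ^ (2-p) * |x - a| ^ (p-1)) := by
    apply intervalIntegral.integral_mono_on (by linarith)
      (hint.sub intervalIntegrable_const) (hcont2.intervalIntegrable _ _)
    intro x hx
    rw [show p * sgnp p x - p * sgnp p a = p * (sgnp p x - sgnp p a) by ring]
    have h1 : sgnp p x - sgnp p a ≤ |sgnp p x - sgnp p a| := le_abs_self _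
    have h2 := sgnp_holder hp1 hp2 x a
    have hp0 : (0:ℝ) ≤ p := by linarith
    exact mul_le_mul_of_nonneg_left (h1.trans h2) hp0
  have hcomp : (∫ x in a..(a+b), p * (2 ^ (2-p) * |x - a| ^ (p-1)))
      = 2 ^ (2-p) * b ^ p := by
    rw [intervalIntegral.integral_const_mul, intervalIntegral.integral_const_mul]
    have h1 : (∫ x in a..(a+b), |x - a| ^ (p-1)) = ∫ u in (0:ℝ)..b, |u| ^ (p-1) := by
      have := intervalIntegral.integral_comp_sub_right (fun u => |u| ^ (p-1)) a
        (a := a) (b := a + b)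
      simpa using this
    have h2 : (∫ u in (0:ℝ)..b, |u| ^ (p-1)) = ∫ u in (0:ℝ)..b, u ^ (p-1) := by
      apply intervalIntegral.integral_congr
      intro u hu
      rw [Set.uIcc_of_le hb] at hu
      show |u| ^ (p-1) = u ^ (p-1)
      rw [abs_of_nonneg hu.1]
    have h3 : (∫ u in (0:ℝ)..b, u ^ (p-1)) = b ^ p / p := by
      rw [integral_rpow (Or.inl (by linarith : (-1:ℝ) < p - 1))]
      rw [Real.zero_rpow (by linarith : p - 1 + 1 ≠ 0), sub_add_cancel]
      simp
    rw [h1, h2, h3]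
    field_simp
  have hfin := hmono.trans_eq hcomp
  rw [← hsub] at hfin
  linarith

lemma key_ineq {p : ℝ} (hp1 : 1 ≤ p) (hp2 : p ≤ 2) (a b : ℝ) :
    |a + b| ^ p ≤ |a| ^ p + p * sgnp p a * b + 2 ^ (2 - p) * |b| ^ p := by
  rcases eq_or_lt_of_le hp1 with rfl | hp1'
  · simp only [Real.rpow_one, show (2:ℝ) - 1 = 1 by norm_num, one_mul]
    have h1 : |a + b| ≤ |a| + |b| := abs_add_le a b
    have h2 : |sgnp 1 a * b| ≤ |b| := by
      rw [abs_mul]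
      have := abs_sgnp_le (le_refl 1) (x := a)
      rw [sub_self, Real.rpow_zero] at this
      nlinarith [abs_nonneg b]
    have h3 : -(|b|) ≤ sgnp 1 a * b := neg_le_of_abs_le h2
    linarith
  · rcases le_or_gt 0 b with hb | hb
    · rw [abs_of_nonneg hb]; exact key_aux hp1' hp2 hb
    · have h := key_aux (a := -a) (b := -b) hp1' hp2 (by linarith)
      rw [show -a + -b = -(a+b) by ring, abs_neg, abs_neg, sgnp_neg] at h
      rw [show -b = |b| from (abs_of_neg hb).symm] at h
      have e : p * -sgnp p a * |b| = p * sgnp p a * b := by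
        rw [show |b| = -b from abs_of_neg hb]; ring
      rw [e] at h
      exact h

lemma measurable_sgnp (p : ℝ) : Measurable (sgnp p) :=
  measurable_id.mul (measurable_id.abs.pow_const _)

lemma cross_bound {p : ℝ} (hp1 : 1 ≤ p) (hp2 : p ≤ 2) (x y : ℝ) :
    |x| ^ (p - 1) * |y| ≤ |x| ^ p + |y| ^ p := by
  rcases eq_or_lt_of_le hp1 with rfl | hp1'
  · simp only [sub_self, Real.rpow_zero, one_mul, Real.rpow_one]
    linarith [abs_nonneg x]
  · have hq : p.HolderConjugate p.conjExponent := Real.HolderConjugate.conjExponent hp1'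
    have hy := Real.young_inequality_of_nonneg
      (Real.rpow_nonneg (abs_nonneg x) (p-1)) (abs_nonneg y) hq.symm
    have he : (|x| ^ (p-1)) ^ p.conjExponent = |x| ^ p := by
      rw [← Real.rpow_mul (abs_nonneg x), Real.conjExponent,
        show (p-1) * (p / (p-1)) = p by rw [mul_comm, div_mul_cancel₀ _ (by linarith : p - 1 ≠ 0)]]
    rw [he] at hy
    have h1 : |x| ^ p / p.conjExponent ≤ |x| ^ p :=
      div_le_self (Real.rpow_nonneg (abs_nonneg x) p) hq.symm.lt.le
    have h2 : |y| ^ p / p ≤ |y| ^ p :=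
      div_le_self (Real.rpow_nonneg (abs_nonneg y) p) hp1
    linarith

lemma integral_mul_eq_zero {Ω : Type*} {m0 : MeasurableSpace Ω} (P : Measure Ω)
    [IsProbabilityMeasure P] {m : MeasurableSpace Ω} (hm : m ≤ m0) {f g : Ω → ℝ}
    (hf : StronglyMeasurable[m] f) (hg : Integrable g P)
    (hfg : Integrable (fun ω => f ω * g ω) P) (hg0 : P[g|m] =ᵐ[P] 0) :
    ∫ ω, f ω * g ω ∂P = 0 := by
  haveI : SigmaFinite (P.trim hm) := by infer_instance
  have h1 : ∫ ω, f ω * g ω ∂P = ∫ ω, (P[fun ω => f ω * g ω|m]) ω ∂P :=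
    (integral_condExp hm).symm
  have h2 : P[fun ω => f ω * g ω|m] =ᵐ[P] fun ω => f ω * (P[g|m]) ω := by
    have := condExp_mul_of_stronglyMeasurable_left hf (μ := P) (g := g) hfg hg
    exact this
  have h3 : (fun ω => f ω * (P[g|m]) ω) =ᵐ[P] (fun _ => (0:ℝ)) := by
    filter_upwards [hg0] with ω hω
    simp [hω]
  rw [h1, integral_congr_ae (h2.trans h3), integral_zero]

/-- Chatterji's inequality: for a martingale-difference sequence `d_1, …, d_n`
and `p ∈ [1,2]`, `E[|d_1 + ⋯ + d_n|^p] ≤ 2^{2-p} ∑_{j=1}^n E[|d_j|^p]`. -/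
theorem chatterji_inequality
    {Ω : Type*} [MeasurableSpace Ω] (P : Measure Ω) [IsProbabilityMeasure P]
    (n : ℕ) (ℱ : ℕ → MeasurableSpace Ω)
    (hℱ_mono : Monotone ℱ) (hℱ_le : ∀ j, ℱ j ≤ ‹MeasurableSpace Ω›)
    (d : ℕ → Ω → ℝ)
    (hmeas : ∀ j ∈ Finset.Icc 1 n, Measurable[ℱ j] (d j))
    (hint : ∀ j ∈ Finset.Icc 1 n, Integrable (d j) P)
    (hmd : ∀ j ∈ Finset.Icc 1 n, P[d j | ℱ (j - 1)] =ᵐ[P] 0)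
    (p : ℝ) (hp : p ∈ Set.Icc (1 : ℝ) 2)
    (hLp : ∀ j ∈ Finset.Icc 1 n, Integrable (fun ω => |d j ω| ^ p) P) :
    ∫ ω, |∑ j ∈ Finset.Icc 1 n, d j ω| ^ p ∂P ≤
      2 ^ (2 - p) * ∑ j ∈ Finset.Icc 1 n, ∫ ω, |d j ω| ^ p ∂P := by
  obtain ⟨hp1, hp2⟩ := hp
  set S : ℕ → Ω → ℝ := fun k ω => ∑ j ∈ Finset.Icc 1 k, d j ω with hS
  have hmeasS : ∀ k, k ≤ n → Measurable[ℱ k] (S k) := by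
    intro k hk
    apply Finset.measurable_sum
    intro j hj
    rw [Finset.mem_Icc] at hj
    exact (hmeas j (Finset.mem_Icc.2 ⟨hj.1, hj.2.trans hk⟩)).mono (hℱ_mono hj.2) le_rfl
  have key : ∀ k, k ≤ n → Integrable (fun ω => |S k ω| ^ p) P ∧
      ∫ ω, |S k ω| ^ p ∂P ≤ 2 ^ (2 - p) * ∑ j ∈ Finset.Icc 1 k, ∫ ω, |d j ω| ^ p ∂P := by
    intro k
    induction k with
    | zero =>
      intro _
      have hz : (fun ω => |S 0 ω| ^ p) = fun _ => (0:ℝ) := by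
        funext ω
        simp [hS, Real.zero_rpow (by linarith : p ≠ 0)]
      constructor
      · rw [hz]; exact integrable_const 0
      · rw [hz]; simp
    | succ k ih =>
      intro hk1
      have hk : k ≤ n := by omega
      obtain ⟨ihInt, ihLe⟩ := ih hk
      have hmem : k + 1 ∈ Finset.Icc 1 n := Finset.mem_Icc.2 ⟨by omega, hk1⟩
      have hSsucc : ∀ ω, S (k+1) ω = S k ω + d (k+1) ω := by
        intro ω
        exact Finset.sum_Icc_succ_top (by omega) _
      have hDint := hint _ hmem
      have hDLp := hLp _ hmem
      have hSmeas : Measurable (S k) := (hmeasS k hk).mono (hℱ_le k) le_rfl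
      have hSmeas' : Measurable (S (k+1)) := (hmeasS (k+1) hk1).mono (hℱ_le (k+1)) le_rfl
      have hpt : ∀ ω, |S (k+1) ω| ^ p ≤ |S k ω| ^ p
          + p * (sgnp p (S k ω) * d (k+1) ω) + 2 ^ (2-p) * |d (k+1) ω| ^ p := by
        intro ω
        rw [hSsucc ω, ← mul_assoc]
        exact key_ineq hp1 hp2 _ _
      have hmid_meas : AEStronglyMeasurable (fun ω => sgnp p (S k ω) * d (k+1) ω) P :=
        (((measurable_sgnp p).comp hSmeas).aestronglyMeasurable.mul hDint.1)
      have hmid : Integrable (fun ω => sgnp p (S k ω) * d (k+1) ω) P := by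
        apply Integrable.mono' (ihInt.add hDLp) hmid_meas
        filter_upwards with ω
        rw [Real.norm_eq_abs, abs_mul]
        calc |sgnp p (S k ω)| * |d (k+1) ω|
            ≤ |S k ω| ^ (p-1) * |d (k+1) ω| :=
              mul_le_mul_of_nonneg_right (abs_sgnp_le hp1) (abs_nonneg _)
          _ ≤ |S k ω| ^ p + |d (k+1) ω| ^ p := cross_bound hp1 hp2 _ _
      have hRHS : Integrable (fun ω => |S k ω| ^ p
          + p * (sgnp p (S k ω) * d (k+1) ω) + 2 ^ (2-p) * |d (k+1) ω| ^ p) P :=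
        (ihInt.add (hmid.const_mul p)).add (hDLp.const_mul _)
      have hLHSmeas : AEStronglyMeasurable (fun ω => |S (k+1) ω| ^ p) P :=
        (hSmeas'.abs.pow_const p).aestronglyMeasurable
      have hLHSint : Integrable (fun ω => |S (k+1) ω| ^ p) P := by
        apply hRHS.mono' hLHSmeas
        filter_upwards with ω
        rw [Real.norm_eq_abs, abs_of_nonneg (Real.rpow_nonneg (abs_nonneg _) _)]
        exact hpt ω
      have hIle : ∫ ω, |S (k+1) ω| ^ p ∂P ≤ ∫ ω, (|S k ω| ^ p
          + p * (sgnp p (S k ω) * d (k+1) ω) + 2 ^ (2-p) * |d (k+1) ω| ^ p) ∂P :=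
        integral_mono hLHSint hRHS hpt
      have hsplit : ∫ ω, (|S k ω| ^ p + p * (sgnp p (S k ω) * d (k+1) ω)
          + 2 ^ (2-p) * |d (k+1) ω| ^ p) ∂P
          = ∫ ω, |S k ω| ^ p ∂P + p * ∫ ω, sgnp p (S k ω) * d (k+1) ω ∂P
            + 2 ^ (2-p) * ∫ ω, |d (k+1) ω| ^ p ∂P := by
        rw [integral_add (f := fun ω => |S k ω| ^ p + p * (sgnp p (S k ω) * d (k+1) ω))
            (g := fun ω => 2 ^ (2-p) * |d (k+1) ω| ^ p)
            (ihInt.add (hmid.const_mul p)) (hDLp.const_mul _),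
          integral_add (f := fun ω => |S k ω| ^ p)
            (g := fun ω => p * (sgnp p (S k ω) * d (k+1) ω))
            ihInt (hmid.const_mul p), integral_const_mul, integral_const_mul]
      have hzero : ∫ ω, sgnp p (S k ω) * d (k+1) ω ∂P = 0 := by
        apply integral_mul_eq_zero P (hℱ_le k)
          (((measurable_sgnp p).comp (hmeasS k hk)).stronglyMeasurable) hDint hmid
        have := hmd _ hmem
        simpa using this
      refine ⟨hLHSint, ?_⟩
      have hsum : ∑ j ∈ Finset.Icc 1 (k+1), ∫ ω, |d j ω| ^ p ∂P
          = (∑ j ∈ Finset.Icc 1 k, ∫ ω, |d j ω| ^ p ∂P) + ∫ ω, |d (k+1) ω| ^ p ∂P :=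
        Finset.sum_Icc_succ_top (by omega) _
      rw [hsum, mul_add]
      rw [hsplit, hzero] at hIle
      linarith
  exact (key n le_rfl).2
end

section
/- Let (Ω, F, P) be a probability space with a filtration F_0 ⊆ F_1 ⊆ ⋯ ⊆ F_n, and let X_1,…,X_n be random variables with X_i F_i-measurable. Let α ∈ (0,1] and C_α > 0 be such that E[|X_i|^{1+α}] ≤ C_α for all i ≤ n. Set S_n := X_1 + ⋯ + X_n and S_n^P := Σ_{i=1}^n E[X_i | F_{i−1}]. Then E[|S_n − S_n^P|^{1+α}] ≤ 4 n C_α. -/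
open MeasureTheory

noncomputable def sgnPow (q x : ℝ) : ℝ := if 0 ≤ x then x ^ q else -((-x) ^ q)

lemma sgnPow_nonneg {q x : ℝ} (hx : 0 ≤ x) : sgnPow q x = x ^ q := by
  simp [sgnPow, hx]

lemma sgnPow_zero (q : ℝ) (hq : q ≠ 0) : sgnPow q 0 = 0 := by
  simp [sgnPow, Real.zero_rpow hq]

lemma sgnPow_nonpos {q x : ℝ} (hx : x ≤ 0) (hq : q ≠ 0) : sgnPow q x = -((-x) ^ q) := by
  rcases eq_or_lt_of_le hx with rfl | h
  · simp [sgnPow_zero q hq, Real.zero_rpow hq]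
  · simp [sgnPow, not_le.mpr h]

lemma abs_sgnPow (q x : ℝ) (hq : q ≠ 0) : |sgnPow q x| = |x| ^ q := by
  rcases le_total 0 x with hx | hx
  · rw [sgnPow_nonneg hx, abs_of_nonneg hx, abs_of_nonneg (Real.rpow_nonneg hx q)]
  · rw [sgnPow_nonpos hx hq, abs_neg, abs_of_nonneg (Real.rpow_nonneg (by linarith) q),
      abs_of_nonpos hx]

lemma continuous_sgnPow {q : ℝ} (hq : 0 < q) : Continuous (sgnPow q) := by
  have h1 : Continuous fun x : ℝ => x ^ q := by
    rw [continuous_iff_continuousAt]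
    exact fun x => Real.continuousAt_rpow_const x q (Or.inr hq.le)
  have h2 : Continuous fun x : ℝ => -((-x) ^ q) := (h1.comp continuous_neg).neg
  have : Continuous fun x : ℝ => if (fun _ : ℝ => (0:ℝ)) x ≤ id x then x ^ q else -((-x) ^ q) :=
    Continuous.if_le h1 h2 continuous_const continuous_id
      (by intro x hx; simp only [id_eq] at hx; rw [← hx]; simp [Real.zero_rpow hq.ne'])
  exact this

lemma monotone_sgnPow {q : ℝ} (hq : 0 < q) : Monotone (sgnPow q) := by
  intro a b hab
  rcases le_total 0 a with ha | ha
  · rw [sgnPow_nonneg ha, sgnPow_nonneg (ha.trans hab)]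
    exact Real.rpow_le_rpow ha hab hq.le
  · rw [sgnPow_nonpos ha hq.ne']
    rcases le_total 0 b with hb | hb
    · rw [sgnPow_nonneg hb]
      have := Real.rpow_nonneg (by linarith : (0:ℝ) ≤ -a) q
      have := Real.rpow_nonneg hb q
      linarith
    · rw [sgnPow_nonpos hb hq.ne', neg_le_neg_iff]
      exact Real.rpow_le_rpow (by linarith) (by linarith) hq.le

lemma real_rpow_add_le {a b q : ℝ} (ha : 0 ≤ a) (hb : 0 ≤ b) (hq0 : 0 ≤ q) (hq1 : q ≤ 1) :
    (a + b) ^ q ≤ a ^ q + b ^ q := by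
  have := NNReal.rpow_add_le_add_rpow a.toNNReal b.toNNReal hq0 hq1
  have h := NNReal.coe_le_coe.mpr this
  push_cast at h
  rwa [Real.coe_toNNReal a ha, Real.coe_toNNReal b hb] at h

lemma real_cr_ineq {a b p : ℝ} (ha : 0 ≤ a) (hb : 0 ≤ b) (hp : 1 ≤ p) :
    (a + b) ^ p ≤ 2 ^ (p - 1) * (a ^ p + b ^ p) := by
  have := NNReal.rpow_add_le_mul_rpow_add_rpow a.toNNReal b.toNNReal hp
  have h := NNReal.coe_le_coe.mpr this
  push_cast at h
  rwa [Real.coe_toNNReal a ha, Real.coe_toNNReal b hb] at h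

lemma real_two_point_concave {a b q : ℝ} (ha : 0 ≤ a) (hb : 0 ≤ b) (hq0 : 0 < q) (hq1 : q ≤ 1) :
    a ^ q + b ^ q ≤ 2 ^ (1 - q) * (a + b) ^ q := by
  have hP : 1 ≤ 1 / q := by rw [le_div_iff₀ hq0]; linarith
  have key := real_cr_ineq (Real.rpow_nonneg ha q) (Real.rpow_nonneg hb q) hP
  -- (a^q + b^q)^(1/q) ≤ 2^(1/q - 1) * (a + b)
  have h1 : (a ^ q + b ^ q) ^ (1 / q) ≤ 2 ^ (1 / q - 1) * (a + b) := by
    calc (a ^ q + b ^ q) ^ (1 / q)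
        ≤ 2 ^ (1 / q - 1) * ((a ^ q) ^ (1/q) + (b ^ q) ^ (1/q)) := key
      _ = 2 ^ (1 / q - 1) * (a + b) := by
          rw [← Real.rpow_mul ha, ← Real.rpow_mul hb, mul_one_div_cancel hq0.ne',
            Real.rpow_one, Real.rpow_one]
  have h2 := Real.rpow_le_rpow (Real.rpow_nonneg (by positivity) _) h1 hq0.le
  rw [← Real.rpow_mul (by positivity), one_div_mul_cancel hq0.ne', Real.rpow_one] at h2
  calc a ^ q + b ^ q ≤ (2 ^ (1 / q - 1) * (a + b)) ^ q := h2
    _ = 2 ^ (1 - q) * (a + b) ^ q := by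
        rw [Real.mul_rpow (by positivity) (by linarith), ← Real.rpow_mul (by norm_num)]
        congr 2
        field_simp

lemma one_le_two_rpow_s8 {e : ℝ} (he : 0 ≤ e) : (1:ℝ) ≤ 2 ^ e := by
  calc (1:ℝ) = 2 ^ (0:ℝ) := by rw [Real.rpow_zero]
    _ ≤ 2 ^ e := Real.rpow_le_rpow_of_exponent_le one_le_two he

private lemma sgnPow_holder_aux {q : ℝ} (hq0 : 0 < q) (hq1 : q ≤ 1) {a b : ℝ} (hba : b ≤ a) :
    sgnPow q a - sgnPow q b ≤ 2 ^ (1 - q) * (a - b) ^ q := by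
  have h2 : (1:ℝ) ≤ 2 ^ (1 - q) := one_le_two_rpow_s8 (by linarith)
  have hab : (0:ℝ) ≤ a - b := by linarith
  rcases le_total 0 b with hb | hb
  · rw [sgnPow_nonneg hb, sgnPow_nonneg (hb.trans hba)]
    have h3 : a ^ q ≤ (a - b) ^ q + b ^ q := by
      have := real_rpow_add_le hab hb hq0.le hq1
      simpa using this
    nlinarith [Real.rpow_nonneg hab q]
  · rcases le_total 0 a with ha | ha
    · rw [sgnPow_nonneg ha, sgnPow_nonpos hb hq0.ne', sub_neg_eq_add]
      have := real_two_point_concave ha (by linarith : (0:ℝ) ≤ -b) hq0 hq1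
      calc a ^ q + (-b) ^ q ≤ 2 ^ (1 - q) * (a + -b) ^ q := this
        _ = 2 ^ (1 - q) * (a - b) ^ q := by ring_nf
    · rw [sgnPow_nonpos hb hq0.ne', sgnPow_nonpos ha hq0.ne']
      have h3 : (-b) ^ q ≤ (a - b) ^ q + (-a) ^ q := by
        have := real_rpow_add_le hab (by linarith : (0:ℝ) ≤ -a) hq0.le hq1
        have heq : a - b + -a = -b := by ring
        rwa [heq] at this
      nlinarith [Real.rpow_nonneg hab q]

lemma sgnPow_holder {q : ℝ} (hq0 : 0 < q) (hq1 : q ≤ 1) (a b : ℝ) :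
    |sgnPow q a - sgnPow q b| ≤ 2 ^ (1 - q) * |a - b| ^ q := by
  rcases le_total b a with h | h
  · rw [abs_of_nonneg (sub_nonneg.mpr (monotone_sgnPow hq0 h)), abs_of_nonneg (by linarith)]
    exact sgnPow_holder_aux hq0 hq1 h
  · rw [abs_of_nonpos (sub_nonpos.mpr (monotone_sgnPow hq0 h)), abs_of_nonpos (by linarith),
      neg_sub, neg_sub]
    exact sgnPow_holder_aux hq0 hq1 h

lemma hasDerivAt_abs_rpow_sgnPow {p : ℝ} (hp : 1 < p) (x : ℝ) :
    HasDerivAt (fun y : ℝ => |y| ^ p) (p * sgnPow (p - 1) x) x := by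
  have h := hasDerivAt_abs_rpow x hp
  convert h using 1
  rcases lt_trichotomy x 0 with hx | hx | hx
  · rw [sgnPow_nonpos hx.le (by linarith : p - 1 ≠ 0), abs_of_neg hx]
    have : ((-x) ^ (p-1) : ℝ) = (-x) ^ (p-2) * (-x) := by
      rw [← Real.rpow_add_one (by linarith : -x ≠ 0)]; ring_nf
    rw [this]; ring
  · subst hx
    rw [sgnPow_zero _ (by linarith : p - 1 ≠ 0)]
    ring
  · rw [sgnPow_nonneg hx.le, abs_of_pos hx]
    have : (x ^ (p-1) : ℝ) = x ^ (p-2) * x := by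
      rw [← Real.rpow_add_one hx.ne']; ring_nf
    rw [this]; ring

lemma ftc_abs_rpow {p : ℝ} (hp : 1 < p) (x y : ℝ) :
    |x + y| ^ p - |x| ^ p = ∫ t in (0:ℝ)..1, p * sgnPow (p - 1) (x + t * y) * y := by
  have hd : ∀ t ∈ Set.uIcc (0:ℝ) 1,
      HasDerivAt (fun t : ℝ => |x + t * y| ^ p) (p * sgnPow (p - 1) (x + t * y) * y) t := by
    intro t _
    have inner : HasDerivAt (fun t : ℝ => x + t * y) y t := by
      simpa using (hasDerivAt_mul_const y).const_add (c := x) (x := t)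
    exact (hasDerivAt_abs_rpow_sgnPow hp (x + t * y)).comp t inner
  have hc : Continuous fun t : ℝ => p * sgnPow (p - 1) (x + t * y) * y :=
    (continuous_const.mul ((continuous_sgnPow (by linarith)).comp
      (continuous_const.add (continuous_id.mul continuous_const)))).mul continuous_const
  have h := intervalIntegral.integral_eq_sub_of_hasDerivAt hd (hc.intervalIntegrable 0 1)
  rw [h]
  norm_num

lemma key_pointwise {p : ℝ} (hp1 : 1 < p) (hp2 : p ≤ 2) (x y : ℝ) :
    |x + y| ^ p ≤ |x| ^ p + p * sgnPow (p - 1) x * y + 2 ^ (2 - p) * |y| ^ p := by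
  have hq0 : 0 < p - 1 := by linarith
  have hq1 : p - 1 ≤ 1 := by linarith
  set q := p - 1 with hqdef
  rcases eq_or_ne y 0 with rfl | hy
  · simp only [add_zero, mul_zero, abs_zero]
    rw [Real.zero_rpow (by linarith : p ≠ 0)]
    have : (0:ℝ) ≤ 2 ^ (2 - p) * 0 := by simp
    linarith
  have hftc := ftc_abs_rpow hp1 x y
  have hyp : |y| * |y| ^ q = |y| ^ p := by
    rw [← Real.rpow_one_add' (abs_nonneg y) (by rw [hqdef]; intro h; linarith)]
    norm_num [hqdef]
  have hmono : ∫ t in (0:ℝ)..1, p * sgnPow q (x + t * y) * y ≤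
      ∫ t in (0:ℝ)..1, (p * sgnPow q x * y + p * 2 ^ (1 - q) * |y| ^ p * t ^ q) := by
    apply intervalIntegral.integral_mono_on zero_le_one
    · exact ((continuous_const.mul ((continuous_sgnPow hq0).comp
        (continuous_const.add (continuous_id.mul continuous_const)))).mul
        continuous_const).intervalIntegrable 0 1
    · apply Continuous.intervalIntegrable
      apply continuous_const.add (continuous_const.mul _)
      rw [continuous_iff_continuousAt]
      exact fun t => Real.continuousAt_rpow_const t q (Or.inr hq0.le)
    · intro t ht
      have hdiff := sgnPow_holder hq0 hq1 (x + t * y) x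
      have heq : (x + t * y) - x = t * y := by ring
      rw [heq] at hdiff
      have htabs : |t * y| ^ q = t ^ q * |y| ^ q := by
        rw [abs_mul, Real.mul_rpow (abs_nonneg t) (abs_nonneg y), abs_of_nonneg ht.1]
      rw [htabs] at hdiff
      set A := sgnPow q (x + t * y) - sgnPow q x with hA
      have hb1 : A * y ≤ |A| * |y| := by
        calc A * y ≤ |A * y| := le_abs_self _
          _ = |A| * |y| := abs_mul _ _
      have hb2 : |A| * |y| ≤ 2 ^ (1 - q) * (t ^ q * |y| ^ q) * |y| :=
        mul_le_mul_of_nonneg_right hdiff (abs_nonneg y)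
      have hb3 : 2 ^ (1 - q) * (t ^ q * |y| ^ q) * |y| = 2 ^ (1 - q) * |y| ^ p * t ^ q := by
        rw [← hyp]; ring
      have hp0 : (0:ℝ) < p := by linarith
      have hb4 : p * (A * y) ≤ p * (2 ^ (1 - q) * |y| ^ p * t ^ q) :=
        mul_le_mul_of_nonneg_left (hb1.trans (hb2.trans_eq hb3)) hp0.le
      calc p * sgnPow q (x + t * y) * y
          = p * sgnPow q x * y + p * (A * y) := by rw [hA]; ring
        _ ≤ p * sgnPow q x * y + p * (2 ^ (1 - q) * |y| ^ p * t ^ q) := by linarith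
        _ = p * sgnPow q x * y + p * 2 ^ (1 - q) * |y| ^ p * t ^ q := by ring
  have hrhs : ∫ t in (0:ℝ)..1, (p * sgnPow q x * y + p * 2 ^ (1 - q) * |y| ^ p * t ^ q)
      = p * sgnPow q x * y + 2 ^ (1 - q) * |y| ^ p := by
    rw [intervalIntegral.integral_add (intervalIntegrable_const)]
    · rw [intervalIntegral.integral_const, intervalIntegral.integral_const_mul,
        integral_rpow (Or.inl (by linarith))]
      have h1 : ((1:ℝ) ^ (q + 1) - (0:ℝ) ^ (q + 1)) / (q + 1) = 1 / p := by
        rw [Real.one_rpow, Real.zero_rpow (by rw [hqdef]; intro h; linarith)]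
        rw [hqdef]; ring_nf
      rw [h1]
      field_simp
      ring
    · apply Continuous.intervalIntegrable
      apply continuous_const.mul
      rw [continuous_iff_continuousAt]
      exact fun t => Real.continuousAt_rpow_const t q (Or.inr hq0.le)
  have h2q : (2:ℝ) ^ (1 - q) = 2 ^ (2 - p) := by rw [hqdef]; ring_nf
  have hfin := hmono.trans_eq hrhs
  rw [h2q] at hfin
  linarith [hftc, hfin]

lemma tangent_pointwise {p : ℝ} (hp1 : 1 < p) (hp2 : p ≤ 2) (r x : ℝ) :
    |r| ^ p + p * sgnPow (p - 1) r * (x - r) ≤ |x| ^ p := by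
  have hq0 : 0 < p - 1 := by linarith
  set q := p - 1 with hqdef
  have hftc := ftc_abs_rpow hp1 r (x - r)
  rw [show r + (x - r) = x by ring] at hftc
  have hmono : ∫ t in (0:ℝ)..1, p * sgnPow q r * (x - r) ≤
      ∫ t in (0:ℝ)..1, p * sgnPow q (r + t * (x - r)) * (x - r) := by
    apply intervalIntegral.integral_mono_on zero_le_one intervalIntegrable_const
    · exact ((continuous_const.mul ((continuous_sgnPow hq0).comp
        (continuous_const.add (continuous_id.mul continuous_const)))).mul
        continuous_const).intervalIntegrable 0 1
    · intro t ht
      have hp0 : (0:ℝ) < p := by linarith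
      rcases le_total 0 (x - r) with hd | hd
      · have h1 : sgnPow q r ≤ sgnPow q (r + t * (x - r)) :=
          monotone_sgnPow hq0 (by nlinarith [ht.1])
        exact mul_le_mul_of_nonneg_right (mul_le_mul_of_nonneg_left h1 hp0.le) hd
      · have h1 : sgnPow q (r + t * (x - r)) ≤ sgnPow q r :=
          monotone_sgnPow hq0 (by nlinarith [ht.1, ht.2])
        exact mul_le_mul_of_nonpos_right (mul_le_mul_of_nonneg_left h1 hp0.le) hd
  rw [intervalIntegral.integral_const, smul_eq_mul] at hmono
  linarith

lemma continuous_abs_rpow {p : ℝ} (hp : 0 < p) : Continuous fun x : ℝ => |x| ^ p := by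
  have h : Continuous fun y : ℝ => y ^ p := by
    rw [continuous_iff_continuousAt]
    exact fun x => Real.continuousAt_rpow_const x p (Or.inr hp.le)
  exact h.comp continuous_abs

lemma condexp_abs_rpow_ae_le {Ω : Type*} {m m0 : MeasurableSpace Ω} (hm : m ≤ m0)
    {μ : Measure Ω} [IsProbabilityMeasure μ] {p : ℝ} (hp1 : 1 < p) (hp2 : p ≤ 2)
    {f : Ω → ℝ} (hf : Integrable f μ) (hfp : Integrable (fun ω => |f ω| ^ p) μ) :
    ∀ᵐ ω ∂μ, |(μ[f|m]) ω| ^ p ≤ (μ[fun ω => |f ω| ^ p|m]) ω := by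
  have hq0 : 0 < p - 1 := by linarith
  have hall : ∀ᵐ ω ∂μ, ∀ r : ℚ,
      |(r:ℝ)| ^ p + p * sgnPow (p - 1) (r:ℝ) * ((μ[f|m]) ω - r) ≤
        (μ[fun ω => |f ω| ^ p|m]) ω := by
    rw [ae_all_iff]
    intro r
    set b := p * sgnPow (p - 1) (r:ℝ) with hb
    set c := |(r:ℝ)| ^ p - b * r with hc
    have htang : ∀ x : ℝ, b * x + c ≤ |x| ^ p := by
      intro x
      have := tangent_pointwise hp1 hp2 (r:ℝ) x
      rw [hc, hb]; linarith
    have hint1 : Integrable (fun ω => b * f ω + c) μ :=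
      (hf.const_mul b).add (integrable_const c)
    have h2 : μ[fun ω => b * f ω + c|m] ≤ᵐ[μ] μ[fun ω => |f ω| ^ p|m] :=
      condExp_mono hint1 hfp (Filter.Eventually.of_forall fun ω => htang (f ω))
    have h1 : μ[fun ω => b * f ω + c|m] =ᵐ[μ] fun ω => b * (μ[f|m]) ω + c := by
      have ha : μ[fun ω => b * f ω + c|m]
          =ᵐ[μ] μ[fun ω => b * f ω|m] + μ[fun _ => c|m] :=
        condExp_add (hf.const_mul b) (integrable_const c) m
      have hbmul : μ[fun ω => b * f ω|m] =ᵐ[μ] fun ω => b * (μ[f|m]) ω := by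
        have := condExp_smul (μ := μ) (m := m) b f
        exact this
      have hcc : μ[fun _ : Ω => c|m] = fun _ => c := condExp_const hm c
      filter_upwards [ha, hbmul] with ω h h'
      rw [h, Pi.add_apply, h', hcc]
    filter_upwards [h1, h2] with ω h1ω h2ω
    have := h2ω
    rw [h1ω] at this
    calc |(r:ℝ)| ^ p + b * ((μ[f|m]) ω - r) = b * (μ[f|m]) ω + c := by rw [hc]; ring
      _ ≤ _ := this
  filter_upwards [hall] with ω hω
  set Y := (μ[f|m]) ω with hY
  set g := (μ[fun ω => |f ω| ^ p|m]) ω with hg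
  have hcont : Continuous fun r : ℝ => |r| ^ p + p * sgnPow (p - 1) r * (Y - r) :=
    (continuous_abs_rpow (by linarith)).add
      (((continuous_const.mul (continuous_sgnPow hq0)).mul
        (continuous_const.sub continuous_id)))
  have hS : IsClosed {r : ℝ | |r| ^ p + p * sgnPow (p - 1) r * (Y - r) ≤ g} :=
    isClosed_le hcont continuous_const
  have hsub : Set.range ((↑) : ℚ → ℝ) ⊆
      {r : ℝ | |r| ^ p + p * sgnPow (p - 1) r * (Y - r) ≤ g} := by
    rintro _ ⟨r, rfl⟩
    exact hω r
  have hmem : Y ∈ {r : ℝ | |r| ^ p + p * sgnPow (p - 1) r * (Y - r) ≤ g} :=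
    closure_minimal hsub hS (Rat.isDenseEmbedding_coe_real.dense Y)
  have := hmem
  simp only [Set.mem_setOf_eq, sub_self, mul_zero, add_zero] at this
  exact this

lemma integral_condExp_abs_rpow_le {Ω : Type*} {m m0 : MeasurableSpace Ω} (hm : m ≤ m0)
    {μ : Measure Ω} [IsProbabilityMeasure μ] {p : ℝ} (hp1 : 1 < p) (hp2 : p ≤ 2)
    {f : Ω → ℝ} (hf : Integrable f μ) (hfp : Integrable (fun ω => |f ω| ^ p) μ) :
    Integrable (fun ω => |(μ[f|m]) ω| ^ p) μ ∧
      ∫ ω, |(μ[f|m]) ω| ^ p ∂μ ≤ ∫ ω, |f ω| ^ p ∂μ := by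
  have hae := condexp_abs_rpow_ae_le hm hp1 hp2 hf hfp
  have hsm : AEStronglyMeasurable (fun ω => |(μ[f|m]) ω| ^ p) μ :=
    ((continuous_abs_rpow (by linarith : (0:ℝ) < p)).comp_stronglyMeasurable
      (stronglyMeasurable_condExp.mono hm)).aestronglyMeasurable
  have hint : Integrable (fun ω => |(μ[f|m]) ω| ^ p) μ := by
    apply Integrable.mono' integrable_condExp hsm
    filter_upwards [hae] with ω hω
    rwa [Real.norm_eq_abs, abs_of_nonneg (Real.rpow_nonneg (abs_nonneg _) p)]
  refine ⟨hint, ?_⟩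
  calc ∫ ω, |(μ[f|m]) ω| ^ p ∂μ ≤ ∫ ω, (μ[fun ω => |f ω| ^ p|m]) ω ∂μ :=
        integral_mono_ae hint integrable_condExp hae
    _ = ∫ ω, |f ω| ^ p ∂μ := integral_condExp hm


/-- Key estimate (3.2): for an adapted sequence with `(1+α)`-moments bounded by
`C_α`, `E[|S_n - S_n^P|^{1+α}] ≤ 4 n C_α`, where
`S_n^P = ∑_{i=1}^n E[X_i | F_{i-1}]`. -/
theorem martingale_difference_moment_bound
    {Ω : Type*} [MeasurableSpace Ω] (P : Measure Ω) [IsProbabilityMeasure P]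
    (n : ℕ) (ℱ : ℕ → MeasurableSpace Ω)
    (hℱ_mono : Monotone ℱ) (hℱ_le : ∀ i, ℱ i ≤ ‹MeasurableSpace Ω›)
    (X : ℕ → Ω → ℝ)
    (hmeas : ∀ i ∈ Finset.Icc 1 n, Measurable[ℱ i] (X i))
    (hint : ∀ i ∈ Finset.Icc 1 n, Integrable (X i) P)
    (α : ℝ) (hα : α ∈ Set.Ioc (0 : ℝ) 1) (Cα : ℝ) (hCα : 0 < Cα)
    (hmom : ∀ i ∈ Finset.Icc 1 n,
      Integrable (fun ω => |X i ω| ^ (1 + α)) P ∧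
        ∫ ω, |X i ω| ^ (1 + α) ∂P ≤ Cα) :
    ∫ ω, |∑ i ∈ Finset.Icc 1 n, X i ω -
        ∑ i ∈ Finset.Icc 1 n, (P[X i | ℱ (i - 1)]) ω| ^ (1 + α) ∂P ≤
      4 * n * Cα := by
  obtain ⟨hα0, hα1⟩ := hα
  set p := 1 + α with hpdef
  have hp1 : 1 < p := by rw [hpdef]; linarith
  have hp2 : p ≤ 2 := by rw [hpdef]; linarith
  have hp0 : (0:ℝ) < p := by linarith
  have hq0 : 0 < p - 1 := by linarith
  set Y : ℕ → Ω → ℝ := fun i => P[X i | ℱ (i - 1)] with hYdef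
  set d : ℕ → Ω → ℝ := fun i ω => X i ω - Y i ω with hddef
  -- per-index facts
  have hYint : ∀ i, Integrable (Y i) P := fun i => integrable_condExp
  have hJen : ∀ i ∈ Finset.Icc 1 n, Integrable (fun ω => |Y i ω| ^ p) P ∧
      ∫ ω, |Y i ω| ^ p ∂P ≤ ∫ ω, |X i ω| ^ p ∂P := fun i hi =>
    integral_condExp_abs_rpow_le (hℱ_le (i - 1)) hp1 hp2 (hint i hi) (hmom i hi).1
  have hdint : ∀ i ∈ Finset.Icc 1 n, Integrable (d i) P := fun i hi =>
    (hint i hi).sub (hYint i)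
  have hdp : ∀ i ∈ Finset.Icc 1 n, Integrable (fun ω => |d i ω| ^ p) P ∧
      ∫ ω, |d i ω| ^ p ∂P ≤ 2 ^ (p - 1) * (Cα + Cα) := by
    intro i hi
    have hptwise : ∀ ω, |d i ω| ^ p ≤ 2 ^ (p - 1) * (|X i ω| ^ p + |Y i ω| ^ p) := by
      intro ω
      have h1 : |d i ω| ≤ |X i ω| + |Y i ω| := abs_sub _ _
      have h2 : |d i ω| ^ p ≤ (|X i ω| + |Y i ω|) ^ p :=
        Real.rpow_le_rpow (abs_nonneg _) h1 hp0.le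
      exact h2.trans (real_cr_ineq (abs_nonneg _) (abs_nonneg _) hp1.le)
    have hgint : Integrable (fun ω => 2 ^ (p - 1) * (|X i ω| ^ p + |Y i ω| ^ p)) P :=
      (((hmom i hi).1).add (hJen i hi).1).const_mul _
    have hsm : AEStronglyMeasurable (fun ω => |d i ω| ^ p) P :=
      (continuous_abs_rpow hp0).comp_aestronglyMeasurable (hdint i hi).aestronglyMeasurable
    have hIab : Integrable (fun ω => |d i ω| ^ p) P := by
      apply Integrable.mono' hgint hsm
      filter_upwards with ω
      rw [Real.norm_eq_abs, abs_of_nonneg (Real.rpow_nonneg (abs_nonneg _) p)]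
      exact hptwise ω
    refine ⟨hIab, ?_⟩
    calc ∫ ω, |d i ω| ^ p ∂P
        ≤ ∫ ω, 2 ^ (p - 1) * (|X i ω| ^ p + |Y i ω| ^ p) ∂P :=
          integral_mono hIab hgint hptwise
      _ = 2 ^ (p - 1) * ((∫ ω, |X i ω| ^ p ∂P) + ∫ ω, |Y i ω| ^ p ∂P) := by
          rw [integral_const_mul, integral_add (hmom i hi).1 (hJen i hi).1]
      _ ≤ 2 ^ (p - 1) * (Cα + Cα) := by
          have h1 := (hmom i hi).2
          have h2 := (hJen i hi).2
          have hpos : (0:ℝ) < 2 ^ (p - 1) := Real.rpow_pos_of_pos two_pos _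
          nlinarith
  have hdcond : ∀ i ∈ Finset.Icc 1 n, P[d i | ℱ (i - 1)] =ᵐ[P] 0 := by
    intro i hi
    have h1 : P[d i | ℱ (i - 1)] =ᵐ[P] P[X i | ℱ (i - 1)] - P[Y i | ℱ (i - 1)] := by
      have := condExp_sub (m := ℱ (i - 1)) (μ := P) (hint i hi) (hYint i)
      exact this
    have h2 : P[Y i | ℱ (i - 1)] = Y i :=
      condExp_of_stronglyMeasurable (hℱ_le (i - 1)) stronglyMeasurable_condExp (hYint i)
    filter_upwards [h1] with ω hω
    simp only [Pi.zero_apply]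
    rw [hω, Pi.sub_apply, h2]
    simp [hYdef]
  have hdsm : ∀ i ∈ Finset.Icc 1 n, StronglyMeasurable[ℱ i] (d i) := by
    intro i hi
    have h1 : StronglyMeasurable[ℱ i] (X i) := (hmeas i hi).stronglyMeasurable
    have h2 : StronglyMeasurable[ℱ i] (Y i) :=
      (stronglyMeasurable_condExp).mono (hℱ_mono (Nat.sub_le i 1))
    exact h1.sub h2
  -- the martingale sums
  set M : ℕ → Ω → ℝ := fun k ω => ∑ i ∈ Finset.Icc 1 k, d i ω with hMdef
  have claim : ∀ k, k ≤ n → StronglyMeasurable[ℱ k] (M k) ∧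
      Integrable (fun ω => |M k ω| ^ p) P ∧
      ∫ ω, |M k ω| ^ p ∂P ≤ 2 ^ (2 - p) * ∑ i ∈ Finset.Icc 1 k, ∫ ω, |d i ω| ^ p ∂P := by
    intro k
    induction k with
    | zero =>
      intro _
      have hM0 : M 0 = fun _ => 0 := by
        funext ω
        rw [hMdef]
        simp
      rw [hM0]
      refine ⟨stronglyMeasurable_const, ?_, ?_⟩
      · simpa [Real.zero_rpow hp0.ne'] using (integrable_const (0:ℝ))
      · simp [Real.zero_rpow hp0.ne']
    | succ k ih =>
      intro hkn
      obtain ⟨hSM, hMint, hMbound⟩ := ih (by omega)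
      have hmem : k + 1 ∈ Finset.Icc 1 n := by simp; omega
      have hMeq : ∀ ω, M (k + 1) ω = M k ω + d (k + 1) ω := by
        intro ω
        rw [hMdef]
        exact Finset.sum_Icc_succ_top (by omega) _
      have hksub : (k + 1) - 1 = k := by omega
      have hdc : P[d (k + 1) | ℱ k] =ᵐ[P] 0 := by
        have := hdcond (k + 1) hmem
        rwa [hksub] at this
      have hdI : Integrable (d (k + 1)) P := hdint _ hmem
      have hdpI : Integrable (fun ω => |d (k + 1) ω| ^ p) P := (hdp _ hmem).1
      -- strong measurability of M (k+1)
      have hSM' : StronglyMeasurable[ℱ (k + 1)] (M (k + 1)) := by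
        have h1 : StronglyMeasurable[ℱ (k + 1)] (fun ω => M k ω + d (k + 1) ω) :=
          (hSM.mono (hℱ_mono (Nat.le_succ k))).add (hdsm _ hmem)
        have : M (k + 1) = fun ω => M k ω + d (k + 1) ω := funext hMeq
        rwa [this]
      -- the multiplier G
      set G : Ω → ℝ := fun ω => p * sgnPow (p - 1) (M k ω) with hGdef
      have hGsm : StronglyMeasurable[ℱ k] G :=
        (continuous_const.mul (continuous_sgnPow hq0)).comp_stronglyMeasurable hSM
      -- integrability of G * d (k+1) via Young
      have hconj : Real.HolderConjugate (p / (p - 1)) p :=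
        (Real.HolderConjugate.conjExponent hp1).symm
      have hGd : Integrable (fun ω => G ω * d (k + 1) ω) P := by
        have hbound : ∀ ω, ‖G ω * d (k + 1) ω‖ ≤
            p * (|M k ω| ^ p / (p / (p - 1)) + |d (k + 1) ω| ^ p / p) := by
          intro ω
          rw [norm_mul, Real.norm_eq_abs, Real.norm_eq_abs, hGdef, abs_mul,
            abs_of_pos hp0, abs_sgnPow _ _ hq0.ne', mul_assoc]
          apply mul_le_mul_of_nonneg_left _ hp0.le
          have hy := Real.young_inequality_of_nonneg
            (Real.rpow_nonneg (abs_nonneg (M k ω)) (p - 1)) (abs_nonneg (d (k + 1) ω)) hconj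
          calc |M k ω| ^ (p - 1) * |d (k + 1) ω|
              ≤ (|M k ω| ^ (p - 1)) ^ (p / (p - 1)) / (p / (p - 1)) +
                |d (k + 1) ω| ^ p / p := hy
            _ = |M k ω| ^ p / (p / (p - 1)) + |d (k + 1) ω| ^ p / p := by
                rw [← Real.rpow_mul (abs_nonneg _)]
                congr 2
                field_simp
        have hgint : Integrable
            (fun ω => p * (|M k ω| ^ p / (p / (p - 1)) + |d (k + 1) ω| ^ p / p)) P :=
          ((hMint.div_const _).add (hdpI.div_const _)).const_mul _
        have hsm : AEStronglyMeasurable (fun ω => G ω * d (k + 1) ω) P :=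
          ((hGsm.mono (hℱ_le k)).aestronglyMeasurable).mul hdI.aestronglyMeasurable
        exact Integrable.mono' hgint hsm (Filter.Eventually.of_forall hbound)
      -- middle term is zero
      have hzero : ∫ ω, G ω * d (k + 1) ω ∂P = 0 := by
        have h1 : P[G * d (k + 1) | ℱ k] =ᵐ[P] G * P[d (k + 1) | ℱ k] :=
          condExp_mul_of_stronglyMeasurable_left hGsm hGd hdI
        have h2 : P[G * d (k + 1) | ℱ k] =ᵐ[P] 0 := by
          filter_upwards [h1, hdc] with ω hω hω'
          simp only [Pi.zero_apply] at hω' ⊢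
          rw [hω, Pi.mul_apply, hω', mul_zero]
        calc ∫ ω, G ω * d (k + 1) ω ∂P
            = ∫ ω, (P[G * d (k + 1) | ℱ k]) ω ∂P := (integral_condExp (hℱ_le k)).symm
          _ = ∫ ω, (0:ℝ) ∂P := integral_congr_ae h2
          _ = 0 := integral_zero _ _
      -- key pointwise inequality
      have hkey : ∀ ω, |M (k + 1) ω| ^ p ≤
          |M k ω| ^ p + G ω * d (k + 1) ω + 2 ^ (2 - p) * |d (k + 1) ω| ^ p := by
        intro ω
        rw [hMeq ω]
        have := key_pointwise hp1 hp2 (M k ω) (d (k + 1) ω)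
        show |M k ω + d (k + 1) ω| ^ p ≤ |M k ω| ^ p +
          p * sgnPow (p - 1) (M k ω) * d (k + 1) ω + 2 ^ (2 - p) * |d (k + 1) ω| ^ p
        linarith
      have hrhsint : Integrable (fun ω =>
          |M k ω| ^ p + G ω * d (k + 1) ω + 2 ^ (2 - p) * |d (k + 1) ω| ^ p) P :=
        (hMint.add hGd).add (hdpI.const_mul _)
      have hM1int : Integrable (fun ω => |M (k + 1) ω| ^ p) P := by
        apply Integrable.mono' hrhsint
        · exact (continuous_abs_rpow hp0).comp_aestronglyMeasurable
            ((hSM'.mono (hℱ_le (k + 1))).aestronglyMeasurable)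
        · filter_upwards with ω
          rw [Real.norm_eq_abs, abs_of_nonneg (Real.rpow_nonneg (abs_nonneg _) p)]
          exact hkey ω
      refine ⟨hSM', hM1int, ?_⟩
      calc ∫ ω, |M (k + 1) ω| ^ p ∂P
          ≤ ∫ ω, (|M k ω| ^ p + G ω * d (k + 1) ω + 2 ^ (2 - p) * |d (k + 1) ω| ^ p) ∂P :=
            integral_mono hM1int hrhsint hkey
        _ = (∫ ω, |M k ω| ^ p ∂P) + (∫ ω, G ω * d (k + 1) ω ∂P) +
            2 ^ (2 - p) * ∫ ω, |d (k + 1) ω| ^ p ∂P := by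
            have e1 : ∫ ω, (|M k ω| ^ p + G ω * d (k + 1) ω
                + 2 ^ (2 - p) * |d (k + 1) ω| ^ p) ∂P
                = (∫ ω, (|M k ω| ^ p + G ω * d (k + 1) ω) ∂P)
                  + ∫ ω, 2 ^ (2 - p) * |d (k + 1) ω| ^ p ∂P :=
              integral_add (hMint.add hGd) (hdpI.const_mul _)
            have e2 : ∫ ω, (|M k ω| ^ p + G ω * d (k + 1) ω) ∂P
                = (∫ ω, |M k ω| ^ p ∂P) + ∫ ω, G ω * d (k + 1) ω ∂P :=
              integral_add hMint hGd
            rw [e1, e2, integral_const_mul]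
        _ ≤ 2 ^ (2 - p) * (∑ i ∈ Finset.Icc 1 k, ∫ ω, |d i ω| ^ p ∂P) +
            2 ^ (2 - p) * ∫ ω, |d (k + 1) ω| ^ p ∂P := by
            rw [hzero]; linarith
        _ = 2 ^ (2 - p) * ∑ i ∈ Finset.Icc 1 (k + 1), ∫ ω, |d i ω| ^ p ∂P := by
            rw [Finset.sum_Icc_succ_top (by omega : 1 ≤ k + 1)]
            ring
  -- conclude
  obtain ⟨_, _, hbound⟩ := claim n le_rfl
  have hgoal_eq : ∀ ω, |∑ i ∈ Finset.Icc 1 n, X i ω -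
      ∑ i ∈ Finset.Icc 1 n, (P[X i | ℱ (i - 1)]) ω| ^ p = |M n ω| ^ p := by
    intro ω
    rw [hMdef, ← Finset.sum_sub_distrib]
  have hsum_le : ∑ i ∈ Finset.Icc 1 n, ∫ ω, |d i ω| ^ p ∂P ≤
      n * (2 ^ (p - 1) * (Cα + Cα)) := by
    have := Finset.sum_le_card_nsmul (Finset.Icc 1 n)
      (fun i => ∫ ω, |d i ω| ^ p ∂P) (2 ^ (p - 1) * (Cα + Cα))
      (fun i hi => (hdp i hi).2)
    rwa [Nat.card_Icc, Nat.add_sub_cancel, nsmul_eq_mul] at this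
  have hfactor : (2:ℝ) ^ (2 - p) * (2 ^ (p - 1) * (Cα + Cα)) = 4 * Cα := by
    rw [← mul_assoc, ← Real.rpow_add two_pos]
    norm_num
    ring
  have h2pos : (0:ℝ) < 2 ^ (2 - p) := Real.rpow_pos_of_pos two_pos _
  calc ∫ ω, |∑ i ∈ Finset.Icc 1 n, X i ω -
        ∑ i ∈ Finset.Icc 1 n, (P[X i | ℱ (i - 1)]) ω| ^ p ∂P
      = ∫ ω, |M n ω| ^ p ∂P := by
        apply integral_congr_ae
        filter_upwards with ω
        exact hgoal_eq ω
    _ ≤ 2 ^ (2 - p) * ∑ i ∈ Finset.Icc 1 n, ∫ ω, |d i ω| ^ p ∂P := hbound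
    _ ≤ 2 ^ (2 - p) * (n * (2 ^ (p - 1) * (Cα + Cα))) := by
        exact mul_le_mul_of_nonneg_left hsum_le h2pos.le
    _ = 4 * n * Cα := by
        rw [show (2:ℝ) ^ (2 - p) * (n * (2 ^ (p - 1) * (Cα + Cα)))
          = n * (2 ^ (2 - p) * (2 ^ (p - 1) * (Cα + Cα))) by ring, hfactor]
        ring
end
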